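/- arXiv:1310.3363 — 7 statements merged into one kernel-verified Lean document; each statement's English description precedes it below -/
import Mathlib

section
/- Let E be a Polish space, let P(E) denote the space of Borel probability measures on E equipped with the topology of weak convergence, and let P_K be a compact subset of P(E). Then the set function I defined on all subsets A of E by I(A) := sup_{μ ∈ P_K} μ*(A), where μ* is the outer measure of μ, is a Choquet capacity on E: (i) I is monotone (A ⊆ B implies I(A) ≤ I(B)); (ii) I is continuous along increasing sequences (A_n ↑ A implies I(A_n) ↑ I(A)); (iii) I is continuous along decreasing sequences of compact sets (K_n compact with K_n ↓ K implies I(K_n) ↓ I(K)). -/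
open MeasureTheory
open scoped ENNReal NNReal

/-- **Supremum of outer measures over a compact set of probability measures is a
Choquet capacity.** Here `(μ : Measure E) A` for an arbitrary set `A` is the outer
measure `μ*(A) = inf { μ B : B Borel, A ⊆ B }`. -/
theorem sup_outer_measure_is_capacity
    {E : Type*} [TopologicalSpace E] [PolishSpace E] [MeasurableSpace E] [BorelSpace E]
    (PK : Set (ProbabilityMeasure E)) (hPK : IsCompact PK)
    (I : Set E → ℝ≥0∞)
    (hI : ∀ A : Set E, I A = ⨆ μ ∈ PK, (μ : Measure E) A) :
    (∀ A B : Set E, A ⊆ B → I A ≤ I B) ∧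
    (∀ A : ℕ → Set E, Monotone A → I (⋃ n, A n) = ⨆ n, I (A n)) ∧
    (∀ K : ℕ → Set E, (∀ n, IsCompact (K n)) → Antitone K →
      I (⋂ n, K n) = ⨅ n, I (K n)) := by
  have mono : ∀ A B : Set E, A ⊆ B → I A ≤ I B := by
    intro A B hAB
    simp only [hI]
    exact iSup₂_mono fun μ _ => measure_mono hAB
  refine ⟨mono, ?_, ?_⟩
  · -- continuity from below
    intro A hA
    simp only [hI]
    calc ⨆ μ ∈ PK, (μ : Measure E) (⋃ n, A n)
        = ⨆ μ ∈ PK, ⨆ n, (μ : Measure E) (A n) := by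
          exact iSup_congr fun μ => iSup_congr fun _ => hA.measure_iUnion
      _ = ⨆ n, ⨆ μ ∈ PK, (μ : Measure E) (A n) := by
          refine le_antisymm (iSup₂_le fun μ hμ => iSup_le fun n =>
            le_iSup_of_le n (le_iSup₂_of_le μ hμ le_rfl))
            (iSup_le fun n => iSup₂_le fun μ hμ =>
              le_iSup₂_of_le μ hμ (le_iSup (fun m => (μ : Measure E) (A m)) n))
  · -- continuity from above along compact sets
    intro K hKc hKa
    refine le_antisymm (le_iInf fun n => mono _ _ (Set.iInter_subset K n)) ?_
    rcases PK.eq_empty_or_nonempty with hE | hne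
    · simp [hI, hE]
    set c : ℝ≥0∞ := ⨅ n, I (K n) with hc
    -- choose near-optimal measures
    have hchoice : ∀ n : ℕ, ∃ μ ∈ PK, c ≤ (μ : Measure E) (K n) + (n + 1 : ℝ≥0∞)⁻¹ := by
      intro n
      by_cases h0 : I (K n) = 0
      · obtain ⟨μ, hμ⟩ := hne
        refine ⟨μ, hμ, le_trans (iInf_le _ n) ?_⟩
        simp [h0]
      · have hlt : I (K n) - (n + 1 : ℝ≥0∞)⁻¹ < I (K n) := by
          refine ENNReal.sub_lt_self ?_ h0 (ENNReal.inv_ne_zero.mpr (by simp))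
          have : I (K n) ≤ 1 := by
            rw [hI]
            exact iSup₂_le fun μ _ => prob_le_one
          exact (this.trans_lt (by norm_num)).ne
        have hlt2 : I (K n) - (n + 1 : ℝ≥0∞)⁻¹ < ⨆ μ ∈ PK, (μ : Measure E) (K n) := by
          rw [← hI]; exact hlt
        obtain ⟨μ, hμ'⟩ := lt_iSup_iff.mp hlt2
        rw [lt_iSup_iff] at hμ'
        obtain ⟨hμPK, hμ''⟩ := hμ'
        refine ⟨μ, hμPK, le_trans (iInf_le _ n) ?_⟩
        exact tsub_le_iff_right.mp hμ''.le
    choose ν hνPK hν using hchoice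
    obtain ⟨μ, hμPK, φ, hφ, hφt⟩ := hPK.tendsto_subseq hνPK
    have hKclosed : ∀ n, IsClosed (K n) := fun n => (hKc n).isClosed
    -- key : c ≤ μ (K m) for all m
    have key : ∀ m : ℕ, c ≤ (μ : Measure E) (K m) := by
      intro m
      have hlimsup : Filter.atTop.limsup (fun k => ((ν ∘ φ) k : Measure E) (K m))
          ≤ (μ : Measure E) (K m) :=
        ProbabilityMeasure.limsup_measure_closed_le_of_tendsto hφt (hKclosed m)
      refine ENNReal.le_of_forall_pos_le_add fun ε hε _ => ?_
      have hev : ∀ᶠ k in Filter.atTop, c - ε ≤ ((ν ∘ φ) k : Measure E) (K m) := by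
        obtain ⟨N, hN⟩ := exists_nat_gt (ε : ℝ≥0∞)⁻¹.toReal
        filter_upwards [Filter.eventually_ge_atTop (max m N)] with k hk
        have hkm : m ≤ φ k := le_trans (le_trans (le_max_left m N) hk) (hφ.le_apply)
        have hδ : ((φ k : ℝ≥0∞) + 1)⁻¹ ≤ (ε : ℝ≥0∞) := by
          rw [ENNReal.inv_le_iff_inv_le]
          have hεne : (ε : ℝ≥0∞)⁻¹ ≠ ⊤ := by
            simp [ENNReal.inv_ne_top, hε.ne']
          calc (ε : ℝ≥0∞)⁻¹ ≤ (N : ℝ≥0∞) := by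
                rw [← ENNReal.ofReal_toReal hεne]
                exact (ENNReal.ofReal_le_ofReal hN.le).trans (by simp)
            _ ≤ (φ k : ℝ≥0∞) := by
                exact_mod_cast le_trans (le_trans (le_max_right m N) hk) hφ.le_apply
            _ ≤ (φ k : ℝ≥0∞) + 1 := le_self_add
        have h1 : c ≤ ((ν ∘ φ) k : Measure E) (K m) + ε := by
          calc c ≤ ((ν (φ k)) : Measure E) (K (φ k)) + ((φ k : ℝ≥0∞) + 1)⁻¹ := by
                have := hν (φ k)
                simpa using this
            _ ≤ ((ν ∘ φ) k : Measure E) (K m) + ε :=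
                add_le_add (measure_mono (hKa hkm)) hδ
        exact tsub_le_iff_right.mpr h1
      have h2 : c - ε ≤ Filter.atTop.limsup (fun k => ((ν ∘ φ) k : Measure E) (K m)) :=
        Filter.le_limsup_of_frequently_le' hev.frequently
      exact tsub_le_iff_right.mp (h2.trans hlimsup)
    have hiInter : (μ : Measure E) (⋂ n, K n) = ⨅ n, (μ : Measure E) (K n) :=
      hKa.measure_iInter (fun n => ((hKclosed n).measurableSet).nullMeasurableSet)
        ⟨0, (measure_ne_top _ _)⟩
    calc c ≤ ⨅ n, (μ : Measure E) (K n) := le_iInf key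
      _ = (μ : Measure E) (⋂ n, K n) := hiInter.symm
      _ ≤ I (⋂ n, K n) := by rw [hI]; exact le_iSup₂_of_le μ hμPK le_rfl
end

section
/- (Choquet's capacitability theorem.) Let X be a set, J a paving on X, and I a J-capacity. Then every element C of the mosaic generated by J is J-capacitable, i.e. I(C) = sup{ I(K) : K ∈ J_δ, K ⊆ C }, where J_δ is the collection of all countable intersections of elements of J. -/
open Set

namespace ChoquetAux

variable {X : Type*}

/-- The kernel of a scheme. -/
def krn (A : ℕ → (ℕ → ℕ) → Set X) : Set X := {x | ∃ σ : ℕ → ℕ, ∀ n, x ∈ A n σ}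

/-- A (regular, boundedly finitely determined) Suslin scheme over `J`. -/
structure IsSch (J : Set (Set X)) (A : ℕ → (ℕ → ℕ) → Set X) : Prop where
  mem : ∀ n σ, A n σ ∈ J
  det : ∀ n, ∀ m : ℕ → ℕ, ∃ d : ℕ, ∀ σ τ : ℕ → ℕ,
    (∀ i, i < d → σ i = τ i ∧ σ i ≤ m i) → A n σ = A n τ
  anti : ∀ σ, Antitone fun n => A n σ

section Paving

variable {J : Set (Set X)}

lemma finsetUnion_mem (h_empty : ∅ ∈ J) (h_union : ∀ A ∈ J, ∀ B ∈ J, A ∪ B ∈ J) {ι : Type*} (s : Finset ι) (f : ι → Set X) (hf : ∀ i, f i ∈ J) :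
    (⋃ i ∈ s, f i) ∈ J := by
  classical
  induction s using Finset.induction_on with
  | empty => simpa using h_empty
  | insert _ _ h ih =>
      rw [Finset.set_biUnion_insert]
      exact h_union _ (hf _) _ ih

lemma fintypeUnion_mem (h_empty : ∅ ∈ J) (h_union : ∀ A ∈ J, ∀ B ∈ J, A ∪ B ∈ J) {ι : Type*} [Fintype ι] (f : ι → Set X) (hf : ∀ i, f i ∈ J) :
    (⋃ i, f i) ∈ J := by
  have : (⋃ i, f i) = ⋃ i ∈ (Finset.univ : Finset ι), f i := by simp
  rw [this]
  exact finsetUnion_mem h_empty h_union _ f hf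

lemma rangeInter_mem (h_inter : ∀ A ∈ J, ∀ B ∈ J, A ∩ B ∈ J) (n : ℕ) (f : ℕ → Set X) (hf : ∀ i, f i ∈ J) :
    (⋂ i ∈ Finset.range (n + 1), f i) ∈ J := by
  induction n with
  | zero => simpa using hf 0
  | succ n ih =>
      rw [Finset.range_add_one, Finset.set_biInter_insert]
      exact h_inter _ (hf _) _ ih

/-- Constant schemes: `J ⊆ Susl J`. -/
lemma isSch_const (B : Set X) (hB : B ∈ J) :
    IsSch J (fun (_ : ℕ) (_ : ℕ → ℕ) => B) := by
  refine ⟨fun _ _ => hB, fun n m => ⟨0, fun _ _ _ => rfl⟩, fun σ => ?_⟩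
  intro a b _; exact le_refl _

lemma krn_const (B : Set X) : krn (fun (_ : ℕ) (_ : ℕ → ℕ) => B) = B := by
  ext x
  constructor
  · rintro ⟨σ, hσ⟩; exact hσ 0
  · intro hx; exact ⟨fun _ => 0, fun _ => hx⟩

/-- Union scheme. -/
def uSch (S : ℕ → ℕ → (ℕ → ℕ) → Set X) : ℕ → (ℕ → ℕ) → Set X :=
  fun n σ => S (σ 0) n (fun i => σ (i + 1))

lemma isSch_uSch (S : ℕ → ℕ → (ℕ → ℕ) → Set X) (hS : ∀ j, IsSch J (S j)) :
    IsSch J (uSch S) := by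
  constructor
  · intro n σ; exact (hS _).mem _ _
  · intro n m
    have hch : ∀ j, ∃ d : ℕ, ∀ σ τ : ℕ → ℕ,
        (∀ i, i < d → σ i = τ i ∧ σ i ≤ (fun i => m (i + 1)) i) → S j n σ = S j n τ :=
      fun j => (hS j).det n (fun i => m (i + 1))
    choose dj hdj using hch
    refine ⟨(Finset.range (m 0 + 1)).sup dj + 1, fun σ τ h => ?_⟩
    obtain ⟨h01, h02⟩ := h 0 (Nat.succ_pos _)
    unfold uSch
    rw [← h01]
    refine hdj (σ 0) _ _ (fun i hi => ?_)
    have hle : dj (σ 0) ≤ (Finset.range (m 0 + 1)).sup dj :=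
      Finset.le_sup (Finset.mem_range.2 (Nat.lt_succ_of_le h02))
    exact h (i + 1) (Nat.succ_lt_succ (lt_of_lt_of_le hi hle))
  · intro σ a b hab
    exact (hS _).anti _ hab

lemma krn_uSch (S : ℕ → ℕ → (ℕ → ℕ) → Set X) (hS : ∀ j, IsSch J (S j)) :
    krn (uSch S) = ⋃ j, krn (S j) := by
  ext x
  constructor
  · rintro ⟨σ, hσ⟩
    exact mem_iUnion.2 ⟨σ 0, ⟨fun i => σ (i + 1), fun n => hσ n⟩⟩
  · intro hx
    obtain ⟨j, τ, hτ⟩ := mem_iUnion.1 hx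
    refine ⟨fun i => Nat.rec j (fun i _ => τ i) i, fun n => ?_⟩
    exact hτ n

/-- Intersection scheme. -/
def iSch (S : ℕ → ℕ → (ℕ → ℕ) → Set X) : ℕ → (ℕ → ℕ) → Set X :=
  fun n σ => ⋂ j ∈ Finset.range (n + 1), S j n (fun i => σ (Nat.pair j i))

lemma isSch_iSch (h_inter : ∀ A ∈ J, ∀ B ∈ J, A ∩ B ∈ J) (S : ℕ → ℕ → (ℕ → ℕ) → Set X) (hS : ∀ j, IsSch J (S j)) :
    IsSch J (iSch S) := by
  constructor
  · intro n σ
    exact rangeInter_mem h_inter n _ (fun j => (hS j).mem _ _)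
  · intro n m
    have hch : ∀ j, ∃ d : ℕ, ∀ σ τ : ℕ → ℕ,
        (∀ i, i < d → σ i = τ i ∧ σ i ≤ (fun i => m (Nat.pair j i)) i) →
          S j n σ = S j n τ :=
      fun j => (hS j).det n (fun i => m (Nat.pair j i))
    choose dj hdj using hch
    refine ⟨(Finset.range (n + 1)).sup
      (fun j => (Finset.range (dj j)).sup (fun i => Nat.pair j i) + 1), fun σ τ h => ?_⟩
    unfold iSch
    refine Set.iInter₂_congr (fun j hj => ?_)
    refine hdj j _ _ (fun i hi => ?_)
    have hkey : Nat.pair j i < (Finset.range (n + 1)).sup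
        (fun j => (Finset.range (dj j)).sup (fun i => Nat.pair j i) + 1) := by
      have h1 : Nat.pair j i ≤ (Finset.range (dj j)).sup (fun i => Nat.pair j i) :=
        Finset.le_sup (Finset.mem_range.2 hi)
      have h2 : (Finset.range (dj j)).sup (fun i => Nat.pair j i) + 1 ≤
          (Finset.range (n + 1)).sup
            (fun j => (Finset.range (dj j)).sup (fun i => Nat.pair j i) + 1) :=
        Finset.le_sup (f := fun j => (Finset.range (dj j)).sup (fun i => Nat.pair j i) + 1) hj
      omega
    exact h _ hkey
  · intro σ a b hab
    intro x hx
    simp only [iSch, mem_iInter] at hx ⊢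
    intro j hj
    have hjb : j ∈ Finset.range (b + 1) := by
      simp only [Finset.mem_range] at hj ⊢; omega
    exact (hS j).anti _ hab (hx j hjb)

lemma krn_iSch (S : ℕ → ℕ → (ℕ → ℕ) → Set X) (hS : ∀ j, IsSch J (S j)) :
    krn (iSch S) = ⋂ j, krn (S j) := by
  ext x
  constructor
  · rintro ⟨σ, hσ⟩
    refine mem_iInter.2 (fun j => ⟨fun i => σ (Nat.pair j i), fun n => ?_⟩)
    rcases le_total n j with h | h
    · have := hσ j
      simp only [iSch, mem_iInter] at this
      have hx := this j (Finset.mem_range.2 (Nat.lt_succ_self j))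
      exact (hS j).anti _ h hx
    · have := hσ n
      simp only [iSch, mem_iInter] at this
      exact this j (Finset.mem_range.2 (Nat.lt_succ_of_le h))
  · intro hx
    have h' : ∀ j, ∃ τ : ℕ → ℕ, ∀ n, x ∈ S j n τ := fun j => mem_iInter.1 hx j
    choose τ hτ using h'
    refine ⟨fun k => τ (Nat.unpair k).1 (Nat.unpair k).2, fun n => ?_⟩
    simp only [iSch, mem_iInter]
    intro j _
    have : (fun i => τ (Nat.unpair (Nat.pair j i)).1 (Nat.unpair (Nat.pair j i)).2) = τ j := by
      funext i; rw [Nat.unpair_pair]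
    rw [this]
    exact hτ j n


/-- The heart of Choquet's theorem: kernels of schemes are capacitable. -/
lemma capacitable (h_empty : ∅ ∈ J) (h_union : ∀ A ∈ J, ∀ B ∈ J, A ∪ B ∈ J)
    (I : Set X → EReal)
    (h_mono : ∀ A B : Set X, A ⊆ B → I A ≤ I B)
    (h_incr : ∀ A : ℕ → Set X, Monotone A → I (⋃ n, A n) = ⨆ n, I (A n))
    (h_decr : ∀ A : ℕ → Set X, (∀ n, A n ∈ J) → Antitone A → I (⋂ n, A n) = ⨅ n, I (A n))
    (A : ℕ → (ℕ → ℕ) → Set X) (hA : IsSch J A)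
    (t : EReal) (ht : t < I (krn A)) :
    ∃ K : Set X, (∃ f : ℕ → Set X, (∀ n, f n ∈ J) ∧ K = ⋂ n, f n) ∧ K ⊆ krn A ∧ t ≤ I K := by
  classical
  -- truncated kernels
  set T : ℕ → (ℕ → ℕ) → Set X := fun p m =>
    {x | ∃ σ : ℕ → ℕ, (∀ i, i < p → σ i ≤ m i) ∧ ∀ n, x ∈ A n σ} with hT
  have T_congr : ∀ p (m m' : ℕ → ℕ), (∀ i, i < p → m i = m' i) → T p m = T p m' := by
    intro p m m' h
    ext x
    constructor
    · rintro ⟨σ, hb, hσ⟩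
      exact ⟨σ, fun i hi => by rw [← h i hi]; exact hb i hi, hσ⟩
    · rintro ⟨σ, hb, hσ⟩
      exact ⟨σ, fun i hi => by rw [h i hi]; exact hb i hi, hσ⟩
  have hT0 : T 0 (fun _ => 0) = krn A := by
    ext x
    simp [hT, krn]
  -- one recursion step
  have step : ∀ p (m : ℕ → ℕ), t < I (T p m) →
      ∃ v : ℕ, t < I (T (p + 1) (Function.update m p v)) := by
    intro p m hp
    have hmon : Monotone (fun v => T (p + 1) (Function.update m p v)) := by
      intro v w hvw x hx
      obtain ⟨σ, hb, hσ⟩ := hx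
      refine ⟨σ, fun i hi => ?_, hσ⟩
      rcases eq_or_ne i p with rfl | hne
      · have h1 := hb i hi
        rw [Function.update_self] at h1 ⊢
        exact le_trans h1 hvw
      · have h1 := hb i hi
        rwa [Function.update_of_ne hne] at h1 ⊢
    have hcover : T p m = ⋃ v : ℕ, T (p + 1) (Function.update m p v) := by
      ext x
      constructor
      · rintro ⟨σ, hb, hσ⟩
        refine mem_iUnion.2 ⟨σ p, σ, fun i hi => ?_, hσ⟩
        rcases eq_or_ne i p with rfl | hne
        · rw [Function.update_self]
        · rw [Function.update_of_ne hne]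
          exact hb i (Nat.lt_of_le_of_ne (Nat.lt_succ_iff.1 hi) hne)
      · intro hx
        obtain ⟨v, σ, hb, hσ⟩ := mem_iUnion.1 hx
        refine ⟨σ, fun i hi => ?_, hσ⟩
        have h1 := hb i (Nat.lt_succ_of_lt hi)
        rwa [Function.update_of_ne (Nat.ne_of_lt hi)] at h1
    rw [hcover, h_incr _ hmon] at hp
    exact lt_iSup_iff.1 hp
  -- build the bounding sequence
  let nxt : ℕ → (ℕ → ℕ) → (ℕ → ℕ) := fun p m =>
    Function.update m p (if h : t < I (T p m) then Classical.choose (step p m h) else 0)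
  have hnxt : ∀ p (m : ℕ → ℕ), t < I (T p m) → t < I (T (p + 1) (nxt p m)) := by
    intro p m h
    simpa only [nxt, dif_pos h] using Classical.choose_spec (step p m h)
  let g : ℕ → (ℕ → ℕ) := fun p => Nat.rec (fun _ => 0) (fun q ih => nxt q ih) p
  have hg0 : g 0 = fun _ => 0 := rfl
  have hgs : ∀ p, g (p + 1) = nxt p (g p) := fun p => rfl
  have hgood : ∀ p, t < I (T p (g p)) := by
    intro p
    induction p with
    | zero => rw [hg0, hT0]; exact ht
    | succ q ih => rw [hgs]; exact hnxt q (g q) ih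
  set m : ℕ → ℕ := fun i => g (i + 1) i with hm
  have hstab : ∀ p i, i < p → g p i = m i := by
    intro p
    induction p with
    | zero => intro i hi; omega
    | succ q ih =>
        intro i hi
        rcases eq_or_ne i q with rfl | hne
        · rfl
        · have hiq : i < q := Nat.lt_of_le_of_ne (Nat.lt_succ_iff.1 hi) hne
          have : g (q + 1) i = g q i := by
            rw [hgs]
            exact Function.update_of_ne hne _ _
          rw [this]
          exact ih i hiq
  have htp : ∀ p, t < I (T p m) := by
    intro p
    have : T p m = T p (g p) := T_congr p m (g p) (fun i hi => (hstab p i hi).symm)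
    rw [this]
    exact hgood p
  -- the bounded unions
  set Bn : ℕ → Set X := fun n => ⋃ σ : ℕ → ℕ, ⋃ (_ : ∀ i, σ i ≤ m i), A n σ with hBn
  have hBJ : ∀ n, Bn n ∈ J := by
    intro n
    obtain ⟨d, hd⟩ := hA.det n m
    have hrepr : Bn n = ⋃ f : (∀ i : Fin d, Fin (m i + 1)),
        A n (fun i => if h : i < d then (f ⟨i, h⟩ : ℕ) else 0) := by
      apply subset_antisymm
      · intro x hx
        obtain ⟨σ, hσ, hxA⟩ := mem_iUnion₂.1 hx
        refine mem_iUnion.2 ⟨fun i => ⟨σ i, Nat.lt_succ_of_le (hσ i)⟩, ?_⟩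
        have he : A n σ = A n (fun i => if h : (i : ℕ) < d then
            ((⟨σ i, Nat.lt_succ_of_le (hσ i)⟩ : Fin (m i + 1)) : ℕ) else 0) := by
          refine hd σ _ (fun i hi => ⟨?_, hσ i⟩)
          simp [hi]
        rw [← he]
        exact hxA
      · intro x hx
        obtain ⟨f, hf⟩ := mem_iUnion.1 hx
        refine mem_iUnion₂.2 ⟨_, fun i => ?_, hf⟩
        by_cases h : i < d
        · simpa [h] using Nat.lt_succ_iff.1 (Fin.is_lt (f ⟨i, h⟩))
        · simp [h]
    rw [hrepr]
    exact fintypeUnion_mem h_empty h_union _ (fun f => hA.mem _ _)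
  have hBanti : Antitone Bn := by
    intro a b hab x hx
    obtain ⟨σ, hσ, hxA⟩ := mem_iUnion₂.1 hx
    exact mem_iUnion₂.2 ⟨σ, hσ, hA.anti σ hab hxA⟩
  have htB : ∀ n, t < I (Bn n) := by
    intro n
    obtain ⟨d, hd⟩ := hA.det n m
    refine lt_of_lt_of_le (htp d) (h_mono _ _ ?_)
    rintro x ⟨σ, hb, hσ⟩
    have he : A n σ = A n (fun i => if i < d then σ i else 0) := by
      refine hd σ _ (fun i hi => ⟨?_, hb i hi⟩)
      simp [hi]
    refine mem_iUnion₂.2 ⟨fun i => if i < d then σ i else 0, fun i => ?_, ?_⟩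
    · by_cases h : i < d
      · simpa [h] using hb i h
      · simp [h]
    · rw [← he]
      exact hσ n
  refine ⟨⋂ n, Bn n, ⟨Bn, hBJ, rfl⟩, ?_, ?_⟩
  · -- ⋂ n, Bn n ⊆ krn A : the ultrafilter limit argument
    intro x hx
    have hw : ∀ n, ∃ σ : ℕ → ℕ, (∀ i, σ i ≤ m i) ∧ x ∈ A n σ := by
      intro n
      obtain ⟨σ, hσ, hxA⟩ := mem_iUnion₂.1 (mem_iInter.1 hx n)
      exact ⟨σ, hσ, hxA⟩
    choose w hwb hwx using hw
    let U : Ultrafilter ℕ := Ultrafilter.of Filter.cofinite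
    have hUc : (U : Filter ℕ) ≤ Filter.cofinite := Ultrafilter.of_le _
    have hsel : ∀ i, ∃ v, v ≤ m i ∧ {k | w k i = v} ∈ U := by
      intro i
      have hcov : (⋃ v ∈ (↑(Finset.range (m i + 1)) : Set ℕ), {k | w k i = v}) ∈ U := by
        have huniv : (⋃ v ∈ (↑(Finset.range (m i + 1)) : Set ℕ), {k | w k i = v}) =
            (univ : Set ℕ) := by
          ext k
          simp only [Finset.coe_range, mem_iUnion, mem_Iio, mem_setOf_eq, mem_univ, iff_true]
          exact ⟨w k i, Nat.lt_succ_of_le (hwb k i), rfl⟩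
        rw [huniv]
        exact Filter.univ_mem
      obtain ⟨v, hv, hvU⟩ :=
        (Ultrafilter.finite_biUnion_mem_iff (Finset.range (m i + 1)).finite_toSet).1 hcov
      refine ⟨v, ?_, hvU⟩
      have : v ∈ Finset.range (m i + 1) := hv
      exact Nat.lt_succ_iff.1 (Finset.mem_range.1 this)
    choose σ hσm hσU using hsel
    refine ⟨σ, fun n => ?_⟩
    obtain ⟨d, hd⟩ := hA.det n m
    have hE : ({k | n ≤ k} ∩ ⋂ i ∈ (↑(Finset.range d) : Set ℕ), {k | w k i = σ i}) ∈ U := by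
      refine Filter.inter_mem (Filter.le_def.1 hUc _ ?_) ?_
      · have : {k : ℕ | n ≤ k}ᶜ = Iio n := by
          ext k
          simp [not_le]
        simp only [Filter.mem_cofinite, this]
        exact Set.finite_Iio n
      · exact (Filter.biInter_mem (Finset.range d).finite_toSet).2 (fun i _ => hσU i)
    obtain ⟨k, hkn, hki⟩ := Ultrafilter.nonempty_of_mem hE
    have hagree : A n (w k) = A n σ := by
      refine hd (w k) σ (fun i hi => ⟨?_, hwb k i⟩)
      have := mem_iInter₂.1 hki i (by simpa using hi)
      exact this
    have hxk : x ∈ A n (w k) := hA.anti (w k) hkn (hwx k)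
    rwa [hagree] at hxk
  · rw [h_decr Bn hBJ hBanti]
    exact le_iInf (fun n => (htB n).le)

end Paving

end ChoquetAux

/-- **Choquet's capacitability theorem.** `J` is a paving on `X` (contains `∅`, stable under
finite unions and intersections), `Jδ` is the collection of countable intersections of
elements of `J`, `mosaic` is the smallest collection containing `J` stable under countable
unions and countable intersections, and `I : 2^X → ℝ ∪ {∞}` (modelled as `EReal`-valued,
never `⊥`) is a `J`-capacity.  Then every element of the mosaic is `J`-capacitable. -/
theorem choquet_capacitability
    {X : Type*} (J : Set (Set X))
    (h_empty : ∅ ∈ J)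
    (h_union : ∀ A ∈ J, ∀ B ∈ J, A ∪ B ∈ J)
    (h_inter : ∀ A ∈ J, ∀ B ∈ J, A ∩ B ∈ J)
    (Jδ : Set (Set X))
    (hJδ : Jδ = {S | ∃ f : ℕ → Set X, (∀ n, f n ∈ J) ∧ S = ⋂ n, f n})
    (mosaic : Set (Set X))
    (hmosaic : mosaic = ⋂₀ {M : Set (Set X) | J ⊆ M ∧
      (∀ f : ℕ → Set X, (∀ n, f n ∈ M) → (⋃ n, f n) ∈ M) ∧
      (∀ f : ℕ → Set X, (∀ n, f n ∈ M) → (⋂ n, f n) ∈ M)})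
    (I : Set X → EReal)
    (h_ne_bot : ∀ A : Set X, I A ≠ ⊥)
    (h_mono : ∀ A B : Set X, A ⊆ B → I A ≤ I B)
    (h_incr : ∀ A : ℕ → Set X, Monotone A → I (⋃ n, A n) = ⨆ n, I (A n))
    (h_decr : ∀ A : ℕ → Set X, (∀ n, A n ∈ J) → Antitone A → I (⋂ n, A n) = ⨅ n, I (A n)) :
    ∀ C ∈ mosaic, I C = ⨆ (K : Set X) (_ : K ∈ Jδ ∧ K ⊆ C), I K := by
  classical
  intro C hC
  have hSusl : ∃ A : ℕ → (ℕ → ℕ) → Set X, ChoquetAux.IsSch J A ∧ C = ChoquetAux.krn A := by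
    rw [hmosaic] at hC
    refine hC {S : Set X | ∃ A : ℕ → (ℕ → ℕ) → Set X,
        ChoquetAux.IsSch J A ∧ S = ChoquetAux.krn A} ⟨?_, ?_, ?_⟩
    · intro B hB
      exact ⟨_, ChoquetAux.isSch_const B hB, (ChoquetAux.krn_const B).symm⟩
    · intro f hf
      choose S hS hkrn using hf
      refine ⟨ChoquetAux.uSch S, ChoquetAux.isSch_uSch S hS, ?_⟩
      rw [ChoquetAux.krn_uSch S hS]
      exact iUnion_congr hkrn
    · intro f hf
      choose S hS hkrn using hf
      refine ⟨ChoquetAux.iSch S, ChoquetAux.isSch_iSch h_inter S hS, ?_⟩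
      rw [ChoquetAux.krn_iSch S hS]
      exact iInter_congr hkrn
  obtain ⟨A, hA, rfl⟩ := hSusl
  apply le_antisymm
  · apply le_of_forall_lt
    intro c hc
    obtain ⟨t, hct, htI⟩ := exists_between hc
    obtain ⟨K, hKδ, hKsub, htK⟩ := ChoquetAux.capacitable h_empty h_union I h_mono h_incr
      h_decr A hA t htI
    have hKJδ : K ∈ Jδ := by rw [hJδ]; exact hKδ
    calc c < t := hct
    _ ≤ I K := htK
    _ ≤ ⨆ (K : Set X) (_ : K ∈ Jδ ∧ K ⊆ ChoquetAux.krn A), I K :=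
        le_iSup₂ (f := fun (K : Set X) (_ : K ∈ Jδ ∧ K ⊆ ChoquetAux.krn A) => I K)
          K ⟨hKJδ, hKsub⟩
  · exact iSup_le fun K => iSup_le fun hK => h_mono _ _ hK.2
end

section
/- Let (Ω, F) be a measurable space and E a locally compact Polish space. Let I_p denote the paving on Ω × E consisting of all finite unions of rectangles B × K with B ∈ F and K ⊆ E compact, and let I_δ be the collection of all countable intersections of elements of I_p. Then the projection operator π_Ω is continuously decreasing on I_δ: for every decreasing sequence (L_n) of elements of I_δ, one has ∩_n π_Ω(L_n) = π_Ω(∩_n L_n). Moreover, the class π_Ω(I_δ) := { π_Ω(L) : L ∈ I_δ } is stable under countable intersections, finite unions, and contains the empty set. -/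
open Set

section Helpers

variable {Ω E : Type*} [MeasurableSpace Ω] [TopologicalSpace E] [T2Space E]

/-- Membership predicate for the paving `Ip`. -/
private def IsIp (S : Set (Ω × E)) : Prop :=
  ∃ (n : ℕ) (B : Fin n → Set Ω) (K : Fin n → Set E),
    (∀ i, MeasurableSet (B i)) ∧ (∀ i, IsCompact (K i)) ∧ S = ⋃ i, B i ×ˢ K i

private lemma isIp_empty : IsIp (∅ : Set (Ω × E)) :=
  ⟨0, Fin.elim0, Fin.elim0, fun i => i.elim0, fun i => i.elim0, by simp⟩

private lemma IsIp.section_compact {S : Set (Ω × E)} (hS : IsIp S) (ω : Ω) :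
    IsCompact {x | (ω, x) ∈ S} := by
  classical
  obtain ⟨n, B, K, _, hK, rfl⟩ := hS
  have : {x | (ω, x) ∈ ⋃ i, B i ×ˢ K i} = ⋃ i, (if ω ∈ B i then K i else ∅) := by
    ext x
    simp only [mem_setOf_eq, mem_iUnion, mem_prod]
    constructor
    · rintro ⟨i, hi, hx⟩; exact ⟨i, by simp [hi, hx]⟩
    · rintro ⟨i, hx⟩
      by_cases h : ω ∈ B i
      · exact ⟨i, h, by simpa [h] using hx⟩
      · simp [h] at hx
  rw [this]
  exact isCompact_iUnion fun i => by split_ifs <;> [exact hK i; exact isCompact_empty]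

private lemma IsIp.inter {S T : Set (Ω × E)} (hS : IsIp S) (hT : IsIp T) :
    IsIp (S ∩ T) := by
  obtain ⟨n, B, K, hB, hK, rfl⟩ := hS
  obtain ⟨m, C, K', hC, hK', rfl⟩ := hT
  refine ⟨n * m, fun k => B (finProdFinEquiv.symm k).1 ∩ C (finProdFinEquiv.symm k).2,
    fun k => K (finProdFinEquiv.symm k).1 ∩ K' (finProdFinEquiv.symm k).2,
    fun k => (hB _).inter (hC _), fun k => (hK _).inter (hK' _), ?_⟩
  ext ⟨ω, x⟩
  simp only [mem_inter_iff, mem_iUnion, mem_prod]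
  constructor
  · rintro ⟨⟨i, hi⟩, ⟨j, hj⟩⟩
    refine ⟨finProdFinEquiv (i, j), ?_⟩
    simp only [Equiv.symm_apply_apply]
    exact ⟨⟨hi.1, hj.1⟩, hi.2, hj.2⟩
  · rintro ⟨k, ⟨⟨h1, h2⟩, h3, h4⟩⟩
    exact ⟨⟨_, h1, h3⟩, ⟨_, h2, h4⟩⟩

private lemma IsIp.proj_measurable {S : Set (Ω × E)} (hS : IsIp S) :
    MeasurableSet (Prod.fst '' S) := by
  obtain ⟨n, B, K, hB, _, rfl⟩ := hS
  rw [image_iUnion]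
  refine MeasurableSet.iUnion fun i => ?_
  rcases (K i).eq_empty_or_nonempty with h | h
  · simp [h]
  · rw [fst_image_prod _ h]; exact hB i

end Helpers

/-- **The projection operator is continuously decreasing on `I_δ`, and `π_Ω(I_δ)` is a
`δ`-paving.** Here `Ip` is the paving of finite unions of rectangles `B × K` with `B`
measurable and `K ⊆ E` compact, `Iδ` is the collection of countable intersections of
elements of `Ip`, and `PIδ` is the collection of projections onto `Ω` of elements of `Iδ`. -/
theorem projection_decreasing_on_Idelta
    {Ω E : Type*} [MeasurableSpace Ω]
    [TopologicalSpace E] [PolishSpace E] [LocallyCompactSpace E]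
    (Ip : Set (Set (Ω × E)))
    (hIp : Ip = {S | ∃ (n : ℕ) (B : Fin n → Set Ω) (K : Fin n → Set E),
      (∀ i, MeasurableSet (B i)) ∧ (∀ i, IsCompact (K i)) ∧ S = ⋃ i, B i ×ˢ K i})
    (Iδ : Set (Set (Ω × E)))
    (hIδ : Iδ = {S | ∃ f : ℕ → Set (Ω × E), (∀ n, f n ∈ Ip) ∧ S = ⋂ n, f n})
    (PIδ : Set (Set Ω))
    (hPIδ : PIδ = {s | ∃ L ∈ Iδ, s = Prod.fst '' L}) :
    (∀ L : ℕ → Set (Ω × E), (∀ n, L n ∈ Iδ) → Antitone L →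
      (⋂ n, Prod.fst '' L n) = Prod.fst '' (⋂ n, L n)) ∧
    (∅ ∈ PIδ) ∧
    (∀ s ∈ PIδ, ∀ t ∈ PIδ, s ∪ t ∈ PIδ) ∧
    (∀ f : ℕ → Set Ω, (∀ n, f n ∈ PIδ) → (⋂ n, f n) ∈ PIδ) := by
  letI := TopologicalSpace.upgradeIsCompletelyMetrizable E
  subst hIp hIδ hPIδ
  -- sections of `Iδ` sets are compact and closed
  have hsec : ∀ L : Set (Ω × E),
      (∃ f : ℕ → Set (Ω × E), (∀ n, IsIp (f n)) ∧ L = ⋂ n, f n) → ∀ ω : Ω,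
      IsCompact {x | (ω, x) ∈ L} ∧ IsClosed {x | (ω, x) ∈ L} := by
    rintro L ⟨f, hf, rfl⟩ ω
    have heq : {x | (ω, x) ∈ ⋂ n, f n} = ⋂ n, {x | (ω, x) ∈ f n} := by
      ext x; simp [mem_iInter]
    have hclosed : IsClosed (⋂ n, {x | (ω, x) ∈ f n}) :=
      isClosed_iInter fun n => ((hf n).section_compact ω).isClosed
    rw [heq]
    exact ⟨((hf 0).section_compact ω).of_isClosed_subset hclosed (iInter_subset _ 0), hclosed⟩
  -- Part 1: continuity of projection along decreasing sequences
  have part1 : ∀ L : ℕ → Set (Ω × E),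
      (∀ n, ∃ f : ℕ → Set (Ω × E), (∀ m, IsIp (f m)) ∧ L n = ⋂ m, f m) → Antitone L →
      (⋂ n, Prod.fst '' L n) = Prod.fst '' (⋂ n, L n) := by
    intro L hL hmono
    apply Subset.antisymm
    · intro ω hω
      simp only [mem_iInter, mem_image] at hω
      set S : ℕ → Set E := fun n => {x | (ω, x) ∈ L n} with hS
      have hne : ∀ n, (S n).Nonempty := by
        intro n
        obtain ⟨p, hp, hfst⟩ := hω n
        exact ⟨p.2, by simpa [hS, ← hfst] using hp⟩
      have hcc := fun n => hsec (L n) (hL n) ω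
      obtain ⟨x, hx⟩ := IsCompact.nonempty_iInter_of_sequence_nonempty_isCompact_isClosed S
        (fun n => fun x hx => hmono (Nat.le_succ n) hx) hne (hcc 0).1 (fun n => (hcc n).2)
      refine ⟨(ω, x), ?_, rfl⟩
      simp only [mem_iInter] at hx ⊢
      exact hx
    · intro ω hω
      simp only [mem_iInter] at hω ⊢
      obtain ⟨p, hp, rfl⟩ := hω
      simp only [mem_iInter] at hp
      exact fun n => ⟨p, hp n, rfl⟩
  -- `Iδ` projections are measurable
  have hmeas : ∀ L : Set (Ω × E),
      (∃ f : ℕ → Set (Ω × E), (∀ n, IsIp (f n)) ∧ L = ⋂ n, f n) →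
      MeasurableSet (Prod.fst '' L) := by
    rintro L ⟨f, hf, rfl⟩
    -- replace `f` by its decreasing partial intersections `g`
    set g : ℕ → Set (Ω × E) := fun n => ⋂ k ∈ Finset.range (n + 1), f k with hg
    have hgIp : ∀ n, IsIp (g n) := by
      intro n
      induction n with
      | zero => simpa [hg] using hf 0
      | succ n ih =>
        have : g (n + 1) = g n ∩ f (n + 1) := by
          simp only [hg, Finset.range_add_one (n := n + 1)]
          rw [Finset.set_biInter_insert]
          rw [inter_comm]
        rw [this]
        exact ih.inter (hf (n + 1))
    have hganti : Antitone g := by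
      apply antitone_nat_of_succ_le
      intro n x hx
      simp only [hg, mem_iInter, Finset.mem_range] at hx ⊢
      exact fun k hk => hx k (by omega)
    have hgf : (⋂ n, g n) = ⋂ n, f n := by
      apply Subset.antisymm
      · intro x hx
        simp only [mem_iInter, hg, Finset.mem_range] at hx ⊢
        exact fun n => hx n n (by omega)
      · intro x hx
        simp only [mem_iInter, hg, Finset.mem_range] at hx ⊢
        exact fun n k _ => hx k
    have : Prod.fst '' ⋂ n, f n = ⋂ n, Prod.fst '' g n := by
      rw [← hgf, part1 g (fun n => ⟨fun _ => g n, fun _ => hgIp n, (iInter_const _).symm⟩) hganti]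
    rw [this]
    exact MeasurableSet.iInter fun n => (hgIp n).proj_measurable
  -- measurable sets belong to `PIδ` (when `E` is nonempty)
  have hmem : ∀ (x₀ : E) (B : Set Ω), MeasurableSet B →
      ∃ L ∈ {S | ∃ f : ℕ → Set (Ω × E), (∀ n, f n ∈ {S | ∃ (n : ℕ) (B : Fin n → Set Ω)
        (K : Fin n → Set E), (∀ i, MeasurableSet (B i)) ∧ (∀ i, IsCompact (K i)) ∧
        S = ⋃ i, B i ×ˢ K i}) ∧ S = ⋂ n, f n}, B = Prod.fst '' L := by
    intro x₀ B hB
    refine ⟨B ×ˢ {x₀}, ⟨fun _ => B ×ˢ {x₀}, fun n =>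
      ⟨1, fun _ => B, fun _ => {x₀}, fun _ => hB, fun _ => isCompact_singleton, (iUnion_const _).symm⟩,
      (iInter_const _).symm⟩, ?_⟩
    rw [fst_image_prod _ (singleton_nonempty x₀)]
  have hempty : (∅ : Set Ω) ∈ {s | ∃ L ∈ {S | ∃ f : ℕ → Set (Ω × E),
      (∀ n, f n ∈ {S | ∃ (n : ℕ) (B : Fin n → Set Ω) (K : Fin n → Set E),
        (∀ i, MeasurableSet (B i)) ∧ (∀ i, IsCompact (K i)) ∧ S = ⋃ i, B i ×ˢ K i}) ∧
      S = ⋂ n, f n}, s = Prod.fst '' L} :=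
    ⟨∅, ⟨fun _ => ∅, fun _ => isIp_empty, (iInter_const _).symm⟩, (image_empty _).symm⟩
  refine ⟨fun L hL hmono => part1 L hL hmono, hempty, ?_, ?_⟩
  · rintro s ⟨Ls, hLs, rfl⟩ t ⟨Lt, hLt, rfl⟩
    obtain hE | hne := isEmpty_or_nonempty E
    · have h1 : Prod.fst '' Ls = ∅ := by
        simp [eq_empty_of_isEmpty Ls]
      have h2 : Prod.fst '' Lt = ∅ := by
        simp [eq_empty_of_isEmpty Lt]
      rw [h1, h2, union_empty]
      exact hempty
    · obtain ⟨x₀⟩ := hne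
      exact hmem x₀ _ (((hmeas Ls hLs).union (hmeas Lt hLt)))
  · intro f hf
    obtain hE | hne := isEmpty_or_nonempty E
    · have h0 : (⋂ n, f n) = ∅ := by
        obtain ⟨L, _, hL⟩ := hf 0
        refine eq_empty_of_subset_empty fun x hx => ?_
        simp only [mem_iInter] at hx
        have := hx 0
        rw [hL, eq_empty_of_isEmpty L] at this
        simpa using this
      rw [h0]; exact hempty
    · obtain ⟨x₀⟩ := hne
      refine hmem x₀ _ (MeasurableSet.iInter fun n => ?_)
      obtain ⟨L, hL, hLe⟩ := hf n
      rw [hLe]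
      exact hmeas L hL
end

section
/- Let (Ω, F, P) be a probability space and E a locally compact Polish space. Define the projection capacity I_Ω(A) := P*(π_Ω(A)) for all A ⊆ Ω × E, where P* is the outer measure of P. Then: (1) I_Ω is an (F ⊗_p K)-capacity, where F ⊗_p K is the paving of finite unions of rectangles B × K with B ∈ F and K ⊆ E compact; (2) for every A in the product σ-field F ⊗ B(E), there exists an increasing sequence (L_n) of countable intersections of elements of F ⊗_p K such that for every n: L_n ⊆ A, π_Ω(L_n) ∈ F, and P(π_Ω(L_n)) ≤ P*(π_Ω(A)) ≤ P(π_Ω(L_n)) + 1/n. -/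
open MeasureTheory
open scoped ENNReal




open MeasureTheory Set
open scoped ENNReal

set_option linter.unusedSectionVars false

namespace ProjCap

variable {Ω E : Type*} [MeasurableSpace Ω]
  [TopologicalSpace E] [T2Space E] [MeasurableSpace E] [BorelSpace E]

/-- The paving of finite unions of measurable × compact rectangles. -/
def Pav (S : Set (Ω × E)) : Prop :=
  ∃ (n : ℕ) (B : Fin n → Set Ω) (K : Fin n → Set E),
    (∀ i, MeasurableSet (B i)) ∧ (∀ i, IsCompact (K i)) ∧ S = ⋃ i, B i ×ˢ K i

theorem pav_empty : Pav (∅ : Set (Ω × E)) :=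
  ⟨0, Fin.elim0, Fin.elim0, fun i => i.elim0, fun i => i.elim0, by simp⟩

theorem Pav.rect {B : Set Ω} {K : Set E} (hB : MeasurableSet B) (hK : IsCompact K) :
    Pav (B ×ˢ K) :=
  ⟨1, fun _ => B, fun _ => K, fun _ => hB, fun _ => hK, (Set.iUnion_const _).symm⟩

theorem pav_iff_finset {S : Set (Ω × E)} :
    Pav S ↔ ∃ T : Finset (Set Ω × Set E),
      (∀ p ∈ T, MeasurableSet p.1 ∧ IsCompact p.2) ∧ S = ⋃ p ∈ T, p.1 ×ˢ p.2 := by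
  classical
  constructor
  · rintro ⟨n, B, K, hB, hK, rfl⟩
    refine ⟨Finset.image (fun i => (B i, K i)) Finset.univ, ?_, ?_⟩
    · intro p hp
      simp only [Finset.mem_image, Finset.mem_univ, true_and] at hp
      obtain ⟨i, rfl⟩ := hp
      exact ⟨hB i, hK i⟩
    · ext x
      simp only [mem_iUnion, Finset.mem_image, Finset.mem_univ, true_and]
      constructor
      · rintro ⟨i, hi⟩; exact ⟨(B i, K i), ⟨i, rfl⟩, hi⟩
      · rintro ⟨p, ⟨i, rfl⟩, hx⟩; exact ⟨i, hx⟩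
  · rintro ⟨T, hT, rfl⟩
    refine ⟨T.card, fun i => ((T.equivFin.symm i : {p // p ∈ T}) : Set Ω × Set E).1,
      fun i => ((T.equivFin.symm i : {p // p ∈ T}) : Set Ω × Set E).2,
      fun i => (hT _ (T.equivFin.symm i).2).1, fun i => (hT _ (T.equivFin.symm i).2).2, ?_⟩
    ext x
    simp only [mem_iUnion, exists_prop]
    constructor
    · rintro ⟨p, hp, hx⟩
      refine ⟨T.equivFin ⟨p, hp⟩, ?_⟩
      simpa using hx
    · rintro ⟨i, hx⟩
      exact ⟨_, (T.equivFin.symm i).2, hx⟩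

theorem Pav.union {S T : Set (Ω × E)} (hS : Pav S) (hT : Pav T) : Pav (S ∪ T) := by
  classical
  rw [pav_iff_finset] at hS hT ⊢
  obtain ⟨U, hU, rfl⟩ := hS
  obtain ⟨V, hV, rfl⟩ := hT
  refine ⟨U ∪ V, ?_, ?_⟩
  · intro p hp
    rcases Finset.mem_union.1 hp with h | h
    exacts [hU p h, hV p h]
  · exact (Finset.set_biUnion_union _ _ _).symm

theorem Pav.inter {S T : Set (Ω × E)} (hS : Pav S) (hT : Pav T) : Pav (S ∩ T) := by
  classical
  rw [pav_iff_finset] at hS hT ⊢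
  obtain ⟨U, hU, rfl⟩ := hS
  obtain ⟨V, hV, rfl⟩ := hT
  refine ⟨Finset.image₂ (fun p q => (p.1 ∩ q.1, p.2 ∩ q.2)) U V, ?_, ?_⟩
  · intro p hp
    simp only [Finset.mem_image₂] at hp
    obtain ⟨a, ha, b, hb, rfl⟩ := hp
    exact ⟨(hU a ha).1.inter (hV b hb).1, (hU a ha).2.inter (hV b hb).2⟩
  · ext x
    simp only [mem_inter_iff, mem_iUnion, exists_prop, Finset.mem_image₂]
    constructor
    · rintro ⟨⟨p, hp, hx⟩, ⟨q, hq, hx'⟩⟩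
      exact ⟨(p.1 ∩ q.1, p.2 ∩ q.2), ⟨p, hp, q, hq, rfl⟩, ⟨hx.1, hx'.1⟩, ⟨hx.2, hx'.2⟩⟩
    · rintro ⟨r, ⟨p, hp, q, hq, rfl⟩, hx⟩
      exact ⟨⟨p, hp, hx.1.1, hx.2.1⟩, ⟨q, hq, hx.1.2, hx.2.2⟩⟩

theorem pav_biUnion {ι : Type*} {t : Finset ι} {f : ι → Set (Ω × E)}
    (h : ∀ i ∈ t, Pav (f i)) : Pav (⋃ i ∈ t, f i) := by
  classical
  induction t using Finset.induction_on with
  | empty => simpa using pav_empty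
  | @insert a s hni ih =>
    rw [Finset.set_biUnion_insert]
    exact (h a (Finset.mem_insert_self a s)).union
      (ih fun i hi => h i (Finset.mem_insert_of_mem hi))

theorem pav_iUnion_fintype {ι : Type*} [Fintype ι] {f : ι → Set (Ω × E)}
    (h : ∀ i, Pav (f i)) : Pav (⋃ i, f i) := by
  have := pav_biUnion (t := (Finset.univ : Finset ι)) (f := f) (fun i _ => h i)
  simpa using this

theorem pav_inter_biInter {ι : Type*} {t : Finset ι} {W : Set (Ω × E)} {f : ι → Set (Ω × E)}
    (hW : Pav W) (h : ∀ i ∈ t, Pav (f i)) : Pav (W ∩ ⋂ i ∈ t, f i) := by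
  classical
  induction t using Finset.induction_on generalizing W with
  | empty => simpa using hW
  | @insert a s hni ih =>
    rw [Finset.set_biInter_insert, ← Set.inter_assoc]
    exact ih (hW.inter (h a (Finset.mem_insert_self a s)))
      (fun i hi => h i (Finset.mem_insert_of_mem hi))

end ProjCap

section L2
open MeasureTheory Set
open scoped ENNReal
namespace ProjCap

variable {Ω E : Type*} [MeasurableSpace Ω]
  [TopologicalSpace E] [T2Space E] [MeasurableSpace E] [BorelSpace E]

/-- the section of a set of pairs at `ω` -/
def sect (S : Set (Ω × E)) (ω : Ω) : Set E := {x | (ω, x) ∈ S}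

theorem sect_iUnion {ι : Type*} (f : ι → Set (Ω × E)) (ω : Ω) :
    sect (⋃ i, f i) ω = ⋃ i, sect (f i) ω := by
  ext x; simp [sect]

theorem sect_iInter {ι : Type*} (f : ι → Set (Ω × E)) (ω : Ω) :
    sect (⋂ i, f i) ω = ⋂ i, sect (f i) ω := by
  ext x; simp [sect]

theorem Pav.sect_isCompact {S : Set (Ω × E)} (hS : Pav S) (ω : Ω) :
    IsCompact (sect S ω) := by
  obtain ⟨n, B, K, hB, hK, rfl⟩ := hS
  rw [sect_iUnion]
  apply isCompact_iUnion
  intro i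
  by_cases h : ω ∈ B i
  · have : sect (B i ×ˢ K i) ω = K i := by ext x; simp [sect, h]
    rw [this]; exact hK i
  · have : sect (B i ×ˢ K i) ω = ∅ := by ext x; simp [sect, h]
    rw [this]; exact isCompact_empty

theorem Pav.measurableSet_proj {S : Set (Ω × E)} (hS : Pav S) :
    MeasurableSet (Prod.fst '' S) := by
  obtain ⟨n, B, K, hB, hK, rfl⟩ := hS
  rw [Set.image_iUnion]
  apply MeasurableSet.iUnion
  intro i
  by_cases h : (K i).Nonempty
  · rw [Set.fst_image_prod _ h]; exact hB i
  · rw [Set.not_nonempty_iff_eq_empty] at h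
    simp [h]

/-- Projections commute with decreasing intersections of sets with compact sections. -/
theorem proj_iInter_of_antitone {R : ℕ → Set (Ω × E)}
    (hcomp : ∀ n ω, IsCompact (sect (R n) ω)) (hanti : Antitone R) :
    Prod.fst '' (⋂ n, R n) = ⋂ n, Prod.fst '' (R n) := by
  apply Set.Subset.antisymm
  · exact fun ω hω => Set.mem_iInter.2 fun n =>
      Set.image_mono (Set.iInter_subset _ n) hω
  · intro ω hω
    rw [Set.mem_iInter] at hω
    have hne : ∀ n, (sect (R n) ω).Nonempty := by
      intro n
      obtain ⟨p, hp, hfst⟩ := hω n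
      exact ⟨p.2, by rwa [sect, mem_setOf_eq, ← hfst, Prod.mk.eta]⟩
    have key : (⋂ n, sect (R n) ω).Nonempty := by
      apply IsCompact.nonempty_iInter_of_sequence_nonempty_isCompact_isClosed
        (fun n => sect (R n) ω)
      · exact fun n => fun x hx => hanti (Nat.le_succ n) hx
      · exact hne
      · exact hcomp 0 ω
      · exact fun n => (hcomp n ω).isClosed
    obtain ⟨x, hx⟩ := key
    rw [Set.mem_iInter] at hx
    exact ⟨(ω, x), Set.mem_iInter.2 fun n => hx n, rfl⟩

/-- Countable intersections of paving elements. -/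
def PavD (S : Set (Ω × E)) : Prop :=
  ∃ f : ℕ → Set (Ω × E), (∀ n, Pav (f n)) ∧ S = ⋂ n, f n

theorem Pav.pavD {S : Set (Ω × E)} (hS : Pav S) : PavD S :=
  ⟨fun _ => S, fun _ => hS, (Set.iInter_const S).symm⟩

/-- Antitone representation of a `PavD` set. -/
theorem PavD.antitone_rep {S : Set (Ω × E)} (hS : PavD S) :
    ∃ g : ℕ → Set (Ω × E), (∀ n, Pav (g n)) ∧ Antitone g ∧ S = ⋂ n, g n := by
  obtain ⟨f, hf, rfl⟩ := hS
  refine ⟨fun n => f 0 ∩ ⋂ k ∈ Finset.range (n + 1), f k, fun n =>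
    pav_inter_biInter (hf 0) (fun k _ => hf k), ?_, ?_⟩
  · intro m n hmn
    apply Set.inter_subset_inter_right
    exact Set.biInter_subset_biInter_left (fun k hk =>
      Finset.mem_range.2 (lt_of_lt_of_le (Finset.mem_range.1 hk) (by omega)))
  · ext x
    simp only [Set.mem_iInter, Set.mem_inter_iff, Finset.mem_range]
    constructor
    · intro h n
      exact ⟨h 0, fun k _ => h k⟩
    · intro h n
      exact (h n).2 n (by omega)

theorem PavD.sect_isCompact {S : Set (Ω × E)} (hS : PavD S) (ω : Ω) :
    IsCompact (sect S ω) := by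
  obtain ⟨g, hg, hanti, rfl⟩ := hS.antitone_rep
  rw [sect_iInter]
  exact IsCompact.of_isClosed_subset ((hg 0).sect_isCompact ω)
    (isClosed_iInter fun n => ((hg n).sect_isCompact ω).isClosed)
    (Set.iInter_subset _ 0)

theorem PavD.proj_eq {S : Set (Ω × E)} (hS : PavD S) :
    ∃ g : ℕ → Set (Ω × E), (∀ n, Pav (g n)) ∧ Antitone g ∧ S = ⋂ n, g n ∧
      Prod.fst '' S = ⋂ n, Prod.fst '' (g n) := by
  obtain ⟨g, hg, hanti, rfl⟩ := hS.antitone_rep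
  exact ⟨g, hg, hanti, rfl,
    proj_iInter_of_antitone (fun n ω => (hg n).sect_isCompact ω) hanti⟩

theorem PavD.measurableSet_proj {S : Set (Ω × E)} (hS : PavD S) :
    MeasurableSet (Prod.fst '' S) := by
  obtain ⟨g, hg, hanti, -, hproj⟩ := hS.proj_eq
  rw [hproj]
  exact MeasurableSet.iInter fun n => (hg n).measurableSet_proj

theorem PavD.inter_countable {f : ℕ → Set (Ω × E)} (hf : ∀ n, PavD (f n)) :
    PavD (⋂ n, f n) := by
  choose g hg hrep using hf
  refine ⟨fun j => g (Nat.unpair j).1 (Nat.unpair j).2, fun j => hg _ _, ?_⟩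
  ext x
  simp only [Set.mem_iInter]
  constructor
  · intro h j
    have := h (Nat.unpair j).1
    rw [hrep] at this
    exact Set.mem_iInter.1 this _
  · intro h n
    rw [hrep]
    refine Set.mem_iInter.2 fun m => ?_
    have := h (Nat.pair n m)
    rwa [Nat.unpair_pair] at this

theorem PavD.union {S T : Set (Ω × E)} (hS : PavD S) (hT : PavD T) : PavD (S ∪ T) := by
  obtain ⟨f, hf, rfl⟩ := hS
  obtain ⟨g, hg, rfl⟩ := hT
  refine ⟨fun j => f (Nat.unpair j).1 ∪ g (Nat.unpair j).2, fun j => (hf _).union (hg _), ?_⟩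
  ext x
  simp only [Set.mem_union, Set.mem_iInter]
  constructor
  · rintro (h | h) j
    · exact Or.inl (h _)
    · exact Or.inr (h _)
  · intro h
    by_contra hc
    push_neg at hc
    obtain ⟨⟨n, hn⟩, ⟨m, hm⟩⟩ := hc
    have := h (Nat.pair n m)
    rw [Nat.unpair_pair] at this
    tauto

end ProjCap
end L2

section L3
open MeasureTheory Set
open scoped ENNReal
namespace ProjCap

variable {Ω E : Type*} [MeasurableSpace Ω]
  [TopologicalSpace E] [T2Space E] [MeasurableSpace E] [BorelSpace E]
  (P : Measure Ω)

theorem capacity_mono {A B : Set (Ω × E)} (h : A ⊆ B) :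
    P (Prod.fst '' A) ≤ P (Prod.fst '' B) :=
  measure_mono (Set.image_mono h)

theorem capacity_iUnion {A : ℕ → Set (Ω × E)} (h : Monotone A) :
    P (Prod.fst '' ⋃ n, A n) = ⨆ n, P (Prod.fst '' A n) := by
  rw [Set.image_iUnion]
  exact Monotone.measure_iUnion (fun m n hmn => Set.image_mono (h hmn))

theorem capacity_iInter [IsFiniteMeasure P] {R : ℕ → Set (Ω × E)}
    (hanti : Antitone R) (hcomp : ∀ n ω, IsCompact (sect (R n) ω))
    (hmeas : ∀ n, MeasurableSet (Prod.fst '' R n)) :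
    P (Prod.fst '' ⋂ n, R n) = ⨅ n, P (Prod.fst '' R n) := by
  rw [proj_iInter_of_antitone hcomp hanti]
  refine Directed.measure_iInter (fun n => (hmeas n).nullMeasurableSet) ?_
    ⟨0, measure_ne_top _ _⟩
  intro m n
  exact ⟨max m n, Set.image_mono (hanti (le_max_left m n)),
    Set.image_mono (hanti (le_max_right m n))⟩

theorem capacity_iInter_pav [IsFiniteMeasure P] {R : ℕ → Set (Ω × E)}
    (hR : ∀ n, Pav (R n)) (hanti : Antitone R) :
    P (Prod.fst '' ⋂ n, R n) = ⨅ n, P (Prod.fst '' R n) :=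
  capacity_iInter P hanti (fun n ω => (hR n).sect_isCompact ω)
    (fun n => (hR n).measurableSet_proj)

end ProjCap
end L3

section L4
open MeasureTheory Set
open scoped ENNReal
namespace ProjCap

variable {Ω E : Type*} [MeasurableSpace Ω]
  [TopologicalSpace E] [T2Space E] [MeasurableSpace E] [BorelSpace E]

/-- Prefix of a sequence, as a list with the newest element first. -/
def pre (σ : ℕ → ℕ) : ℕ → List ℕ
  | 0 => []
  | n + 1 => σ n :: pre σ n

@[simp] theorem pre_zero (σ : ℕ → ℕ) : pre σ 0 = [] := rfl
@[simp] theorem pre_succ (σ : ℕ → ℕ) (n : ℕ) : pre σ (n + 1) = σ n :: pre σ n := rfl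

@[simp] theorem pre_length (σ : ℕ → ℕ) (n : ℕ) : (pre σ n).length = n := by
  induction n with
  | zero => rfl
  | succ n ih => simp [ih]

theorem pre_eq_ofFn (σ : ℕ → ℕ) (n : ℕ) :
    pre σ n = List.ofFn fun r : Fin n => σ (n - 1 - (r : ℕ)) := by
  induction n with
  | zero => rfl
  | succ n ih =>
    rw [List.ofFn_succ]
    simp only [pre_succ]
    congr 1
    rw [ih]
    congr 1
    funext r
    congr 1
    simp only [Fin.val_succ]
    omega

/-- Recover the value of the underlying sequence from a prefix list. -/
def σval (s : List ℕ) (j : ℕ) : ℕ := s.getD (s.length - 1 - j) 0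

theorem σval_cons {s : List ℕ} (k : ℕ) {j : ℕ} (hj : j < s.length) :
    σval (k :: s) j = σval s j := by
  unfold σval
  rw [List.length_cons]
  have h1 : s.length + 1 - 1 - j = (s.length - 1 - j) + 1 := by omega
  rw [h1, List.getD_cons_succ]

theorem σval_pre {σ : ℕ → ℕ} {n j : ℕ} (hj : j < n) : σval (pre σ n) j = σ j := by
  induction n with
  | zero => omega
  | succ n ih =>
    rcases Nat.lt_succ_iff_lt_or_eq.1 hj with h | rfl
    · rw [pre_succ, σval_cons _ (by simpa using h)]
      exact ih h
    · unfold σval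
      simp

theorem pair_le_pair_right {k m i : ℕ} (h : m ≤ i) : Nat.pair k m ≤ Nat.pair k i := by
  rcases eq_or_lt_of_le h with rfl | h
  · exact le_rfl
  · exact (Nat.pair_lt_pair_right k h).le

/-- The Suslin kernel of a scheme. -/
def kern (C : List ℕ → Set (Ω × E)) : Set (Ω × E) :=
  ⋃ σ : ℕ → ℕ, ⋂ n, C (pre σ n)

/-- Regularity (antitonicity) of a scheme. -/
def Reg (C : List ℕ → Set (Ω × E)) : Prop := ∀ k s, C (k :: s) ⊆ C s

theorem Reg.append {C : List ℕ → Set (Ω × E)} (hC : Reg C) :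
    ∀ u v : List ℕ, C (u ++ v) ⊆ C v := by
  intro u
  induction u with
  | nil => intro v; simp
  | cons k u ih => intro v; exact (hC k (u ++ v)).trans (ih v)

/-- The paving relative to a fixed compact `K₀`. -/
def PavJ (K₀ : Set E) (S : Set (Ω × E)) : Prop := Pav S ∧ S ⊆ univ ×ˢ K₀

/-- Suslin sets over the paving `PavJ K₀`, via regular schemes. -/
def Susl (K₀ : Set E) (A : Set (Ω × E)) : Prop :=
  ∃ C : List ℕ → Set (Ω × E), (∀ s, PavJ K₀ (C s)) ∧ Reg C ∧ A = kern C

theorem PavJ.susl {K₀ : Set E} {S : Set (Ω × E)} (hS : PavJ K₀ S) : Susl K₀ S := by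
  refine ⟨fun _ => S, fun _ => hS, fun _ _ => Set.Subset.rfl, ?_⟩
  unfold kern
  simp only []
  rw [Set.iInter_const, Set.iUnion_const]

theorem susl_iUnion {K₀ : Set E} (hK₀ : IsCompact K₀) {A : ℕ → Set (Ω × E)}
    (hA : ∀ k, Susl K₀ (A k)) : Susl K₀ (⋃ k, A k) := by
  classical
  choose C hCJ hCreg hCk using hA
  set D : List ℕ → Set (Ω × E) := fun s =>
    if h : s = [] then univ ×ˢ K₀ else C (s.getLast h) s.dropLast with hD
  have hDconcat : ∀ (t : List ℕ) (j : ℕ), D (t ++ [j]) = C j t := by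
    intro t j
    have hne : t ++ [j] ≠ [] := by simp
    rw [hD]
    simp only [dif_neg hne]
    rw [List.getLast_concat, List.dropLast_concat]
  have hDJ : ∀ s, PavJ K₀ (D s) := by
    intro s
    rcases s.eq_nil_or_concat with rfl | ⟨t, j, rfl⟩
    · rw [hD]; simp only [dif_pos rfl]
      exact ⟨Pav.rect MeasurableSet.univ hK₀, Set.Subset.rfl⟩
    · rw [List.concat_eq_append, hDconcat]; exact hCJ j t
  have hDreg : Reg D := by
    intro k s
    rcases s.eq_nil_or_concat with rfl | ⟨t, j, rfl⟩
    · have h1 : (k :: ([] : List ℕ)) = [] ++ [k] := rfl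
      rw [h1, hDconcat, hD]
      simp only [dif_pos rfl]
      exact (hCJ k []).2
    · rw [List.concat_eq_append]
      have h1 : k :: (t ++ [j]) = (k :: t) ++ [j] := rfl
      rw [h1, hDconcat, hDconcat]
      exact hCreg j k t
  refine ⟨D, hDJ, hDreg, ?_⟩
  ext x
  simp only [Set.mem_iUnion, kern, Set.mem_iInter]
  constructor
  · rintro ⟨k, hk⟩
    rw [hCk k] at hk
    simp only [kern, Set.mem_iUnion, Set.mem_iInter] at hk
    obtain ⟨τ, hτ⟩ := hk
    refine ⟨fun i => if i = 0 then k else τ (i - 1), fun n => ?_⟩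
    induction n with
    | zero =>
      rw [hD]
      simp only [pre_zero, dif_pos rfl]
      exact ⟨trivial, (hCJ k _).2 (hτ 0) |>.2⟩
    | succ n _ =>
      have hpre : pre (fun i => if i = 0 then k else τ (i - 1)) (n + 1) = pre τ n ++ [k] := by
        clear * -
        induction n with
        | zero => simp [pre]
        | succ n ih => simp only [pre_succ] at ih ⊢; rw [ih]; simp
      rw [hpre, hDconcat]
      exact hτ n
  · rintro ⟨σ, hσ⟩
    refine ⟨σ 0, ?_⟩
    rw [hCk (σ 0)]
    simp only [kern, Set.mem_iUnion, Set.mem_iInter]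
    refine ⟨fun i => σ (i + 1), fun n => ?_⟩
    have hpre : pre σ (n + 1) = pre (fun i => σ (i + 1)) n ++ [σ 0] := by
      clear * -
      induction n with
      | zero => simp [pre]
      | succ n ih => simp only [pre_succ] at ih ⊢; rw [ih]; simp
    have := hσ (n + 1)
    rw [hpre, hDconcat] at this
    exact this

end ProjCap
end L4

section L5
open MeasureTheory Set
open scoped ENNReal
namespace ProjCap

variable {Ω E : Type*} [MeasurableSpace Ω]
  [TopologicalSpace E] [T2Space E] [MeasurableSpace E] [BorelSpace E]

/-- The sub-list extracted along the `k`-th row of the pairing function. -/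
def lst (s : List ℕ) (k i : ℕ) : List ℕ :=
  List.ofFn (fun r : Fin i => σval s (Nat.pair k (i - 1 - (r : ℕ))))

theorem lst_congr {s s' : List ℕ} {k i : ℕ}
    (h : ∀ p ≤ Nat.pair k (i - 1), σval s p = σval s' p) : lst s k i = lst s' k i := by
  unfold lst
  congr 1
  funext r
  exact h _ (pair_le_pair_right (by omega))

theorem lst_pre {σ : ℕ → ℕ} {n k i : ℕ} (h : Nat.pair k i < n) :
    lst (pre σ n) k (i + 1) = pre (fun m => σ (Nat.pair k m)) (i + 1) := by
  unfold lst
  rw [pre_eq_ofFn (fun m => σ (Nat.pair k m)) (i + 1)]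
  congr 1
  funext r
  congr 1
  apply σval_pre
  exact lt_of_le_of_lt (pair_le_pair_right (by omega)) h

theorem susl_iInter {K₀ : Set E} (hK₀ : IsCompact K₀) {A : ℕ → Set (Ω × E)}
    (hA : ∀ k, Susl K₀ (A k)) : Susl K₀ (⋂ k, A k) := by
  classical
  choose C hCJ hCreg hCk using hA
  set D : List ℕ → Set (Ω × E) := fun s =>
    (univ ×ˢ K₀) ∩ ⋂ j ∈ Finset.range s.length,
      C (Nat.unpair j).1 (lst s (Nat.unpair j).1 ((Nat.unpair j).2 + 1)) with hD
  have hstab : ∀ (k : ℕ) (s : List ℕ) (j : ℕ), j < s.length →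
      lst (k :: s) (Nat.unpair j).1 ((Nat.unpair j).2 + 1)
        = lst s (Nat.unpair j).1 ((Nat.unpair j).2 + 1) := by
    intro k s j hj
    apply lst_congr
    intro p hp
    apply σval_cons
    have hpj : Nat.pair (Nat.unpair j).1 ((Nat.unpair j).2 + 1 - 1) = j := by
      simpa using Nat.pair_unpair j
    rw [hpj] at hp
    omega
  refine ⟨D, ?_, ?_, ?_⟩
  · intro s
    exact ⟨pav_inter_biInter (Pav.rect MeasurableSet.univ hK₀) (fun j _ => (hCJ _ _).1),
      Set.inter_subset_left⟩
  · intro k s x hx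
    obtain ⟨hx1, hx2⟩ := hx
    simp only [Set.mem_iInter, Finset.mem_range] at hx2
    refine ⟨hx1, ?_⟩
    simp only [Set.mem_iInter, Finset.mem_range]
    intro j hj
    have := hx2 j (by simp only [List.length_cons]; omega)
    rwa [hstab k s j hj] at this
  · ext x
    simp only [Set.mem_iInter, kern, Set.mem_iUnion]
    constructor
    · intro h
      have h' : ∀ k, ∃ τ : ℕ → ℕ, ∀ m, x ∈ C k (pre τ m) := by
        intro k
        have := h k
        rw [hCk k] at this
        simp only [kern, Set.mem_iUnion, Set.mem_iInter] at this
        exact this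
      choose τ hτ using h'
      refine ⟨fun j => τ (Nat.unpair j).1 (Nat.unpair j).2, fun n => ?_⟩
      refine ⟨⟨trivial, ((hCJ 0 _).2 (hτ 0 0)).2⟩, ?_⟩
      simp only [Set.mem_iInter, Finset.mem_range, pre_length]
      intro j hj
      set k := (Nat.unpair j).1 with hk
      set i := (Nat.unpair j).2 with hi
      have hlt : Nat.pair k i < n := by rw [hk, hi, Nat.pair_unpair]; exact hj
      rw [lst_pre hlt]
      have hfun : (fun m => (fun j' => τ (Nat.unpair j').1 (Nat.unpair j').2) (Nat.pair k m))
          = τ k := by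
        funext m
        simp [Nat.unpair_pair]
      rw [hfun]
      exact hτ k (i + 1)
    · rintro ⟨σ, hσ⟩ k
      rw [hCk k]
      have key : ∀ i, x ∈ C k (pre (fun m => σ (Nat.pair k m)) (i + 1)) := by
        intro i
        have hn := hσ (Nat.pair k i + 1)
        obtain ⟨-, h2⟩ := hn
        simp only [Set.mem_iInter, Finset.mem_range, pre_length] at h2
        have h3 := h2 (Nat.pair k i) (by omega)
        rw [Nat.unpair_pair] at h3
        have h4 : x ∈ C k (lst (pre σ (Nat.pair k i + 1)) k (i + 1)) := h3
        rwa [lst_pre (Nat.lt_succ_self _)] at h4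
      refine Set.mem_iUnion.2 ⟨fun m => σ (Nat.pair k m), Set.mem_iInter.2 fun m => ?_⟩
      match m with
      | 0 => exact hCreg k _ _ (key 0)
      | Nat.succ i => exact key i

end ProjCap
end L5

section L6
open MeasureTheory Set
open scoped ENNReal
namespace ProjCap

variable {Ω E : Type*} [MeasurableSpace Ω]
  [TopologicalSpace E] [T2Space E] [MeasurableSpace E] [BorelSpace E]

theorem exists_le_add {f : ℕ → ℝ≥0∞} {v : ℝ≥0∞} (hv : v ≠ ∞) (h : v = ⨆ M, f M)
    {ε : ℝ≥0∞} (hε : ε ≠ 0) : ∃ M, v ≤ f M + ε := by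
  by_cases hv0 : v = 0
  · exact ⟨0, by simp [hv0]⟩
  obtain ⟨M, hM⟩ := lt_iSup_iff.1
    (show v - ε < ⨆ M, f M by rw [← h]; exact ENNReal.sub_lt_self hv hv0 hε)
  refine ⟨M, ?_⟩
  by_cases hεv : ε ≤ v
  · have hεtop : ε ≠ ∞ := fun he => hv (top_le_iff.1 (he ▸ hεv))
    exact le_of_lt ((ENNReal.sub_lt_iff_lt_right hεtop hεv).1 hM)
  · push_neg at hεv
    exact (hεv.le).trans le_add_self

theorem sum_geom_le {ε : ℝ≥0∞} (n : ℕ) :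
    (∑ k ∈ Finset.range n, ε * (2⁻¹ : ℝ≥0∞) ^ (k + 1)) ≤ ε := by
  calc (∑ k ∈ Finset.range n, ε * (2⁻¹ : ℝ≥0∞) ^ (k + 1))
      ≤ ∑' k : ℕ, ε * (2⁻¹ : ℝ≥0∞) ^ (k + 1) := ENNReal.sum_le_tsum _
    _ = ε * ∑' k : ℕ, (2⁻¹ : ℝ≥0∞) ^ (k + 1) := ENNReal.tsum_mul_left
    _ = ε * (2⁻¹ * (1 - 2⁻¹)⁻¹) := by rw [ENNReal.tsum_geometric_add_one]
    _ = ε := by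
        rw [ENNReal.one_sub_inv_two,
          ENNReal.mul_inv_cancel (by norm_num) (by norm_num), mul_one]

theorem pav_biUnion_finite {T : Set (List ℕ)} (hT : T.Finite) {f : List ℕ → Set (Ω × E)}
    (h : ∀ s ∈ T, Pav (f s)) : Pav (⋃ s ∈ T, f s) := by
  refine Set.Finite.induction_on
    (motive := fun T _ => (∀ s ∈ T, Pav (f s)) → Pav (⋃ s ∈ T, f s)) T hT ?_ ?_ h
  · intro _; simpa using pav_empty
  · intro a T' _ _ ih h'
    rw [Set.biUnion_insert]
    exact (h' a (Set.mem_insert a T')).union (ih fun s hs => h' s (Set.mem_insert_of_mem a hs))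

theorem finite_bnd (b : List ℕ) : {s : List ℕ | List.Forall₂ (· ≤ ·) s b}.Finite := by
  induction b with
  | nil =>
    have : {s : List ℕ | List.Forall₂ (· ≤ ·) s []} = {[]} := by
      ext s; simp [List.forall₂_nil_right_iff]
    rw [this]; exact Set.finite_singleton _
  | cons k b ih =>
    have : {s : List ℕ | List.Forall₂ (· ≤ ·) s (k :: b)}
        = Set.image2 List.cons {a : ℕ | a ≤ k} {t : List ℕ | List.Forall₂ (· ≤ ·) t b} := by
      ext s
      simp only [Set.mem_setOf_eq, List.forall₂_cons_right_iff, Set.mem_image2]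
      constructor
      · rintro ⟨a, t, hak, htb, rfl⟩; exact ⟨a, hak, t, htb, rfl⟩
      · rintro ⟨a, hak, t, htb, rfl⟩; exact ⟨a, t, hak, htb, rfl⟩
    rw [this]
    exact Set.Finite.image2 _ (Set.finite_Iic k) ih

/-- **Choquet capacitability** for the Suslin sets over the paving `PavJ K₀`. -/
theorem susl_capacitable {K₀ : Set E}
    (P : Measure Ω) [IsFiniteMeasure P] {A : Set (Ω × E)} (hA : Susl K₀ A)
    {ε : ℝ≥0∞} (hε : ε ≠ 0) :
    ∃ L : Set (Ω × E), PavD L ∧ L ⊆ A ∧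
      P (Prod.fst '' A) ≤ P (Prod.fst '' L) + ε := by
  classical
  obtain ⟨C, hCJ, hCreg, rfl⟩ := hA
  -- the sets `As s`: unions of kernels through a fixed finite prefix
  set As : List ℕ → Set (Ω × E) := fun s =>
    {x | ∃ σ : ℕ → ℕ, pre σ s.length = s ∧ ∀ n, x ∈ C (pre σ n)} with hAs
  set bnd : List ℕ → Set (List ℕ) := fun b => {s | List.Forall₂ (· ≤ ·) s b} with hbnd
  set G : List ℕ → Set (Ω × E) := fun b => ⋃ s ∈ bnd b, As s with hG
  have hAs_sub : ∀ s, As s ⊆ C s := by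
    rintro s x ⟨σ, hσ, hall⟩
    have := hall s.length
    rwa [hσ] at this
  have hAs_cons : ∀ s, As s = ⋃ k, As (k :: s) := by
    intro s
    ext x
    simp only [hAs, Set.mem_setOf_eq, Set.mem_iUnion]
    constructor
    · rintro ⟨σ, hσ, hall⟩
      refine ⟨σ s.length, σ, ?_, hall⟩
      simp only [List.length_cons, pre_succ, hσ]
    · rintro ⟨k, σ, hσ, hall⟩
      simp only [List.length_cons, pre_succ] at hσ
      exact ⟨σ, (List.cons.injEq _ _ _ _ ▸ hσ).2, hall⟩
  have hG0 : G [] = kern C := by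
    ext x
    constructor
    · intro hxG
      obtain ⟨s, hs, hxs⟩ := Set.mem_iUnion₂.1 hxG
      simp only [hbnd, Set.mem_setOf_eq, List.forall₂_nil_right_iff] at hs
      subst hs
      simp only [hAs, Set.mem_setOf_eq] at hxs
      obtain ⟨σ, -, hall⟩ := hxs
      exact Set.mem_iUnion.2 ⟨σ, Set.mem_iInter.2 hall⟩
    · intro hxk
      obtain ⟨σ, hσ⟩ := Set.mem_iUnion.1 hxk
      refine Set.mem_iUnion₂.2 ⟨[], List.Forall₂.nil, ?_⟩
      simp only [hAs, Set.mem_setOf_eq]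
      exact ⟨σ, rfl, fun n => Set.mem_iInter.1 hσ n⟩
  have hGsup : ∀ b, G b = ⋃ M, G (M :: b) := by
    intro b
    ext x
    simp only [hG, Set.mem_iUnion, exists_prop]
    constructor
    · rintro ⟨s, hs, hx⟩
      rw [hAs_cons s] at hx
      obtain ⟨k, hk⟩ := Set.mem_iUnion.1 hx
      exact ⟨k, k :: s, List.Forall₂.cons le_rfl hs, hk⟩
    · rintro ⟨M, s, hs, hx⟩
      rw [hbnd, Set.mem_setOf_eq, List.forall₂_cons_right_iff] at hs
      obtain ⟨a, t, haM, htb, rfl⟩ := hs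
      refine ⟨t, htb, ?_⟩
      rw [hAs_cons t]
      exact Set.mem_iUnion.2 ⟨a, hx⟩
  have hGmono : ∀ b, Monotone fun M => G (M :: b) := by
    intro b M M' hMM' x hx
    simp only [hG, Set.mem_iUnion, exists_prop] at hx ⊢
    obtain ⟨s, hs, hx⟩ := hx
    rw [hbnd, Set.mem_setOf_eq, List.forall₂_cons_right_iff] at hs
    obtain ⟨a, t, haM, htb, rfl⟩ := hs
    exact ⟨a :: t, List.Forall₂.cons (haM.trans hMM') htb, hx⟩
  -- choice of the bounds
  have hΦ : ∀ b : List ℕ, ∃ M : ℕ,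
      P (Prod.fst '' G b) ≤ P (Prod.fst '' G (M :: b)) + ε * (2⁻¹ : ℝ≥0∞) ^ (b.length + 1) := by
    intro b
    refine exists_le_add (measure_ne_top _ _) ?_
      (mul_ne_zero hε (pow_ne_zero _ (by norm_num)))
    rw [hGsup b, capacity_iUnion P (hGmono b)]
  choose Φ hΦspec using hΦ
  set g : ℕ → List ℕ := fun n => Nat.rec [] (fun _ s => Φ s :: s) n with hgdef
  have hgsucc : ∀ n, g (n + 1) = Φ (g n) :: g n := fun n => rfl
  have hglen : ∀ n, (g n).length = n := by
    intro n
    induction n with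
    | zero => rfl
    | succ n ih => rw [hgsucc, List.length_cons, ih]
  have hgdecomp : ∀ a b, ∃ w : List ℕ, w.length = a ∧ g (a + b) = w ++ g b := by
    intro a b
    induction a with
    | zero => exact ⟨[], rfl, by rw [Nat.zero_add, List.nil_append]⟩
    | succ a ih =>
      obtain ⟨w, hwl, hw⟩ := ih
      refine ⟨Φ (g (a + b)) :: w, by simp [hwl], ?_⟩
      have : a + 1 + b = (a + b) + 1 := by omega
      rw [this, hgsucc, hw, List.cons_append]
  -- the decreasing paving approximations
  set D : ℕ → Set (Ω × E) := fun n => ⋃ s ∈ bnd (g n), C s with hD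
  have hDpav : ∀ n, Pav (D n) :=
    fun n => pav_biUnion_finite (finite_bnd (g n)) (fun s _ => (hCJ s).1)
  have hGD : ∀ n, G (g n) ⊆ D n :=
    fun n => Set.iUnion₂_mono fun s _ => hAs_sub s
  have hDanti : Antitone D := by
    apply antitone_nat_of_succ_le
    intro n x hx
    simp only [hD, Set.mem_iUnion, exists_prop] at hx ⊢
    obtain ⟨s, hs, hx⟩ := hx
    rw [hgsucc, hbnd, Set.mem_setOf_eq, List.forall₂_cons_right_iff] at hs
    obtain ⟨a, t, haM, htb, rfl⟩ := hs
    exact ⟨t, htb, hCreg a t hx⟩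
  -- the ε-chain
  have hchain : ∀ n, P (Prod.fst '' kern C) ≤ P (Prod.fst '' G (g n)) +
      ∑ k ∈ Finset.range n, ε * (2⁻¹ : ℝ≥0∞) ^ (k + 1) := by
    intro n
    induction n with
    | zero =>
      simp only [Finset.range_zero, Finset.sum_empty, add_zero]
      have : g 0 = [] := rfl
      rw [this, hG0]
    | succ n ih =>
      rw [Finset.sum_range_succ, hgsucc n]
      have hsp := hΦspec (g n)
      rw [hglen n] at hsp
      calc P (Prod.fst '' kern C)
          ≤ P (Prod.fst '' G (g n)) + ∑ k ∈ Finset.range n, ε * (2⁻¹ : ℝ≥0∞) ^ (k + 1) := ih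
        _ ≤ (P (Prod.fst '' G (Φ (g n) :: g n)) + ε * (2⁻¹ : ℝ≥0∞) ^ (n + 1))
              + ∑ k ∈ Finset.range n, ε * (2⁻¹ : ℝ≥0∞) ^ (k + 1) := add_le_add_left hsp _
        _ = P (Prod.fst '' G (Φ (g n) :: g n))
              + (∑ k ∈ Finset.range n, ε * (2⁻¹ : ℝ≥0∞) ^ (k + 1)
                + ε * (2⁻¹ : ℝ≥0∞) ^ (n + 1)) := by ring
  have hchain2 : ∀ n, P (Prod.fst '' kern C) ≤ P (Prod.fst '' D n) + ε := by
    intro n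
    refine (hchain n).trans ?_
    exact add_le_add (capacity_mono P (hGD n)) (sum_geom_le n)
  -- the approximating set
  refine ⟨⋂ n, D n, ⟨D, hDpav, rfl⟩, ?_, ?_⟩
  · -- König's lemma: `⋂ n, D n ⊆ kern C`
    intro x hx
    rw [Set.mem_iInter] at hx
    set Good : List ℕ → Prop := fun s => ∀ m, ∃ t : List ℕ, t.length = m ∧
      List.Forall₂ (· ≤ ·) (t ++ s) (g (m + s.length)) ∧ x ∈ C (t ++ s) with hGood
    have hgood_nil : Good [] := by
      intro m
      have := hx m
      simp only [hD, Set.mem_iUnion, exists_prop] at this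
      obtain ⟨s, hs, hxs⟩ := this
      refine ⟨s, ?_, ?_, ?_⟩
      · rw [List.Forall₂.length_eq hs, hglen]
      · rw [List.append_nil]
        have : m + ([] : List ℕ).length = m := by simp
        rw [this]
        exact hs
      · rwa [List.append_nil]
    have hstep : ∀ s, Good s → ∃ j, Good (j :: s) := by
      intro s hgs
      set n0 := s.length with hn0
      set q := Φ (g n0) with hq
      -- extract the last element of each witness
      have hwit : ∀ m : ℕ, ∃ (u : List ℕ) (j : ℕ), j ≤ q ∧ (u ++ [j]).length = m + 1 ∧
          List.Forall₂ (· ≤ ·) ((u ++ [j]) ++ s) (g (m + 1 + n0)) ∧ x ∈ C ((u ++ [j]) ++ s) := by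
        intro m
        obtain ⟨t, htl, htb, htx⟩ := hgs (m + 1)
        rcases t.eq_nil_or_concat with rfl | ⟨u, j, rfl⟩
        · simp at htl
        · rw [List.concat_eq_append] at htl htb htx
          refine ⟨u, j, ?_, htl, htb, htx⟩
          -- bound on j
          obtain ⟨w, hwl, hw⟩ := hgdecomp m (n0 + 1)
          have harith : m + (n0 + 1) = m + 1 + n0 := by omega
          rw [harith] at hw
          rw [hw] at htb
          have hul : u.length = m := by
            simp only [List.length_append, List.length_singleton] at htl
            omega
          have hd := List.forall₂_drop m htb
          rw [List.append_assoc, List.singleton_append] at hd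
          rw [List.drop_left' hul, List.drop_left' hwl] at hd
          have : g (n0 + 1) = q :: g n0 := hgsucc n0
          rw [this] at hd
          exact (List.forall₂_cons.1 hd).1
      choose uf jf hjq hlen hball hbx using hwit
      -- pigeonhole
      have : ∃ y : Fin (q + 1), (fun m => (⟨jf m, Nat.lt_succ_of_le (hjq m)⟩ : Fin (q + 1)))
          ⁻¹' {y} |>.Infinite := by
        obtain ⟨y, hy⟩ := Finite.exists_infinite_fiber
          (fun m => (⟨jf m, Nat.lt_succ_of_le (hjq m)⟩ : Fin (q + 1)))
        exact ⟨y, Set.infinite_coe_iff.1 hy⟩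
      obtain ⟨y, hy⟩ := this
      refine ⟨(y : ℕ), ?_⟩
      intro m'
      obtain ⟨m, hmem, hm'⟩ := hy.exists_gt m'
      have hfm : (⟨jf m, Nat.lt_succ_of_le (hjq m)⟩ : Fin (q + 1)) = y := hmem
      have hjm : jf m = (y : ℕ) := congrArg Fin.val hfm
      have hul : (uf m).length = m := by
        have := hlen m
        simp only [List.length_append, List.length_singleton] at this
        omega
      refine ⟨(uf m).drop (m - m'), ?_, ?_, ?_⟩
      · rw [List.length_drop, hul]; omega
      · -- boundedness
        have hb := hball m
        rw [List.append_assoc, List.singleton_append, hjm] at hb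
        have hd := List.forall₂_drop (m - m') hb
        have hleft : List.drop (m - m') (uf m ++ ((y : ℕ) :: s))
            = (uf m).drop (m - m') ++ ((y : ℕ) :: s) := by
          rw [List.drop_append]
          have : m - m' - (uf m).length = 0 := by omega
          rw [this, List.drop_zero]
        rw [hleft] at hd
        obtain ⟨w, hwl, hw⟩ := hgdecomp (m - m') (m' + 1 + n0)
        have harith : m - m' + (m' + 1 + n0) = m + 1 + n0 := by omega
        rw [harith] at hw
        rw [hw, List.drop_left' hwl] at hd
        have harith2 : m' + ((y : ℕ) :: s).length = m' + 1 + n0 := by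
          simp only [List.length_cons, hn0]; omega
        rw [harith2]
        exact hd
      · -- membership
        have hb := hbx m
        rw [List.append_assoc, List.singleton_append, hjm] at hb
        have : uf m = (uf m).take (m - m') ++ (uf m).drop (m - m') :=
          (List.take_append_drop _ _).symm
        rw [this, List.append_assoc] at hb
        exact hCreg.append _ _ hb
    -- build the branch
    let seq : (n : ℕ) → {s : List ℕ // Good s ∧ s.length = n} := fun n =>
      Nat.rec ⟨[], hgood_nil, rfl⟩
        (fun _ p => ⟨Classical.choose (hstep p.1 p.2.1) :: p.1,
          Classical.choose_spec (hstep p.1 p.2.1), by simp [p.2.2]⟩) n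
    set σ : ℕ → ℕ := fun n => ((seq (n + 1)).1).headI with hσdef
    have hseqsucc : ∀ n, (seq (n + 1)).1
        = Classical.choose (hstep (seq n).1 (seq n).2.1) :: (seq n).1 := fun n => rfl
    have hpreseq : ∀ n, pre σ n = (seq n).1 := by
      intro n
      induction n with
      | zero => rfl
      | succ n ih =>
        rw [pre_succ, ih, hσdef]
        rw [hseqsucc n]
        simp [List.headI]
        rfl
    refine Set.mem_iUnion.2 ⟨σ, Set.mem_iInter.2 fun n => ?_⟩
    rw [hpreseq n]
    obtain ⟨t, htl, -, htx⟩ := (seq n).2.1 0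
    rw [List.length_eq_zero_iff] at htl
    rwa [htl, List.nil_append] at htx
  · -- the measure estimate
    have hcap := capacity_iInter_pav P hDpav hDanti
    rw [hcap]
    refine le_trans (le_iInf fun n => hchain2 n) ?_
    rw [ENNReal.iInf_add]

end ProjCap
end L6

section L7
open MeasureTheory Set
open scoped ENNReal
namespace ProjCap

variable {Ω E : Type*} [MeasurableSpace Ω]
  [TopologicalSpace E] [PolishSpace E] [MeasurableSpace E] [BorelSpace E]

/-- In a Polish space, every open set is a countable union of closed sets. -/
theorem isOpen_iUnion_closed {U : Set E} (hU : IsOpen U) :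
    ∃ F : ℕ → Set E, (∀ n, IsClosed (F n)) ∧ U = ⋃ n, F n := by
  letI := TopologicalSpace.upgradeIsCompletelyMetrizable E
  refine ⟨fun n => {x | ∀ y ∈ Uᶜ, (1 : ℝ) / (n + 1) ≤ dist x y}, fun n => ?_, ?_⟩
  · show IsClosed {x | ∀ y ∈ Uᶜ, (1 : ℝ) / (n + 1) ≤ dist x y}
    have : {x | ∀ y ∈ Uᶜ, (1 : ℝ) / (n + 1) ≤ dist x y}
        = ⋂ y ∈ Uᶜ, {x | (1 : ℝ) / (n + 1) ≤ dist x y} := by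
      ext x; simp
    rw [this]
    exact isClosed_biInter fun y _ =>
      isClosed_le continuous_const (Continuous.dist continuous_id continuous_const)
  · ext x
    simp only [Set.mem_iUnion, Set.mem_setOf_eq]
    constructor
    · intro hx
      obtain ⟨r, hr, hball⟩ := Metric.isOpen_iff.1 hU x hx
      obtain ⟨n, hn⟩ := exists_nat_one_div_lt hr
      refine ⟨n, fun y hy => ?_⟩
      by_contra hlt
      push_neg at hlt
      exact hy (hball (by rw [Metric.mem_ball, dist_comm]; exact lt_trans hlt hn))
    · rintro ⟨n, hn⟩
      by_contra hxU
      have := hn x hxU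
      simp at this
      have : (1 : ℝ) / (n + 1) > 0 := by positivity
      linarith [hn x hxU, dist_self x]

variable [LocallyCompactSpace E]

theorem susl_union {K₀ : Set E} (hK₀ : IsCompact K₀) {X Y : Set (Ω × E)}
    (hX : Susl K₀ X) (hY : Susl K₀ Y) : Susl K₀ (X ∪ Y) := by
  have : X ∪ Y = ⋃ k : ℕ, (if k = 0 then X else Y) := by
    ext x
    simp only [Set.mem_union, Set.mem_iUnion]
    constructor
    · rintro (h | h)
      · exact ⟨0, by simpa using h⟩
      · exact ⟨1, by simpa using h⟩
    · rintro ⟨k, hk⟩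
      by_cases h : k = 0
      · rw [h] at hk; simp at hk; exact Or.inl hk
      · rw [if_neg h] at hk; exact Or.inr hk
  rw [this]
  exact susl_iUnion hK₀ fun k => by by_cases h : k = 0 <;> simp [h, hX, hY]

/-- Every Borel set `S ⊆ E` is "good": all rectangles over `S`, intersected with the
ambient strip, are Suslin over the paving. -/
theorem borel_mem_S {K₀ : Set E} (hK₀ : IsCompact K₀) {S : Set E} (hS : MeasurableSet S) :
    (∀ B : Set Ω, MeasurableSet B → Susl K₀ ((B ×ˢ S) ∩ ((univ : Set Ω) ×ˢ K₀))) ∧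
    (∀ B : Set Ω, MeasurableSet B → Susl K₀ ((B ×ˢ Sᶜ) ∩ ((univ : Set Ω) ×ˢ K₀))) := by
  -- membership in the good class for closed sets
  have hclosed : ∀ S : Set E, IsClosed S → ∀ B : Set Ω, MeasurableSet B →
      Susl K₀ ((B ×ˢ S) ∩ ((univ : Set Ω) ×ˢ K₀)) := by
    intro S hSc B hB
    rw [Set.prod_inter_prod, Set.inter_univ]
    exact PavJ.susl ⟨Pav.rect hB (hK₀.inter_left hSc),
      Set.prod_mono (Set.subset_univ B) Set.inter_subset_right⟩
  have hopen : ∀ S : Set E, IsOpen S → ∀ B : Set Ω, MeasurableSet B →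
      Susl K₀ ((B ×ˢ S) ∩ ((univ : Set Ω) ×ˢ K₀)) := by
    intro S hSo B hB
    obtain ⟨F, hFc, rfl⟩ := isOpen_iUnion_closed hSo
    have : (B ×ˢ ⋃ n, F n) ∩ ((univ : Set Ω) ×ˢ K₀)
        = ⋃ n, ((B ×ˢ F n) ∩ ((univ : Set Ω) ×ˢ K₀)) := by
      rw [Set.prod_iUnion, Set.iUnion_inter]
    rw [this]
    exact susl_iUnion hK₀ fun n => hclosed (F n) (hFc n) B hB
  -- the good class is closed under countable unions and intersections
  have hunion : ∀ (S : ℕ → Set E), (∀ k, ∀ B : Set Ω, MeasurableSet B →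
      Susl K₀ ((B ×ˢ S k) ∩ ((univ : Set Ω) ×ˢ K₀))) → ∀ B : Set Ω, MeasurableSet B →
      Susl K₀ ((B ×ˢ ⋃ k, S k) ∩ ((univ : Set Ω) ×ˢ K₀)) := by
    intro S hSk B hB
    have : (B ×ˢ ⋃ k, S k) ∩ ((univ : Set Ω) ×ˢ K₀)
        = ⋃ k, ((B ×ˢ S k) ∩ ((univ : Set Ω) ×ˢ K₀)) := by
      rw [Set.prod_iUnion, Set.iUnion_inter]
    rw [this]
    exact susl_iUnion hK₀ fun k => hSk k B hB
  have hinter : ∀ (S : ℕ → Set E), (∀ k, ∀ B : Set Ω, MeasurableSet B →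
      Susl K₀ ((B ×ˢ S k) ∩ ((univ : Set Ω) ×ˢ K₀))) → ∀ B : Set Ω, MeasurableSet B →
      Susl K₀ ((B ×ˢ ⋂ k, S k) ∩ ((univ : Set Ω) ×ˢ K₀)) := by
    intro S hSk B hB
    have : (B ×ˢ ⋂ k, S k) ∩ ((univ : Set Ω) ×ˢ K₀)
        = ⋂ k, ((B ×ˢ S k) ∩ ((univ : Set Ω) ×ˢ K₀)) := by
      ext x
      simp only [Set.mem_inter_iff, Set.mem_prod, Set.mem_iInter, Set.mem_univ, true_and]
      constructor
      · rintro ⟨⟨h1, h2⟩, h3⟩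
        exact fun i => ⟨⟨h1, h2 i⟩, h3⟩
      · intro h
        exact ⟨⟨(h 0).1.1, fun i => (h i).1.2⟩, (h 0).2⟩
    rw [this]
    exact susl_iInter hK₀ fun k => hSk k B hB
  -- induction over the Borel σ-algebra generated by closed sets
  have key : ∀ S : Set E, MeasurableSet S →
      (∀ B : Set Ω, MeasurableSet B → Susl K₀ ((B ×ˢ S) ∩ ((univ : Set Ω) ×ˢ K₀))) ∧
      (∀ B : Set Ω, MeasurableSet B → Susl K₀ ((B ×ˢ Sᶜ) ∩ ((univ : Set Ω) ×ˢ K₀))) := by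
    intro S hSmeas
    have hSgen : MeasurableSet[MeasurableSpace.generateFrom {t : Set E | IsClosed t}] S := by
      rwa [← borel_eq_generateFrom_isClosed, ← BorelSpace.measurable_eq (α := E)]
    refine MeasurableSpace.generateFrom_induction {t : Set E | IsClosed t}
      (fun S _ =>
        (∀ B : Set Ω, MeasurableSet B → Susl K₀ ((B ×ˢ S) ∩ ((univ : Set Ω) ×ˢ K₀))) ∧
        (∀ B : Set Ω, MeasurableSet B → Susl K₀ ((B ×ˢ Sᶜ) ∩ ((univ : Set Ω) ×ˢ K₀))))
      ?_ ?_ ?_ ?_ S hSgen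
    · intro t htc _
      exact ⟨hclosed t htc, hopen tᶜ htc.isOpen_compl⟩
    · constructor
      · intro B hB
        have : (B ×ˢ (∅ : Set E)) ∩ ((univ : Set Ω) ×ˢ K₀) = ∅ := by simp
        rw [this]
        exact PavJ.susl ⟨pav_empty, Set.empty_subset _⟩
      · intro B hB
        rw [Set.compl_empty]
        exact hopen univ isOpen_univ B hB
    · intro t ht ih
      exact ⟨ih.2, by rw [compl_compl]; exact ih.1⟩
    · intro s hs ih
      constructor
      · exact hunion s (fun k => (ih k).1)
      · intro B hB
        rw [Set.compl_iUnion]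
        exact hinter (fun k => (s k)ᶜ) (fun k => (ih k).2) B hB
  exact key S hS

end ProjCap
end L7

section L8
open MeasureTheory Set
open scoped ENNReal
namespace ProjCap

variable {Ω E : Type*} [MeasurableSpace Ω]
  [TopologicalSpace E] [PolishSpace E] [MeasurableSpace E] [BorelSpace E]
  [LocallyCompactSpace E]

/-- Every product-measurable set, intersected with a compact strip, is Suslin. -/
theorem measurable_susl {K₀ : Set E} (hK₀ : IsCompact K₀) {A : Set (Ω × E)}
    (hA : MeasurableSet A) : Susl K₀ (A ∩ ((univ : Set Ω) ×ˢ K₀)) := by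
  have hA' : MeasurableSet[MeasurableSpace.generateFrom
      (Set.image2 (· ×ˢ ·) {s : Set Ω | MeasurableSet s} {t : Set E | MeasurableSet t})] A := by
    rwa [generateFrom_prod]
  have main : ∀ A : Set (Ω × E), MeasurableSet[MeasurableSpace.generateFrom
      (Set.image2 (· ×ˢ ·) {s : Set Ω | MeasurableSet s} {t : Set E | MeasurableSet t})] A →
      Susl K₀ (A ∩ ((univ : Set Ω) ×ˢ K₀)) ∧ Susl K₀ (Aᶜ ∩ ((univ : Set Ω) ×ˢ K₀)) := by
    intro A hA
    refine MeasurableSpace.generateFrom_induction _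
      (fun A _ => Susl K₀ (A ∩ ((univ : Set Ω) ×ˢ K₀)) ∧
        Susl K₀ (Aᶜ ∩ ((univ : Set Ω) ×ˢ K₀))) ?_ ?_ ?_ ?_ A hA
    · rintro t ⟨B, hB, S, hS, rfl⟩ -
      rw [Set.mem_setOf_eq] at hB hS
      constructor
      · exact (borel_mem_S hK₀ hS).1 B hB
      · have hcompl : (B ×ˢ S)ᶜ = (Bᶜ ×ˢ (univ : Set E)) ∪ ((univ : Set Ω) ×ˢ Sᶜ) := by
          ext x
          simp only [Set.mem_compl_iff, Set.mem_prod, Set.mem_union, Set.mem_univ, true_and,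
            and_true]
          tauto
        rw [hcompl, Set.union_inter_distrib_right]
        exact susl_union hK₀
          ((borel_mem_S hK₀ MeasurableSet.univ).1 Bᶜ hB.compl)
          ((borel_mem_S hK₀ hS).2 univ MeasurableSet.univ)
    · constructor
      · rw [Set.empty_inter]
        exact PavJ.susl ⟨pav_empty, Set.empty_subset _⟩
      · rw [Set.compl_empty, Set.univ_inter]
        exact PavJ.susl ⟨Pav.rect MeasurableSet.univ hK₀, Set.Subset.rfl⟩
    · intro t _ ih
      exact ⟨ih.2, by rw [compl_compl]; exact ih.1⟩
    · intro s _ ih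
      constructor
      · rw [Set.iUnion_inter]
        exact susl_iUnion hK₀ fun k => (ih k).1
      · rw [Set.compl_iUnion, Set.iInter_inter]
        exact susl_iInter hK₀ fun k => (ih k).2
  exact (main A hA').1

end ProjCap
end L8


/-- **The projection capacity.** For a probability space `(Ω, F, P)` and a locally compact
Polish space `E`, the set function `I_Ω(A) := P*(π_Ω(A))` (here `P` applied to an arbitrary
set is precisely the outer measure `P*`) is a capacity relative to the paving `Ip` of finite
unions of measurable rectangles with compact `E`-side, and every set `A` in the product
σ-field admits an increasing approximating sequence from `Iδ` as in Choquet's theorem. -/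
theorem projection_capacity
    {Ω E : Type*} [MeasurableSpace Ω]
    [TopologicalSpace E] [PolishSpace E] [LocallyCompactSpace E]
    [MeasurableSpace E] [BorelSpace E]
    (P : Measure Ω) [IsProbabilityMeasure P]
    (Ip : Set (Set (Ω × E)))
    (hIp : Ip = {S | ∃ (n : ℕ) (B : Fin n → Set Ω) (K : Fin n → Set E),
      (∀ i, MeasurableSet (B i)) ∧ (∀ i, IsCompact (K i)) ∧ S = ⋃ i, B i ×ˢ K i})
    (Iδ : Set (Set (Ω × E)))
    (hIδ : Iδ = {S | ∃ f : ℕ → Set (Ω × E), (∀ n, f n ∈ Ip) ∧ S = ⋂ n, f n}) :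
    -- (1) `I_Ω` is an `(F ⊗_p K)`-capacity:
    ((∀ A B : Set (Ω × E), A ⊆ B → P (Prod.fst '' A) ≤ P (Prod.fst '' B)) ∧
     (∀ A : ℕ → Set (Ω × E), Monotone A →
        P (Prod.fst '' ⋃ n, A n) = ⨆ n, P (Prod.fst '' A n)) ∧
     (∀ A : ℕ → Set (Ω × E), (∀ n, A n ∈ Ip) → Antitone A →
        P (Prod.fst '' ⋂ n, A n) = ⨅ n, P (Prod.fst '' A n))) ∧
    -- (2) inner approximation of product-measurable sets:
    (∀ A : Set (Ω × E), MeasurableSet A →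
      ∃ L : ℕ → Set (Ω × E), Monotone L ∧ ∀ n : ℕ,
        L n ∈ Iδ ∧ L n ⊆ A ∧ MeasurableSet (Prod.fst '' L n) ∧
        P (Prod.fst '' L n) ≤ P (Prod.fst '' A) ∧
        P (Prod.fst '' A) ≤ P (Prod.fst '' L n) + ((n : ℝ≥0∞) + 1)⁻¹) := by
  have hPavIp : ∀ S : Set (Ω × E), S ∈ Ip ↔ ProjCap.Pav S := by
    intro S; rw [hIp]; rfl
  have hPavDIδ : ∀ S : Set (Ω × E), S ∈ Iδ ↔ ProjCap.PavD S := by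
    intro S
    rw [hIδ]
    constructor
    · rintro ⟨f, hf, rfl⟩
      exact ⟨f, fun n => (hPavIp (f n)).1 (hf n), rfl⟩
    · rintro ⟨f, hf, rfl⟩
      exact ⟨f, fun n => (hPavIp (f n)).2 (hf n), rfl⟩
  refine ⟨⟨fun A B h => ProjCap.capacity_mono P h,
    fun A h => ProjCap.capacity_iUnion P h,
    fun A hIpA hanti => ProjCap.capacity_iInter_pav P
      (fun n => (hPavIp (A n)).1 (hIpA n)) hanti⟩, ?_⟩
  intro A hA
  -- approximation for a fixed accuracy
  have happrox : ∀ ε : ℝ≥0∞, ε ≠ 0 → ∃ L' : Set (Ω × E), ProjCap.PavD L' ∧ L' ⊆ A ∧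
      P (Prod.fst '' A) ≤ P (Prod.fst '' L') + ε := by
    intro ε hε
    set δ : ℝ≥0∞ := ε * 2⁻¹ with hδ
    have hδ0 : δ ≠ 0 := mul_ne_zero hε (by norm_num)
    -- exhaust by compact strips
    have hcov : A = ⋃ m, A ∩ ((univ : Set Ω) ×ˢ compactCovering E m) := by
      rw [← Set.inter_iUnion]
      rw [← Set.prod_iUnion, iUnion_compactCovering]
      simp
    have hmono : Monotone fun m => A ∩ ((univ : Set Ω) ×ˢ compactCovering E m) :=
      fun m m' h => Set.inter_subset_inter_right _
        (Set.prod_mono Set.Subset.rfl (compactCovering_subset E h))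
    have hsup : P (Prod.fst '' A)
        = ⨆ m, P (Prod.fst '' (A ∩ ((univ : Set Ω) ×ˢ compactCovering E m))) := by
      conv_lhs => rw [hcov]
      exact ProjCap.capacity_iUnion P hmono
    obtain ⟨m, hm⟩ := ProjCap.exists_le_add (measure_ne_top _ _) hsup hδ0
    -- capacitability
    obtain ⟨L', hL'pav, hL'sub, hL'est⟩ := ProjCap.susl_capacitable P
      (ProjCap.measurable_susl (isCompact_compactCovering E m) hA) hδ0
    refine ⟨L', hL'pav, hL'sub.trans Set.inter_subset_left, ?_⟩
    calc P (Prod.fst '' A)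
        ≤ P (Prod.fst '' (A ∩ ((univ : Set Ω) ×ˢ compactCovering E m))) + δ := hm
      _ ≤ (P (Prod.fst '' L') + δ) + δ := add_le_add_left hL'est δ
      _ = P (Prod.fst '' L') + (δ + δ) := by ring
      _ = P (Prod.fst '' L') + ε := by
          rw [hδ, ← mul_add, ENNReal.inv_two_add_inv_two, mul_one]
  -- choose approximations for each accuracy and make them monotone
  have hεn : ∀ n : ℕ, ((n : ℝ≥0∞) + 1)⁻¹ ≠ 0 :=
    fun n => ENNReal.inv_ne_zero.2 (by simp [ENNReal.add_eq_top])
  choose L' hL'pav hL'sub hL'est using fun n : ℕ => happrox ((n : ℝ≥0∞) + 1)⁻¹ (hεn n)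
  set L : ℕ → Set (Ω × E) := fun n => Nat.rec (L' 0) (fun k acc => acc ∪ L' (k + 1)) n with hL
  have hLsucc : ∀ n, L (n + 1) = L n ∪ L' (n + 1) := fun n => rfl
  have hLmono : Monotone L := by
    apply monotone_nat_of_le_succ
    intro n
    rw [hLsucc]
    exact Set.subset_union_left
  have hL'L : ∀ n, L' n ⊆ L n := by
    intro n
    cases n with
    | zero => exact Set.Subset.rfl
    | succ n => rw [hLsucc]; exact Set.subset_union_right
  have hLpav : ∀ n, ProjCap.PavD (L n) := by
    intro n
    induction n with
    | zero => exact hL'pav 0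
    | succ n ih => rw [hLsucc]; exact ih.union (hL'pav (n + 1))
  have hLsub : ∀ n, L n ⊆ A := by
    intro n
    induction n with
    | zero => exact hL'sub 0
    | succ n ih => rw [hLsucc]; exact Set.union_subset ih (hL'sub (n + 1))
  refine ⟨L, hLmono, fun n => ⟨(hPavDIδ (L n)).2 (hLpav n), hLsub n,
    (hLpav n).measurableSet_proj, ProjCap.capacity_mono P (hLsub n), ?_⟩⟩
  exact (hL'est n).trans (add_le_add_left (ProjCap.capacity_mono P (hL'L n)) _)
end

section
/- (Measurable projection theorem.) Let (Ω, F, P) be a probability space and E a locally compact Polish space. For every A in the product σ-field F ⊗ B(E), the projection π_Ω(A) differs from an F-measurable set by a P-negligible set: there exists G ∈ F with G ⊆ π_Ω(A) and P*(π_Ω(A)) = P(G). In particular, if F is P-complete, then π_Ω(A) ∈ F. -/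
open MeasureTheory Set ENNReal

lemma exists_cantor_rep {Ω E : Type*} [MeasurableSpace Ω] [MeasurableSpace E]
    {A : Set (Ω × E)} (hA : MeasurableSet A) :
    ∃ (g : Ω → (ℕ → Bool)) (B : Set ((ℕ → Bool) × E)), Measurable g ∧ MeasurableSet B ∧
      A = Prod.map g id ⁻¹' B := by
  classical
  rw [← generateFrom_prod] at hA
  refine MeasurableSpace.generateFrom_induction _
    (fun A _ => ∃ (g : Ω → (ℕ → Bool)) (B : Set ((ℕ → Bool) × E)), Measurable g ∧
      MeasurableSet B ∧ A = Prod.map g id ⁻¹' B) ?_ ?_ ?_ ?_ A hA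
  · rintro - ⟨s, hs, t, ht, rfl⟩ -
    refine ⟨fun ω _ => if ω ∈ s then true else false, ((fun c : ℕ → Bool => c 0) ⁻¹' {true}) ×ˢ t,
      ?_, ?_, ?_⟩
    · exact measurable_pi_lambda _ (fun _ => Measurable.ite hs measurable_const measurable_const)
    · exact ((measurable_pi_apply 0) (measurableSet_singleton true)).prod ht
    · ext ⟨ω, x⟩
      by_cases hω : ω ∈ s <;> simp [hω, Prod.map]
  · exact ⟨fun _ _ => true, ∅, measurable_const, MeasurableSet.empty, by simp⟩
  · rintro t - ⟨g, B, hg, hB, rfl⟩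
    exact ⟨g, Bᶜ, hg, hB.compl, by simp⟩
  · intro s hmeas hs
    choose g B hg hB hrep using hs
    refine ⟨fun ω k => g k.unpair.1 ω k.unpair.2,
      ⋃ n, (fun p : (ℕ → Bool) × E => ((fun m => p.1 (Nat.pair n m)), p.2)) ⁻¹' B n, ?_, ?_, ?_⟩
    · exact measurable_pi_lambda _
        (fun k => (measurable_pi_apply k.unpair.2).comp (hg k.unpair.1))
    · refine MeasurableSet.iUnion fun n => (hB n).preimage ?_
      exact (measurable_pi_lambda _
        (fun m => (measurable_pi_apply (Nat.pair n m)).comp measurable_fst)).prodMk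
        measurable_snd
    · rw [preimage_iUnion]
      refine iUnion_congr fun n => ?_
      rw [hrep n]
      ext ⟨ω, x⟩
      simp [Prod.map, Nat.unpair_pair]


/-- Capacitability: an analytic set in a Polish space contains compact subsets of measure
arbitrarily close to its outer measure. -/
lemma analyticSet_exists_isCompact_subset_le_add
    {X : Type*} [TopologicalSpace X] [PolishSpace X] [MeasurableSpace X] [BorelSpace X]
    (μ : Measure X) [IsFiniteMeasure μ] {S : Set X} (hS : AnalyticSet S)
    {ε : ℝ≥0∞} (hε : 0 < ε) :
    ∃ K, IsCompact K ∧ K ⊆ S ∧ μ S ≤ μ K + ε := by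
  classical
  rw [AnalyticSet] at hS
  rcases hS with rfl | ⟨f, hf, rfl⟩
  · exact ⟨∅, isCompact_empty, Subset.rfl, by simp⟩
  letI := TopologicalSpace.upgradeIsCompletelyMetrizable X
  set S := range f with hSdef
  rcases le_or_gt (μ S) ε with hle | hεS
  · exact ⟨∅, isCompact_empty, empty_subset _, by simpa using hle⟩
  set c := μ S with hc
  have hcne : c ≠ ∞ := measure_ne_top μ S
  set t := c - ε with ht
  have htc : t < c := ENNReal.sub_lt_self hcne (hε.trans hεS).ne' hε.ne'
  -- one-step extension
  have step : ∀ (g : ℕ → ℕ) (k : ℕ), t < μ (f '' {x | ∀ i < k, x i ≤ g i}) →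
      ∃ m, t < μ (f '' {x | (∀ i < k, x i ≤ g i) ∧ x k ≤ m}) := by
    intro g k hk
    have hmono : Monotone (fun m => f '' {x | (∀ i < k, x i ≤ g i) ∧ x k ≤ m}) := by
      intro m m' hmm'
      exact image_mono (fun x hx => ⟨hx.1, hx.2.trans hmm'⟩)
    have hU : {x : ℕ → ℕ | ∀ i < k, x i ≤ g i}
        = ⋃ m, {x | (∀ i < k, x i ≤ g i) ∧ x k ≤ m} := by
      ext x
      simp only [mem_iUnion, mem_setOf_eq]
      exact ⟨fun h => ⟨x k, h, le_rfl⟩, fun ⟨m, h, _⟩ => h⟩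
    rw [hU, image_iUnion, hmono.measure_iUnion] at hk
    exact lt_iSup_iff.mp hk
  choose! m hm using step
  -- recursively choose bounds
  set F : ℕ → (ℕ → ℕ) := fun k => Nat.rec (fun _ => 0)
    (fun k Fk => Function.update Fk k (m Fk k)) k with hF
  have hFsucc : ∀ k, F (k + 1) = Function.update (F k) k (m (F k) k) := fun k => rfl
  have hagree : ∀ k i, i < k → F k i = F (i + 1) i := by
    intro k
    induction k with
    | zero => intro i hi; omega
    | succ k ih =>
      intro i hi
      rcases Nat.lt_succ_iff_lt_or_eq.mp hi with hik | rfl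
      · rw [hFsucc, Function.update_of_ne (by omega), ih i hik]
      · rfl
  set n : ℕ → ℕ := fun i => F (i + 1) i with hn
  set B : ℕ → Set (ℕ → ℕ) := fun k => {x | ∀ i < k, x i ≤ n i} with hB
  have hBF : ∀ k, B k = {x | ∀ i < k, x i ≤ F k i} := by
    intro k
    ext x
    simp only [hB, mem_setOf_eq]
    constructor
    · intro h i hik
      have := h i hik
      rw [hn] at this
      simp only at this
      rwa [← hagree k i hik] at this
    · intro h i hik
      show x i ≤ F (i + 1) i
      rw [← hagree k i hik]
      exact h i hik
  have hinv : ∀ k, t < μ (f '' B k) := by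
    intro k
    induction k with
    | zero =>
      have : B 0 = univ := by ext x; simp [hB]
      rw [this, image_univ]
      exact htc
    | succ k ih =>
      have hk' : t < μ (f '' {x | ∀ i < k, x i ≤ F k i}) := by rwa [hBF k] at ih
      have := hm (F k) k hk'
      have hset : B (k + 1) = {x | (∀ i < k, x i ≤ F k i) ∧ x k ≤ m (F k) k} := by
        rw [hBF (k + 1)]
        ext x
        simp only [mem_setOf_eq]
        constructor
        · intro h
          refine ⟨fun i hik => ?_, ?_⟩
          · have := h i (by omega); rwa [hFsucc, Function.update_of_ne (by omega)] at this
          · have := h k (by omega); rwa [hFsucc, Function.update_self] at this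
        · intro ⟨h1, h2⟩ i hik
          rcases Nat.lt_succ_iff_lt_or_eq.mp hik with hik' | rfl
          · rw [hFsucc, Function.update_of_ne (by omega)]; exact h1 i hik'
          · rwa [hFsucc, Function.update_self]
      rw [hset]
      exact this
  -- the compact set
  set C : Set (ℕ → ℕ) := univ.pi (fun i => Iic (n i)) with hC
  have hCcomp : IsCompact C := isCompact_univ_pi (fun i => (finite_Iic (n i)).isCompact)
  refine ⟨f '' C, hCcomp.image hf, image_subset_range f C, ?_⟩
  -- the key inclusion
  have hincl : (⋂ k, closure (f '' B k)) ⊆ f '' C := by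
    intro y hy
    simp only [mem_iInter] at hy
    -- choose approximating points
    have hx : ∀ k : ℕ, ∃ x ∈ B k, dist y (f x) < 1 / (k + 1) := by
      intro k
      have := hy k
      rw [Metric.mem_closure_iff] at this
      obtain ⟨b, ⟨x, hxB, rfl⟩, hb⟩ := this (1 / (k + 1)) (by positivity)
      exact ⟨x, hxB, hb⟩
    choose x hxB hxd using hx
    -- all points lie in a compact set
    set N : ℕ → ℕ := fun i => max (n i) (Finset.sup (Finset.range (i + 1)) (fun k => x k i))
      with hN
    have hxM : ∀ k, x k ∈ univ.pi (fun i => Iic (N i)) := by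
      intro k
      intro i _
      simp only [mem_Iic, hN]
      rcases le_or_gt k i with hki | hik
      · exact le_max_of_le_right (Finset.le_sup (f := fun k => x k i) (Finset.mem_range.mpr (Nat.lt_succ_of_le hki)))
      · exact le_max_of_le_left (hxB k i hik)
    obtain ⟨a, haM, φ, hφ, hconv⟩ :=
      (isCompact_univ_pi (fun i => (finite_Iic (N i)).isCompact)).tendsto_subseq hxM
    -- the limit lies in C
    have haC : a ∈ C := by
      intro i _
      have hcoord : Filter.Tendsto (fun j => x (φ j) i) Filter.atTop (nhds (a i)) :=
        (continuous_apply i).continuousAt.tendsto.comp hconv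
      have hev : ∀ᶠ j in Filter.atTop, x (φ j) i ∈ Iic (n i) := by
        filter_upwards [Filter.eventually_ge_atTop (i + 1)] with j hj
        have hφj : i < φ j := lt_of_lt_of_le (Nat.lt_of_succ_le hj) (hφ.id_le j)
        exact hxB (φ j) i hφj
      exact (isClosed_Iic).mem_of_tendsto hcoord hev
    -- f a = y
    have hfy : Filter.Tendsto (fun k => f (x k)) Filter.atTop (nhds y) := by
      rw [Metric.tendsto_atTop]
      intro δ hδ
      obtain ⟨Nδ, hNδ⟩ := exists_nat_one_div_lt hδ
      refine ⟨Nδ, fun k hk => ?_⟩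
      have h1 : dist (f (x k)) y = dist y (f (x k)) := dist_comm _ _
      rw [h1]
      calc dist y (f (x k)) < 1 / (k + 1) := hxd k
        _ ≤ 1 / (Nδ + 1) := by
            apply one_div_le_one_div_of_le (by positivity)
            exact_mod_cast by omega
        _ < δ := hNδ
    have hfa : Filter.Tendsto (fun j => f (x (φ j))) Filter.atTop (nhds (f a)) :=
      (hf.continuousAt.tendsto).comp hconv
    have hfy' : Filter.Tendsto (fun j => f (x (φ j))) Filter.atTop (nhds y) :=
      hfy.comp (hφ.tendsto_atTop)
    have : f a = y := tendsto_nhds_unique hfa hfy'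
    exact ⟨a, haC, this⟩
  -- measure estimate
  have hmeas : ∀ k, MeasurableSet (closure (f '' B k)) :=
    fun k => isClosed_closure.measurableSet
  have hanti : Antitone (fun k => closure (f '' B k)) := by
    intro k k' hkk'
    apply closure_mono
    apply image_mono
    intro x hx i hik
    exact hx i (lt_of_lt_of_le hik hkk')
  have hD : t ≤ μ (⋂ k, closure (f '' B k)) := by
    rw [Directed.measure_iInter (fun k => (hmeas k).nullMeasurableSet)
      (hanti.directed_ge) ⟨0, measure_ne_top _ _⟩]
    exact le_iInf fun k => le_of_lt (lt_of_lt_of_le (hinv k)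
      (measure_mono subset_closure))
  have hKt : t ≤ μ (f '' C) := le_trans hD (measure_mono hincl)
  calc μ S = c := rfl
    _ = t + ε := by rw [ht, tsub_add_cancel_of_le hεS.le]
    _ ≤ μ (f '' C) + ε := add_le_add_left hKt ε


lemma analyticSet_exists_measurable_subset_measure_eq
    {X : Type*} [TopologicalSpace X] [PolishSpace X] [MeasurableSpace X] [BorelSpace X]
    (μ : Measure X) [IsFiniteMeasure μ] {S : Set X} (hS : AnalyticSet S) :
    ∃ G, MeasurableSet G ∧ G ⊆ S ∧ μ S = μ G := by
  have h : ∀ k : ℕ, ∃ K, IsCompact K ∧ K ⊆ S ∧ μ S ≤ μ K + ((k : ℝ≥0∞) + 1)⁻¹ := fun k =>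
    analyticSet_exists_isCompact_subset_le_add μ hS (ENNReal.inv_pos.mpr (by simp))
  choose K hKc hKS hKμ using h
  refine ⟨⋃ k, K k, MeasurableSet.iUnion (fun k => (hKc k).isClosed.measurableSet),
    iUnion_subset hKS, ?_⟩
  refine le_antisymm ?_ (measure_mono (iUnion_subset hKS))
  refine ENNReal.le_of_forall_pos_le_add fun ε hε _ => ?_
  obtain ⟨k, hk⟩ := ENNReal.exists_inv_nat_lt (by exact_mod_cast hε.ne' : (ε : ℝ≥0∞) ≠ 0)
  calc μ S ≤ μ (K k) + ((k : ℝ≥0∞) + 1)⁻¹ := hKμ k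
    _ ≤ μ (⋃ k, K k) + ε := by
        refine add_le_add (measure_mono (subset_iUnion K k)) ?_
        refine le_trans ?_ hk.le
        exact ENNReal.inv_le_inv.mpr (by simp)

/-- **Measurable projection theorem.** For a probability space `(Ω, F, P)` and a locally
compact Polish space `E`, the projection of a product-measurable set differs from a
measurable set by a `P`-negligible set: there is `G ∈ F` with `G ⊆ π_Ω(A)` and
`P*(π_Ω(A)) = P(G)` (here `P` of an arbitrary set is the outer measure `P*`).
In particular `π_Ω(A) ∈ F` whenever `F` is `P`-complete. -/
theorem measurable_projection
    {Ω E : Type*} [MeasurableSpace Ω]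
    [TopologicalSpace E] [PolishSpace E] [LocallyCompactSpace E]
    [MeasurableSpace E] [BorelSpace E]
    (P : Measure Ω) [IsProbabilityMeasure P]
    (A : Set (Ω × E)) (hA : MeasurableSet A) :
    (∃ G : Set Ω, MeasurableSet G ∧ G ⊆ Prod.fst '' A ∧ P (Prod.fst '' A) = P G) ∧
    (P.IsComplete → MeasurableSet (Prod.fst '' A)) := by
  obtain ⟨g, B, hg, hB, rfl⟩ := exists_cantor_rep hA
  have himg : Prod.fst '' (Prod.map g id ⁻¹' B) = g ⁻¹' (Prod.fst '' B) := by
    ext ω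
    constructor
    · rintro ⟨⟨ω', x⟩, hp, rfl⟩
      exact ⟨(g ω', x), hp, rfl⟩
    · rintro ⟨q, hq, hq1⟩
      refine ⟨(ω, q.2), ?_, rfl⟩
      show (g ω, q.2) ∈ B
      rw [← hq1]
      simpa using hq
  set μ := P.map g with hμ
  haveI : IsProbabilityMeasure μ := Measure.isProbabilityMeasure_map hg.aemeasurable
  have hS : AnalyticSet (Prod.fst '' B) := hB.analyticSet_image measurable_fst
  haveI : PolishSpace (ℕ → Bool) := by
    have := (inferInstance : TopologicalSpace.SeparableSpace (ℕ → Bool))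
    have := (inferInstance : TopologicalSpace.IsCompletelyMetrizableSpace (ℕ → Bool))
    infer_instance
  obtain ⟨G₀, hG₀m, hG₀S, hμeq⟩ := analyticSet_exists_measurable_subset_measure_eq μ hS
  set G := g ⁻¹' G₀ with hG
  have hGm : MeasurableSet G := hg hG₀m
  have hsub : G ⊆ Prod.fst '' (Prod.map g id ⁻¹' B) := by
    rw [himg]; exact preimage_mono hG₀S
  have hPeq : P (Prod.fst '' (Prod.map g id ⁻¹' B)) = P G := by
    refine le_antisymm ?_ (measure_mono hsub)
    calc P (Prod.fst '' (Prod.map g id ⁻¹' B)) = P (g ⁻¹' (Prod.fst '' B)) := by rw [himg]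
      _ ≤ μ (Prod.fst '' B) := Measure.le_map_apply hg.aemeasurable _
      _ = μ G₀ := hμeq
      _ = P G := Measure.map_apply hg hG₀m
  refine ⟨⟨G, hGm, hsub, hPeq⟩, fun hc => ?_⟩
  have hdiff : P (Prod.fst '' (Prod.map g id ⁻¹' B) \ G) = 0 := by
    have h1 := measure_inter_add_diff (μ := P) (Prod.fst '' (Prod.map g id ⁻¹' B)) hGm
    rw [inter_eq_self_of_subset_right hsub, hPeq] at h1
    have : P G + P (Prod.fst '' (Prod.map g id ⁻¹' B) \ G) = P G + 0 := by
      rw [add_zero]; exact h1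
    exact (ENNReal.add_right_inj (measure_ne_top P G)).mp this
  have : Prod.fst '' (Prod.map g id ⁻¹' B)
      = G ∪ (Prod.fst '' (Prod.map g id ⁻¹' B) \ G) := (union_diff_cancel hsub).symm
  rw [this]
  exact hGm.union (hc.out _ hdiff)
end

section
/- Let (Ω, F, P) be a complete probability space and E a locally compact Polish space. Let f : Ω × E → ℝ be measurable with respect to F ⊗ B(E) and A ∈ F ⊗ B(E). Then the function g : Ω → ℝ ∪ {−∞, +∞} defined by g(ω) := sup{ f(ω, x) : x ∈ E, (ω, x) ∈ A } (with the convention sup ∅ = −∞) is F-measurable. -/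
open MeasureTheory

open Set Filter Topology MeasurableSpace ENNReal NNReal
open scoped symmDiff



section Capacitability

variable {X : Type*} [TopologicalSpace X] [PolishSpace X]
  [MeasurableSpace X] [BorelSpace X]

/-- Inner regularity by compacts of analytic sets w.r.t. a finite measure
(Choquet capacitability, measure-theoretic case). -/
theorem analyticSet_exists_isCompact_le_measure' {μ : Measure X} [IsFiniteMeasure μ]
    {S : Set X} (hS : AnalyticSet S) {c : ℝ≥0∞} (hc : c < μ S) :
    ∃ K, IsCompact K ∧ K ⊆ S ∧ c ≤ μ K := by
  classical
  rw [MeasureTheory.AnalyticSet] at hS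
  rcases hS with rfl | ⟨f, hfc, rfl⟩
  · simp at hc
  -- the basic truncated sets
  set T : (ℕ → ℕ) → ℕ → Set (ℕ → ℕ) := fun N k => {x | ∀ i < k, x i ≤ N i} with hT
  have hTsucc : ∀ (N : ℕ → ℕ) (k n : ℕ),
      T (Function.update N k n) (k + 1) = {x | (∀ i < k, x i ≤ N i) ∧ x k ≤ n} := by
    intro N k n
    ext x
    simp only [hT, mem_setOf_eq, Nat.lt_succ_iff_lt_or_eq]
    constructor
    · intro h
      refine ⟨fun i hi => ?_, ?_⟩
      · have := h i (Or.inl hi)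
        rwa [Function.update_of_ne hi.ne] at this
      · have := h k (Or.inr rfl)
        rwa [Function.update_self] at this
    · rintro ⟨h1, h2⟩ i (hi | rfl)
      · rw [Function.update_of_ne hi.ne]; exact h1 i hi
      · rwa [Function.update_self]
  -- the key step: extending the choice of bounds
  have step : ∀ (N : ℕ → ℕ) (k : ℕ), c < μ (f '' T N k) →
      ∃ n, c < μ (f '' T (Function.update N k n) (k + 1)) := by
    intro N k hk
    have hmono : Monotone fun n => f '' T (Function.update N k n) (k + 1) := by
      intro a b hab
      apply image_mono
      rw [hTsucc, hTsucc]
      exact fun x hx => ⟨hx.1, hx.2.trans hab⟩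
    have hun : (⋃ n, f '' T (Function.update N k n) (k + 1)) = f '' T N k := by
      have huT : (⋃ n, T (Function.update N k n) (k + 1)) = T N k := by
        simp only [hTsucc]
        ext x
        simp only [mem_iUnion, mem_setOf_eq, hT]
        constructor
        · rintro ⟨n, h1, _⟩; exact h1
        · intro h; exact ⟨x k, h, le_rfl⟩
      rw [← image_iUnion, huT]
    have := hmono.measure_iUnion (μ := μ)
    rw [hun] at this
    rw [this] at hk
    exact lt_iSup_iff.1 hk
  -- next-choice function
  set nxt : (ℕ → ℕ) → ℕ → ℕ := fun N k =>
    if h : c < μ (f '' T N k) then (step N k h).choose else 0 with hnxt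
  -- the recursively defined bounds
  set F : ℕ → (ℕ → ℕ) := fun k =>
    Nat.rec (fun _ => 0) (fun k Fk => Function.update Fk k (nxt Fk k)) k with hF
  have hF0 : F 0 = fun _ => 0 := rfl
  have hFsucc : ∀ k, F (k + 1) = Function.update (F k) k (nxt (F k) k) := fun _ => rfl
  have hinv : ∀ k, c < μ (f '' T (F k) k) := by
    intro k
    induction k with
    | zero =>
      have : T (F 0) 0 = univ := by ext x; simp [hT]
      rw [this, image_univ]
      exact hc
    | succ k ih =>
      rw [hFsucc k, hnxt]
      simp only [dif_pos ih]
      exact (step (F k) k ih).choose_spec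
  -- the limit bound function
  set N : ℕ → ℕ := fun i => F (i + 1) i with hN
  have hagree : ∀ m k, k ≤ m → ∀ i < k, F m i = F k i := by
    intro m
    induction m with
    | zero => intro k hk i hik; omega
    | succ m ih =>
      intro k hk i hik
      rcases Nat.lt_succ_iff_lt_or_eq.1 (Nat.lt_succ_of_le hk) with h | rfl
      · rw [hFsucc m, Function.update_of_ne (by omega : i ≠ m)]
        exact ih k (by omega) i hik
      · rfl
  have hNF : ∀ k i, i < k → N i = F k i := by
    intro k i hik
    rw [hN]
    exact (hagree k (i + 1) (by omega) i (by omega)).symm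
  have hTN : ∀ k, T N k = T (F k) k := by
    intro k
    ext x
    simp only [hT, mem_setOf_eq]
    exact ⟨fun h i hi => by rw [← hNF k i hi]; exact h i hi,
      fun h i hi => by rw [hNF k i hi]; exact h i hi⟩
  have hinvN : ∀ k, c < μ (f '' T N k) := fun k => by rw [hTN k]; exact hinv k
  -- the compact set
  set D : Set (ℕ → ℕ) := {x | ∀ i, x i ≤ N i} with hD
  have hDcomp : IsCompact D := by
    have : D = Set.pi univ fun i => Iic (N i) := by
      ext x; simp [hD, Set.pi]
    rw [this]
    exact isCompact_univ_pi fun i => (Set.finite_Iic (N i)).isCompact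
  refine ⟨f '' D, hDcomp.image hfc, image_subset_range f D, ?_⟩
  -- the intersection of closures is inside f '' D
  have hsub : (⋂ k, closure (f '' T N k)) ⊆ f '' D := by
    intro y hy
    letI := TopologicalSpace.upgradeIsCompletelyMetrizable X
    have hxk : ∀ k : ℕ, ∃ x, x ∈ T N k ∧ dist (f x) y < 1 / (k + 1) := by
      intro k
      have hyk : y ∈ closure (f '' T N k) := mem_iInter.1 hy k
      rcases Metric.mem_closure_iff.1 hyk (1 / (k + 1)) (by positivity) with ⟨z, hz, hdz⟩
      rcases hz with ⟨x, hx, rfl⟩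
      exact ⟨x, hx, by rwa [dist_comm]⟩
    choose x hxT hxd using hxk
    set w : ℕ → ℕ → ℕ := fun k i => min (x k i) (N i) with hw
    have hwD : ∀ k, w k ∈ D := fun k i => min_le_right _ _
    obtain ⟨z, hzD, φ, hφ, hzw⟩ := hDcomp.tendsto_subseq hwD
    have hxz : Tendsto (fun j => x (φ j)) atTop (𝓝 z) := by
      rw [tendsto_pi_nhds]
      intro i
      have hev : ∀ᶠ j in atTop, (w ∘ φ) j i = x (φ j) i := by
        filter_upwards [eventually_ge_atTop (i + 1)] with j hj
        have hiφ : i < φ j := lt_of_lt_of_le (by omega : i < i + 1) (hj.trans (hφ.le_apply))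
        have : x (φ j) i ≤ N i := hxT (φ j) i hiφ
        simp [hw, min_eq_left this]
      exact ((tendsto_pi_nhds.1 hzw i).congr' hev)
    have h1 : Tendsto (fun j => f (x (φ j))) atTop (𝓝 (f z)) := (hfc.tendsto z).comp hxz
    have h2 : Tendsto (fun j => f (x (φ j))) atTop (𝓝 y) := by
      rw [tendsto_iff_dist_tendsto_zero]
      refine squeeze_zero (fun j => dist_nonneg) (fun j => ?_)
        tendsto_one_div_add_atTop_nhds_zero_nat
      refine (hxd (φ j)).le.trans ?_
      apply one_div_le_one_div_of_le
      · positivity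
      · have hj : j ≤ φ j := hφ.le_apply
        linarith [(Nat.cast_le (α := ℝ)).2 hj]
    have : y = f z := tendsto_nhds_unique h2 h1
    exact ⟨z, hzD, this.symm⟩
  -- conclude by continuity from above
  have hanti : Antitone fun k => closure (f '' T N k) := by
    intro a b hab
    apply closure_mono
    apply image_mono
    intro x hx i hi
    exact hx i (lt_of_lt_of_le hi hab)
  have hmeas : μ (⋂ k, closure (f '' T N k)) = ⨅ k, μ (closure (f '' T N k)) :=
    Directed.measure_iInter (fun k => (isClosed_closure.measurableSet).nullMeasurableSet)
      (hanti.directed_ge) ⟨0, measure_ne_top μ _⟩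
  calc c ≤ ⨅ k, μ (closure (f '' T N k)) :=
        le_iInf fun k => (hinvN k).le.trans (measure_mono subset_closure)
    _ = μ (⋂ k, closure (f '' T N k)) := hmeas.symm
    _ ≤ μ (f '' D) := measure_mono hsub

end Capacitability

section Universal

variable {X : Type*} [TopologicalSpace X] [PolishSpace X]
  [MeasurableSpace X] [BorelSpace X]

/-- Analytic sets are universally (here: null-)measurable. -/
theorem analyticSet_nullMeasurableSet' {μ : Measure X} [IsFiniteMeasure μ]
    {S : Set X} (hS : AnalyticSet S) : NullMeasurableSet S μ := by
  rcases eq_or_ne (μ S) 0 with h0 | h0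
  · exact NullMeasurableSet.of_null h0
  -- choose compacts approximating from inside
  have hK : ∀ n : ℕ, ∃ K, IsCompact K ∧ K ⊆ S ∧ μ S - (n : ℝ≥0∞)⁻¹ ≤ μ K := by
    intro n
    rcases eq_or_ne ((n : ℝ≥0∞)⁻¹) 0 with hn | hn
    ·
      exact absurd hn (by simp [ENNReal.inv_ne_zero, ENNReal.natCast_ne_top])
    · have hc : μ S - (n : ℝ≥0∞)⁻¹ < μ S :=
        ENNReal.sub_lt_self (measure_ne_top μ S) h0 hn
      exact analyticSet_exists_isCompact_le_measure' hS hc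
  choose K hKc hKS hKμ using hK
  set B : Set X := ⋃ n, K n with hB
  have hBmeas : MeasurableSet B := MeasurableSet.iUnion fun n => (hKc n).measurableSet
  have hBS : B ⊆ S := iUnion_subset hKS
  have hBge : μ S ≤ μ B := by
    refine ENNReal.le_of_forall_pos_le_add fun ε hε hB' => ?_
    obtain ⟨n, hn⟩ := ENNReal.exists_inv_nat_lt (a := (ε : ℝ≥0∞)) (by simpa using hε.ne')
    have h1 : μ S - (n : ℝ≥0∞)⁻¹ ≤ μ B := (hKμ n).trans (measure_mono (subset_iUnion K n))
    have h2 : μ S ≤ μ B + (n : ℝ≥0∞)⁻¹ := tsub_le_iff_right.1 h1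
    exact h2.trans (add_le_add_right hn.le _)
  have hnull : μ (S \ B) = 0 := by
    have hSH : S ⊆ toMeasurable μ S := subset_toMeasurable μ S
    have h1 : S \ B ⊆ toMeasurable μ S \ B := diff_subset_diff_left hSH
    have h2 : μ (toMeasurable μ S \ B) = μ (toMeasurable μ S) - μ B :=
      measure_diff (hBS.trans hSH) hBmeas.nullMeasurableSet (measure_ne_top μ B)
    have h3 : μ (toMeasurable μ S) - μ B = 0 := by
      rw [measure_toMeasurable]
      exact tsub_eq_zero_of_le hBge
    exact le_antisymm (le_trans (measure_mono h1) (by rw [h2, h3])) zero_le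
  have : S = B ∪ (S \ B) := by rw [union_diff_cancel' le_rfl hBS]  -- check
  rw [this]
  exact hBmeas.nullMeasurableSet.union (NullMeasurableSet.of_null hnull)

end Universal


/-- Every set in a product σ-algebra lies in the product of a countably generated
sub-σ-algebra of the first factor with the second factor. -/
theorem exists_seq_measurableSet_prod' {Ω E : Type*} {mΩ : MeasurableSpace Ω}
    {mE : MeasurableSpace E} {A : Set (Ω × E)} (hA : MeasurableSet A) :
    ∃ s : ℕ → Set Ω, (∀ n, MeasurableSet (s n)) ∧
      MeasurableSet[(MeasurableSpace.generateFrom (Set.range s)).prod mE] A := by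
  have hmono : ∀ (R R' : Set (Set Ω)), R ⊆ R' →
      (generateFrom R).prod mE ≤ (generateFrom R').prod mE := by
    intro R R' hRR'
    exact sup_le
      (le_trans (MeasurableSpace.comap_mono (generateFrom_mono hRR')) le_sup_left)
      le_sup_right
  set m' : MeasurableSpace (Ω × E) :=
    { MeasurableSet' := fun B => ∃ s : ℕ → Set Ω, (∀ n, MeasurableSet (s n)) ∧
        MeasurableSet[(MeasurableSpace.generateFrom (Set.range s)).prod mE] B
      measurableSet_empty := ⟨fun _ => ∅, fun _ => MeasurableSet.empty, @MeasurableSet.empty _ ((MeasurableSpace.generateFrom (Set.range fun _ : ℕ => (∅ : Set Ω))).prod mE)⟩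
      measurableSet_compl := by
        rintro B ⟨s, hs, hB⟩
        exact ⟨s, hs, hB.compl⟩
      measurableSet_iUnion := by
        intro g hg
        choose s hs hgs using hg
        refine ⟨fun k => s (Nat.unpair k).1 (Nat.unpair k).2, fun k => hs _ _, ?_⟩
        refine MeasurableSet.iUnion fun n => ?_
        refine hmono (Set.range (s n)) _ ?_ _ (hgs n)
        rintro _ ⟨m, rfl⟩
        exact ⟨Nat.pair n m, by simp [Nat.unpair_pair]⟩ } with hm'
  have hle : mΩ.prod mE ≤ m' := by
    refine sup_le ?_ ?_
    · refine Measurable.comap_le (m₁ := m') (fun u hu => ?_)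
      refine ⟨fun _ => u, fun _ => hu, ?_⟩
      exact @measurable_fst Ω E (MeasurableSpace.generateFrom
        (Set.range fun _ : ℕ => u)) mE u (measurableSet_generateFrom ⟨0, rfl⟩)
    · refine Measurable.comap_le (m₁ := m') (fun v hv => ?_)
      refine ⟨fun _ => (∅ : Set Ω), fun _ => MeasurableSet.empty, ?_⟩
      exact @measurable_snd Ω E (MeasurableSpace.generateFrom
        (Set.range fun _ : ℕ => (∅ : Set Ω))) mE v hv
  exact hle A hA
/-- **Measurable projection theorem.** -/
theorem measurableSet_image_fst_of_complete {Ω E : Type*} [MeasurableSpace Ω]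
    [TopologicalSpace E] [PolishSpace E] [MeasurableSpace E] [BorelSpace E]
    (P : Measure Ω) [IsProbabilityMeasure P] (hP : P.IsComplete)
    {A : Set (Ω × E)} (hA : MeasurableSet A) :
    MeasurableSet (Prod.fst '' A) := by
  classical
  obtain ⟨s, hs, hA'⟩ := exists_seq_measurableSet_prod' hA
  set X : Type _ := ℕ → Bool with hX
  set π : Ω → X := fun ω n => if ω ∈ s n then true else false with hπdef
  have hπ : Measurable π :=
    measurable_pi_lambda _ fun n => Measurable.ite (hs n) measurable_const measurable_const
  have hgen : MeasurableSpace.generateFrom (Set.range s) ≤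
      MeasurableSpace.comap π inferInstance := by
    refine MeasurableSpace.generateFrom_le ?_
    rintro _ ⟨n, rfl⟩
    refine ⟨(fun y : X => y n) ⁻¹' {true},
      measurable_pi_apply n (measurableSet_singleton true), ?_⟩
    ext ω; simp [hπdef]
  have hprod : (MeasurableSpace.generateFrom (Set.range s)).prod ‹MeasurableSpace E› ≤
      MeasurableSpace.comap (Prod.map π id) inferInstance := by
    refine sup_le ?_ ?_
    · calc MeasurableSpace.comap Prod.fst (MeasurableSpace.generateFrom (Set.range s))
          ≤ MeasurableSpace.comap Prod.fst (MeasurableSpace.comap π inferInstance) :=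
            MeasurableSpace.comap_mono hgen
        _ = MeasurableSpace.comap (Prod.map π id)
              (MeasurableSpace.comap Prod.fst inferInstance) := by
            rw [MeasurableSpace.comap_comp, MeasurableSpace.comap_comp]; rfl
        _ ≤ MeasurableSpace.comap (Prod.map π id)
              ((MeasurableSpace.comap Prod.fst (inferInstance : MeasurableSpace X)) ⊔
                (MeasurableSpace.comap Prod.snd (inferInstance : MeasurableSpace E))) :=
            MeasurableSpace.comap_mono le_sup_left
        _ = MeasurableSpace.comap (Prod.map π id) inferInstance := rfl
    · calc MeasurableSpace.comap Prod.snd ‹MeasurableSpace E›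
          = MeasurableSpace.comap (Prod.map π id)
              (MeasurableSpace.comap Prod.snd ‹MeasurableSpace E›) := by
            rw [MeasurableSpace.comap_comp]; rfl
        _ ≤ MeasurableSpace.comap (Prod.map π id)
              ((MeasurableSpace.comap Prod.fst (inferInstance : MeasurableSpace X)) ⊔
                (MeasurableSpace.comap Prod.snd (inferInstance : MeasurableSpace E))) :=
            MeasurableSpace.comap_mono le_sup_right
        _ = MeasurableSpace.comap (Prod.map π id) inferInstance := rfl
  obtain ⟨B, hB, hBA⟩ := hprod A hA'
  have himg : Prod.fst '' A = π ⁻¹' (Prod.fst '' B) := by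
    rw [← hBA]
    ext ω
    constructor
    · rintro ⟨⟨ω', x⟩, hmem, rfl⟩
      exact ⟨(π ω', x), hmem, rfl⟩
    · rintro ⟨⟨y, x⟩, hmem, hy⟩
      refine ⟨(ω, x), ?_, rfl⟩
      show (π ω, x) ∈ B
      have : y = π ω := hy
      rwa [this] at hmem
  haveI : PolishSpace X := by
    letI := PiNat.metricSpaceOfDiscreteUniformity (E := fun _ : ℕ => Bool) (fun _ => rfl)
    infer_instance
  have hana : AnalyticSet (Prod.fst '' B) :=
    (MeasurableSet.analyticSet hB).image_of_continuous continuous_fst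
  haveI : IsProbabilityMeasure (P.map π) := Measure.isProbabilityMeasure_map hπ.aemeasurable
  have hnm : NullMeasurableSet (Prod.fst '' B) (P.map π) := analyticSet_nullMeasurableSet' hana
  set S' : Set X := Prod.fst '' B with hS'
  set t : Set X := toMeasurable (P.map π) S' with ht
  have hae : S' =ᵐ[P.map π] t := (NullMeasurableSet.toMeasurable_ae_eq hnm).symm
  have hsd : (P.map π) (S' ∆ t) = 0 := measure_symmDiff_eq_zero_iff.2 hae
  have hPsd : P (π ⁻¹' (S' ∆ t)) = 0 := by
    have h1 : P (π ⁻¹' toMeasurable (P.map π) (S' ∆ t)) = 0 := by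
      rw [show P (π ⁻¹' toMeasurable (P.map π) (S' ∆ t)) =
          (P.map π) (toMeasurable (P.map π) (S' ∆ t)) from
          (Measure.map_apply hπ (measurableSet_toMeasurable _ _)).symm,
        measure_toMeasurable]
      exact hsd
    exact measure_mono_null (preimage_mono (subset_toMeasurable (P.map π) _)) h1
  have hnm2 : NullMeasurableSet (π ⁻¹' S') P := by
    refine ((hπ (measurableSet_toMeasurable (P.map π) S')).nullMeasurableSet).congr ?_
    rw [← measure_symmDiff_eq_zero_iff]
    rw [symmDiff_comm, ← Set.preimage_symmDiff]
    exact hPsd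
  haveI : P.IsComplete := hP
  rw [himg]
  exact hnm2.measurable_of_complete
/-- **Measurability of the partial supremum.** Let `(Ω, F, P)` be a complete probability
space, `E` a locally compact Polish space, `f` a product-measurable real function and
`A` a product-measurable set.  Then `g(ω) := sup { f(ω,x) : (ω,x) ∈ A }` (with the
convention `sup ∅ = −∞`, whence the `EReal` values) is `F`-measurable. -/
theorem measurable_partial_sup
    {Ω E : Type*} [MeasurableSpace Ω]
    [TopologicalSpace E] [PolishSpace E] [LocallyCompactSpace E]
    [MeasurableSpace E] [BorelSpace E]
    (P : Measure Ω) [IsProbabilityMeasure P] (hP : P.IsComplete)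
    (f : Ω × E → ℝ) (hf : Measurable f)
    (A : Set (Ω × E)) (hA : MeasurableSet A)
    (g : Ω → EReal)
    (hg : ∀ ω, g ω = ⨆ (x : E) (_ : (ω, x) ∈ A), (f (ω, x) : EReal)) :
    Measurable g := by
  apply measurable_of_Ioi
  intro c
  have hfE : Measurable fun p : Ω × E => (f p : EReal) :=
    measurable_coe_real_ereal.comp hf
  have hset : g ⁻¹' Set.Ioi c =
      Prod.fst '' (A ∩ (fun p : Ω × E => (f p : EReal)) ⁻¹' Set.Ioi c) := by
    ext ω
    simp only [Set.mem_preimage, Set.mem_Ioi, hg ω, lt_iSup_iff]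
    constructor
    · rintro ⟨x, hxA, hx⟩
      exact ⟨(ω, x), ⟨hxA, hx⟩, rfl⟩
    · rintro ⟨⟨ω', x⟩, ⟨hxA, hx⟩, rfl⟩
      exact ⟨x, hxA, hx⟩
  rw [hset]
  exact measurableSet_image_fst_of_complete P hP
    (hA.inter (hfE measurableSet_Ioi))
end

section
/- Let (Ω, F, P) be a complete probability space and A ⊆ Ω × ℝ+ a subset measurable with respect to F ⊗ B(ℝ+). Define the debut D_A(ω) := inf{ t ≥ 0 : (ω, t) ∈ A } (with inf ∅ = ∞). Then: (i) { ω : D_A(ω) < ∞ } = π_Ω(A) and D_A is an F-measurable random variable with values in [0, ∞]; (ii) if moreover (F_t)_{t≥0} is a filtration on Ω satisfying the usual conditions (F_0 contains all P-null sets and the filtration is right continuous) and A is progressively measurable (i.e. A ∩ (Ω × [0, t]) ∈ F_t ⊗ B([0, t]) for every t ≥ 0), then D_A is a stopping time: { D_A ≤ t } ∈ F_t for every t. -/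
open MeasureTheory
open scoped ENNReal NNReal

/-- The debut of a subset `A` of `Ω × ℝ⁺`: `D_A(ω) = inf { t ≥ 0 : (ω,t) ∈ A }`,
with values in `[0,∞]` and the convention `inf ∅ = ∞`. -/
noncomputable def debut {Ω : Type*} (A : Set (Ω × ℝ≥0)) (ω : Ω) : ℝ≥0∞ :=
  ⨅ (t : ℝ≥0) (_ : (ω, t) ∈ A), (t : ℝ≥0∞)

namespace DebutProof

open MeasureTheory Set

/-- prefix of length `n` of a branch `σ`. -/
def pre (σ : ℕ → ℕ) (n : ℕ) : List ℕ := (List.range n).map σ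

lemma pre_length (σ : ℕ → ℕ) (n : ℕ) : (pre σ n).length = n := by
  simp [pre]

lemma pre_cons (σ : ℕ → ℕ) (n : ℕ) :
    pre σ (n + 1) = σ 0 :: pre (σ ∘ Nat.succ) n := by
  simp [pre, List.range_succ_eq_map, List.map_map]

lemma pre_take (σ : ℕ → ℕ) {k n : ℕ} (h : k ≤ n) :
    (pre σ n).take k = pre σ k := by
  simp [pre, ← List.map_take, List.take_range, Nat.min_eq_left h]

lemma pre_congr {σ τ : ℕ → ℕ} {n : ℕ} (h : ∀ k < n, σ k = τ k) :
    pre σ n = pre τ n := by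
  unfold pre
  exact List.map_congr_left (fun a ha => h a (List.mem_range.mp ha))

lemma pre_getD (σ : ℕ → ℕ) {n p : ℕ} (h : p < n) :
    (pre σ n).getD p 0 = σ p := by
  rw [List.getD_eq_getElem _ _ (by simpa [pre_length] using h)]
  simp [pre]

/-- The result of a Suslin scheme. -/
def SusK {X : Type*} (κ : List ℕ → Set X) : Set X :=
  ⋃ σ : ℕ → ℕ, ⋂ n : ℕ, κ (pre σ (n + 1))

/-- `A` is obtained by the Suslin operation from the paving `E`. -/
def Sus {X : Type*} (E : Set X → Prop) (A : Set X) : Prop :=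
  ∃ κ : List ℕ → Set X, (∀ l, l ≠ [] → E (κ l)) ∧ A = SusK κ

variable {X : Type*} {E : Set X → Prop}

lemma mem_SusK {κ : List ℕ → Set X} {x : X} :
    x ∈ SusK κ ↔ ∃ σ : ℕ → ℕ, ∀ n, x ∈ κ (pre σ (n + 1)) := by
  simp [SusK]

lemma sus_of_mem {A : Set X} (hA : E A) : Sus E A := by
  refine ⟨fun _ => A, fun l _ => hA, ?_⟩
  simp [SusK, iInter_const, iUnion_const]

lemma sus_iUnion {A : ℕ → Set X} (hA : ∀ i, Sus E (A i)) : Sus E (⋃ i, A i) := by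
  choose κ hκ hAeq using hA
  refine ⟨fun l => match l with
    | [] => ∅
    | a :: t => κ (Nat.unpair a).1 ((Nat.unpair a).2 :: t), ?_, ?_⟩
  · rintro (_ | ⟨a, t⟩) h
    · exact absurd rfl h
    · exact hκ _ _ (by simp)
  · ext x
    simp only [mem_iUnion]
    constructor
    · rintro ⟨i, hx⟩
      rw [hAeq i] at hx
      obtain ⟨τ, hτ⟩ := mem_SusK.mp hx
      refine mem_SusK.mpr ⟨fun k => if k = 0 then Nat.pair i (τ 0) else τ k, fun n => ?_⟩
      rw [pre_cons]
      have : pre ((fun k => if k = 0 then Nat.pair i (τ 0) else τ k) ∘ Nat.succ) n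
          = pre (τ ∘ Nat.succ) n := pre_congr (fun k _ => by simp)
      simp only [if_pos rfl, this]
      show x ∈ κ (Nat.unpair (Nat.pair i (τ 0))).1
        ((Nat.unpair (Nat.pair i (τ 0))).2 :: pre (τ ∘ Nat.succ) n)
      rw [Nat.unpair_pair]
      rw [← pre_cons]
      exact hτ n
    · intro hx
      obtain ⟨σ, hσ⟩ := mem_SusK.mp hx
      refine ⟨(Nat.unpair (σ 0)).1, ?_⟩
      rw [hAeq]
      refine mem_SusK.mpr ⟨fun k => if k = 0 then (Nat.unpair (σ 0)).2 else σ k, fun n => ?_⟩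
      have h1 := hσ n
      rw [pre_cons] at h1
      rw [pre_cons]
      have hc : pre ((fun k => if k = 0 then (Nat.unpair (σ 0)).2 else σ k) ∘ Nat.succ) n
          = pre (σ ∘ Nat.succ) n := pre_congr (fun k _ => by simp)
      simp only [if_pos rfl, hc]
      exact h1

lemma sus_union {A B : Set X} (hA : Sus E A) (hB : Sus E B) : Sus E (A ∪ B) := by
  have : A ∪ B = ⋃ i : ℕ, (if i = 0 then A else B) := by
    ext x; simp only [mem_union, mem_iUnion]
    constructor
    · rintro (h | h); exacts [⟨0, by simpa⟩, ⟨1, by simpa⟩]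
    · rintro ⟨i, h⟩; split at h; exacts [Or.inl h, Or.inr h]
  rw [this]
  exact sus_iUnion (fun i => by split <;> assumption)



def cnt (i n : ℕ) : ℕ := ((Finset.range n).filter (fun p => (Nat.unpair p).1 = i)).card

lemma pair_strictMono (i : ℕ) : StrictMono (Nat.pair i) :=
  fun _ _ h => Nat.pair_lt_pair_right i h

lemma lt_pair_succ (i k : ℕ) : i < Nat.pair i (k + 1) := by
  unfold Nat.pair
  split
  · have h1 : 0 < (k+1) * (k+1) := Nat.mul_pos (Nat.succ_pos k) (Nat.succ_pos k)
    omega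
  · omega

lemma pair_pos (i k : ℕ) : 0 < Nat.pair i (k + 1) :=
  Nat.lt_of_le_of_lt (Nat.zero_le i) (lt_pair_succ i k)

lemma key_of_eq {i n : ℕ}
    (hl : (List.range n).filter (fun p => decide ((Nat.unpair p).1 = i))
        = (List.range (cnt i n)).map (Nat.pair i))
    (h : (Nat.unpair n).1 = i) : (Nat.unpair n).2 = cnt i n := by
  set k := (Nat.unpair n).2 with hk
  have hpair : Nat.pair i k = n := by rw [← h, hk, Nat.pair_unpair]
  have hiff : ∀ k', (k' < k ↔ k' < cnt i n) := by
    intro k'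
    constructor
    · intro hk'
      have hlt : Nat.pair i k' < n := by rw [← hpair]; exact pair_strictMono i hk'
      have hmem : Nat.pair i k' ∈ (List.range n).filter
          (fun p => decide ((Nat.unpair p).1 = i)) := by
        rw [List.mem_filter]
        exact ⟨List.mem_range.mpr hlt, by simp [Nat.unpair_pair]⟩
      rw [hl] at hmem
      obtain ⟨k'', hk'', heq⟩ := List.mem_map.mp hmem
      rwa [← (pair_strictMono i).injective heq, ← List.mem_range]
    · intro hk'
      have hmem : Nat.pair i k' ∈ (List.range (cnt i n)).map (Nat.pair i) :=
        List.mem_map.mpr ⟨k', List.mem_range.mpr hk', rfl⟩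
      rw [← hl, List.mem_filter] at hmem
      have : Nat.pair i k' < n := List.mem_range.mp hmem.1
      rw [← hpair] at this
      exact (pair_strictMono i).lt_iff_lt.mp this
  rcases lt_trichotomy k (cnt i n) with h1 | h1 | h1
  · exact absurd ((hiff k).mpr h1) (lt_irrefl k)
  · exact h1
  · exact absurd ((hiff (cnt i n)).mp h1) (lt_irrefl _)

lemma filter_range_eq (i n : ℕ) :
    (List.range n).filter (fun p => decide ((Nat.unpair p).1 = i))
      = (List.range (cnt i n)).map (Nat.pair i) := by
  induction n with
  | zero => simp [cnt]
  | succ n ih =>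
    have hcnt : cnt i (n+1) = cnt i n + (if (Nat.unpair n).1 = i then 1 else 0) := by
      unfold cnt
      rw [Finset.range_add_one, Finset.filter_insert]
      split
      · rw [Finset.card_insert_of_notMem (by simp)]
      · simp
    rw [List.range_succ, List.filter_append, ih]
    by_cases h : (Nat.unpair n).1 = i
    · have hkey : (Nat.unpair n).2 = cnt i n := key_of_eq ih h
      have hn : Nat.pair i (cnt i n) = n := by rw [← hkey, ← h, Nat.pair_unpair]
      rw [hcnt, if_pos h]
      rw [List.range_succ, List.map_append]
      simp [h, hn]
    · rw [hcnt, if_neg h]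
      simp [h]

lemma key {i n : ℕ} (h : (Nat.unpair n).1 = i) : (Nat.unpair n).2 = cnt i n :=
  key_of_eq (filter_range_eq i n) h

lemma cnt_pair (i m : ℕ) : cnt i (Nat.pair i m) = m := by
  have := key (i := i) (n := Nat.pair i m) (by simp [Nat.unpair_pair])
  simpa [Nat.unpair_pair] using this.symm

lemma pair_lt_of_lt_cnt {i k n : ℕ} (h : k < cnt i n) : Nat.pair i k < n := by
  have hmem : Nat.pair i k ∈ (List.range n).filter
      (fun p => decide ((Nat.unpair p).1 = i)) := by
    rw [filter_range_eq]
    exact List.mem_map.mpr ⟨k, List.mem_range.mpr h, rfl⟩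
  exact List.mem_range.mp (List.mem_filter.mp hmem).1

lemma one_le_cnt_zero {n : ℕ} (h : 0 < n) : 0 < cnt 0 n := by
  unfold cnt
  rw [Finset.card_pos]
  exact ⟨0, by simp [h, Nat.unpair_zero]⟩

/-- extraction of row `i` from a list. -/
def ext (i : ℕ) (l : List ℕ) : List ℕ :=
  ((List.range l.length).filter (fun p => decide ((Nat.unpair p).1 = i))).map (fun p => l.getD p 0)

lemma ext_length (i : ℕ) (l : List ℕ) : (ext i l).length = cnt i l.length := by
  rw [ext, filter_range_eq]; simp

lemma ext_pre (i : ℕ) (σ : ℕ → ℕ) (n : ℕ) :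
    ext i (pre σ n) = pre (fun k => σ (Nat.pair i k)) (cnt i n) := by
  rw [ext, pre_length, filter_range_eq, List.map_map]
  unfold pre
  refine List.map_congr_left (fun k hk => ?_)
  have hk' : Nat.pair i k < n := pair_lt_of_lt_cnt (List.mem_range.mp hk)
  show (pre σ n).getD (Nat.pair i k) 0 = σ (Nat.pair i k)
  exact pre_getD σ hk'


open Set

variable {X : Type*} {E : Set X → Prop}

lemma E_biInter_finset (hE : ∀ ⦃a b : Set X⦄, E a → E b → E (a ∩ b))
    {ι : Type*} {s : Finset ι} (hne : s.Nonempty) {f : ι → Set X}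
    (hf : ∀ i ∈ s, E (f i)) : E (⋂ i ∈ s, f i) := by
  classical
  induction s using Finset.induction with
  | empty => exact absurd hne (by simp)
  | @insert a s ha ih =>
    rcases s.eq_empty_or_nonempty with rfl | hs
    · simpa using hf a (Finset.mem_insert_self a ∅)
    · rw [Finset.set_biInter_insert]
      exact hE (hf a (Finset.mem_insert_self a s))
        (ih hs (fun i hi => hf i (Finset.mem_insert_of_mem hi)))

lemma sus_iInter (hE : ∀ ⦃a b : Set X⦄, E a → E b → E (a ∩ b))
    {A : ℕ → Set X} (hA : ∀ i, Sus E (A i)) : Sus E (⋂ i, A i) := by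
  classical
  choose κ hκ hAeq using hA
  set S : List ℕ → Finset ℕ :=
    fun l => (Finset.range l.length).filter (fun i => ext i l ≠ []) with hS
  refine ⟨fun l => ⋂ i ∈ S l, κ i (ext i l), ?_, ?_⟩
  · intro l hl
    have hlen : 0 < l.length := List.length_pos_iff.mpr hl
    have h0 : 0 ∈ S l := by
      rw [hS, Finset.mem_filter]
      refine ⟨Finset.mem_range.mpr hlen, ?_⟩
      have := ext_length 0 l
      have hc := one_le_cnt_zero hlen
      intro hemp
      rw [hemp] at this
      simp at this
      omega
    refine E_biInter_finset hE ⟨0, h0⟩ (fun i hi => ?_)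
    rw [hS, Finset.mem_filter] at hi
    exact hκ i _ hi.2
  · ext x
    simp only [mem_iInter]
    constructor
    · intro hx
      choose τ hτ using fun i => mem_SusK.mp ((hAeq i) ▸ hx i)
      refine mem_SusK.mpr ⟨fun p => τ (Nat.unpair p).1 (Nat.unpair p).2, fun n => ?_⟩
      refine mem_iInter.mpr (fun i => mem_iInter.mpr (fun hi => ?_))
      rw [hS, Finset.mem_filter] at hi
      have hc : 0 < cnt i (n + 1) := by
        have hl := ext_length i (pre (fun p => τ (Nat.unpair p).1 (Nat.unpair p).2) (n+1))
        rw [pre_length] at hl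
        rcases Nat.eq_zero_or_pos (cnt i (n+1)) with h0 | h0
        · rw [h0] at hl
          exact absurd (List.length_eq_zero_iff.mp hl) hi.2
        · exact h0
      rw [ext_pre]
      have hpre : pre (fun k => (fun p => τ (Nat.unpair p).1 (Nat.unpair p).2) (Nat.pair i k))
          (cnt i (n+1)) = pre (τ i) (cnt i (n+1)) :=
        pre_congr (fun k _ => by simp [Nat.unpair_pair])
      rw [hpre]
      have heq : cnt i (n+1) - 1 + 1 = cnt i (n+1) := by omega
      have := hτ i (cnt i (n+1) - 1)
      rwa [heq] at this
    · intro hx i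
      obtain ⟨σ, hσ⟩ := mem_SusK.mp hx
      rw [hAeq i]
      refine mem_SusK.mpr ⟨fun k => σ (Nat.pair i k), fun m => ?_⟩
      set N := Nat.pair i (m + 1) with hN
      have hNpos : 0 < N := pair_pos i m
      have heqN : N - 1 + 1 = N := by omega
      have hsp := hσ (N - 1)
      rw [heqN] at hsp
      have hiS : i ∈ S (pre σ N) := by
        rw [hS, Finset.mem_filter, pre_length]
        constructor
        · exact Finset.mem_range.mpr (lt_pair_succ i m)
        · intro hemp
          have hl := ext_length i (pre σ N)
          rw [hemp, pre_length] at hl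
          simp only [List.length_nil] at hl
          rw [hN, cnt_pair] at hl
          omega
      have := mem_iInter.mp (mem_iInter.mp hsp i) hiS
      rw [ext_pre] at this
      have hcN : cnt i N = m + 1 := by rw [hN, cnt_pair]
      rwa [hcN] at this

/-- monotonization of a scheme: intersection over nonempty prefixes. -/
def mono (κ : List ℕ → Set X) (l : List ℕ) : Set X :=
  ⋂ k ∈ Finset.range l.length, κ (l.take (k + 1))

lemma mono_slots (hE : ∀ ⦃a b : Set X⦄, E a → E b → E (a ∩ b))
    {κ : List ℕ → Set X} (hκ : ∀ l, l ≠ [] → E (κ l)) :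
    ∀ l, l ≠ [] → E (mono κ l) := by
  intro l hl
  have hlen : 0 < l.length := List.length_pos_iff.mpr hl
  refine E_biInter_finset hE ⟨0, Finset.mem_range.mpr hlen⟩ (fun k hk => ?_)
  refine hκ _ (fun hemp => ?_)
  have := congrArg List.length hemp
  simp only [List.length_take, List.length_nil] at this
  omega

lemma mono_take {κ : List ℕ → Set X} {l : List ℕ} {j : ℕ} (h : j ≤ l.length) :
    mono κ l ⊆ mono κ (l.take j) := by
  intro x hx
  refine mem_iInter.mpr (fun k => mem_iInter.mpr (fun hk => ?_))
  rw [Finset.mem_range, List.length_take] at hk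
  have hkj : k < j := lt_of_lt_of_le hk (min_le_left _ _)
  have : (l.take j).take (k + 1) = l.take (k + 1) := by
    rw [List.take_take, Nat.min_eq_left hkj]
  rw [this]
  exact mem_iInter.mp (mem_iInter.mp hx k) (Finset.mem_range.mpr (lt_of_lt_of_le hkj h))

lemma mono_subset {κ : List ℕ → Set X} {l : List ℕ} (hl : l ≠ []) :
    mono κ l ⊆ κ l := by
  intro x hx
  have hlen : 0 < l.length := List.length_pos_iff.mpr hl
  have := mem_iInter.mp (mem_iInter.mp hx (l.length - 1))
    (Finset.mem_range.mpr (by omega))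
  have heq : l.length - 1 + 1 = l.length := by omega
  rwa [heq, List.take_length] at this

lemma SusK_mono_eq {κ : List ℕ → Set X} : SusK (mono κ) = SusK κ := by
  ext x
  rw [mem_SusK, mem_SusK]
  constructor
  · rintro ⟨σ, hσ⟩
    exact ⟨σ, fun n => mono_subset (by simp [pre]) (hσ n)⟩
  · rintro ⟨σ, hσ⟩
    refine ⟨σ, fun n => ?_⟩
    refine mem_iInter.mpr (fun k => mem_iInter.mpr (fun hk => ?_))
    rw [Finset.mem_range, pre_length] at hk
    rw [pre_take σ hk]
    exact hσ k



open MeasureTheory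

section OuterCont

variable {α : Type*} [MeasurableSpace α]

lemma outer_cont (P : Measure α) (S : ℕ → Set α) (hS : Monotone S) :
    P (⋃ n, S n) = ⨆ n, P (S n) :=
  hS.directed_le.measure_iUnion

end OuterCont

lemma isCompact_Iic' (c : ℝ≥0) : IsCompact (Set.Iic c) := by
  rw [← Set.Icc_bot]
  exact isCompact_Icc

lemma sigma_compact_sus {S : Set ℝ≥0} (F : ℕ → Set ℝ≥0) (hF : ∀ n, IsCompact (F n))
    (h : S = ⋃ n, F n) : Sus IsCompact S := by
  rw [h]
  exact sus_iUnion (fun n => sus_of_mem (hF n))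

lemma univ_sus : Sus IsCompact (Set.univ : Set ℝ≥0) := by
  refine sigma_compact_sus (fun n => Set.Iic n) (fun n => isCompact_Iic' n) ?_
  ext t
  simp only [Set.mem_univ, Set.mem_iUnion, Set.mem_Iic, true_iff]
  exact exists_nat_ge t

lemma closed_sus {S : Set ℝ≥0} (hS : IsClosed S) : Sus IsCompact S := by
  refine sigma_compact_sus (fun n => S ∩ Set.Iic n)
    (fun n => (isCompact_Iic' n).inter_left hS) ?_
  ext t
  simp only [Set.mem_iUnion, Set.mem_inter_iff, Set.mem_Iic]
  constructor
  · intro ht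
    obtain ⟨n, hn⟩ := exists_nat_ge t
    exact ⟨n, ht, hn⟩
  · rintro ⟨n, ht, _⟩; exact ht

lemma open_sus {S : Set ℝ≥0} (hS : IsOpen S) : Sus IsCompact S := by
  by_cases hU : S = Set.univ
  · rw [hU]; exact univ_sus
  have hSc : IsClosed Sᶜ := hS.isClosed_compl
  have hScne : Sᶜ.Nonempty := Set.nonempty_compl.mpr hU
  refine sigma_compact_sus
    (fun n => {x : ℝ≥0 | 1 / ((n : ℝ) + 1) ≤ Metric.infDist x Sᶜ} ∩ Set.Iic n)
    (fun n => ?_) ?_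
  · refine (isCompact_Iic' n).inter_left ?_
    exact IsClosed.preimage (Metric.continuous_infDist_pt Sᶜ) isClosed_Ici
  · ext x
    simp only [Set.mem_iUnion, Set.mem_inter_iff, Set.mem_setOf_eq, Set.mem_Iic]
    constructor
    · intro hx
      have hpos : 0 < Metric.infDist x Sᶜ :=
        (hSc.notMem_iff_infDist_pos hScne).mp (by simpa using hx)
      obtain ⟨n₁, hn₁⟩ := exists_nat_one_div_lt hpos
      obtain ⟨n₂, hn₂⟩ := exists_nat_ge x
      refine ⟨max n₁ n₂, ?_, ?_⟩
      · refine le_trans ?_ hn₁.le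
        have : (n₁ : ℝ) ≤ (max n₁ n₂ : ℕ) := by exact_mod_cast le_max_left n₁ n₂
        apply one_div_le_one_div_of_le <;> linarith
      · exact le_trans hn₂ (by exact_mod_cast le_max_right n₁ n₂)
    · rintro ⟨n, hx, _⟩
      by_contra hxS
      have : Metric.infDist x Sᶜ = 0 := Metric.infDist_zero_of_mem (by exact hxS)
      rw [this] at hx
      have : (0 : ℝ) < 1 / ((n : ℝ) + 1) := by positivity
      linarith

/-- every Borel subset of `ℝ≥0` and its complement are Suslin over compacts. -/
lemma borel_sus : ∀ {S : Set ℝ≥0}, MeasurableSet S →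
    Sus IsCompact S ∧ Sus IsCompact Sᶜ := by
  intro S hS
  have hEq : (inferInstance : MeasurableSpace ℝ≥0)
      = MeasurableSpace.generateFrom {s : Set ℝ≥0 | IsOpen s} := BorelSpace.measurable_eq
  have hS' : MeasurableSet[MeasurableSpace.generateFrom {s : Set ℝ≥0 | IsOpen s}] S := by
    rw [← hEq]; exact hS
  refine MeasurableSpace.generateFrom_induction {s : Set ℝ≥0 | IsOpen s}
    (fun s _ => Sus IsCompact s ∧ Sus IsCompact sᶜ) ?_ ?_ ?_ ?_ S hS'
  · intro t ht _
    exact ⟨open_sus ht, closed_sus (IsOpen.isClosed_compl ht)⟩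
  · exact ⟨sus_of_mem isCompact_empty, by rw [Set.compl_empty]; exact univ_sus⟩
  · intro t _ ht
    exact ⟨ht.2, by rw [compl_compl]; exact ht.1⟩
  · intro f _ hf
    constructor
    · exact sus_iUnion (fun n => (hf n).1)
    · rw [Set.compl_iUnion]
      exact sus_iInter (fun a b ha hb => ha.inter hb) (fun n => (hf n).2)


section Rect

variable {Ω : Type*}

/-- the paving of measurable rectangles with compact time-side. -/
def Rect (G : MeasurableSpace Ω) (S : Set (Ω × ℝ≥0)) : Prop :=
  ∃ B K, MeasurableSet[G] B ∧ IsCompact K ∧ S = B ×ˢ K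

variable {G : MeasurableSpace Ω}

lemma rect_empty : Rect G (∅ : Set (Ω × ℝ≥0)) :=
  ⟨∅, ∅, MeasurableSet.empty, isCompact_empty, by simp⟩

lemma rect_inter : ∀ ⦃a b : Set (Ω × ℝ≥0)⦄, Rect G a → Rect G b → Rect G (a ∩ b) := by
  rintro a b ⟨B₁, K₁, hB₁, hK₁, rfl⟩ ⟨B₂, K₂, hB₂, hK₂, rfl⟩
  exact ⟨B₁ ∩ B₂, K₁ ∩ K₂, hB₁.inter hB₂, hK₁.inter hK₂, Set.prod_inter_prod⟩

lemma rect_sect {S : Set (Ω × ℝ≥0)} (hS : Rect G S) (ω : Ω) :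
    IsCompact {t : ℝ≥0 | (ω, t) ∈ S} := by
  obtain ⟨B, K, hB, hK, rfl⟩ := hS
  by_cases h : ω ∈ B
  · have : {t : ℝ≥0 | (ω, t) ∈ B ×ˢ K} = K := by ext t; simp [h]
    rw [this]; exact hK
  · have : {t : ℝ≥0 | (ω, t) ∈ B ×ˢ K} = ∅ := by ext t; simp [h]
    rw [this]; exact isCompact_empty

lemma rect_proj {S : Set (Ω × ℝ≥0)} (hS : Rect G S) :
    MeasurableSet[G] (Prod.fst '' S) := by
  obtain ⟨B, K, hB, hK, rfl⟩ := hS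
  rcases K.eq_empty_or_nonempty with rfl | hKne
  · simp
  · rw [Set.fst_image_prod _ hKne]
    exact hB

lemma sus_prod_left {B : Set Ω} (hB : MeasurableSet[G] B) {S : Set ℝ≥0}
    (hS : Sus IsCompact S) : Sus (Rect G) (B ×ˢ S) := by
  obtain ⟨κ, hκ, rfl⟩ := hS
  refine ⟨fun l => B ×ˢ κ l, fun l hl => ⟨B, κ l, hB, hκ l hl, rfl⟩, ?_⟩
  ext ⟨ω, t⟩
  simp only [Set.mem_prod, mem_SusK]
  constructor
  · rintro ⟨hω, σ, hσ⟩
    exact ⟨σ, fun n => ⟨hω, hσ n⟩⟩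
  · rintro ⟨σ, hσ⟩
    exact ⟨(hσ 0).1, σ, fun n => (hσ n).2⟩

lemma univ_prod_sus : Sus (Rect G) (Set.univ : Set (Ω × ℝ≥0)) := by
  have : (Set.univ : Set (Ω × ℝ≥0)) = Set.univ ×ˢ Set.univ := by simp
  rw [this]
  exact sus_prod_left MeasurableSet.univ univ_sus

/-- every product-measurable set is Suslin over measurable rectangles with compact sides. -/
lemma measurable_sus {A : Set (Ω × ℝ≥0)}
    (hA : MeasurableSet[G.prod inferInstance] A) : Sus (Rect G) A := by
  have hgen : (MeasurableSpace.generateFrom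
      (Set.image2 (· ×ˢ ·) {s : Set Ω | MeasurableSet[G] s} {t : Set ℝ≥0 | MeasurableSet t}))
      = G.prod inferInstance := @generateFrom_prod Ω ℝ≥0 G _
  have hA' : MeasurableSet[MeasurableSpace.generateFrom
      (Set.image2 (· ×ˢ ·) {s : Set Ω | MeasurableSet[G] s} {t : Set ℝ≥0 | MeasurableSet t})] A := by
    rw [hgen]; exact hA
  have main : Sus (Rect G) A ∧ Sus (Rect G) Aᶜ := by
    refine MeasurableSpace.generateFrom_induction _
      (fun s _ => Sus (Rect G) s ∧ Sus (Rect G) sᶜ) ?_ ?_ ?_ ?_ A hA'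
    · rintro t ⟨B, hB, S, hSm, rfl⟩ _
      constructor
      · exact sus_prod_left hB (borel_sus hSm).1
      · rw [Set.compl_prod_eq_union]
        refine sus_union ?_ ?_
        · exact sus_prod_left hB.compl univ_sus
        · exact sus_prod_left MeasurableSet.univ (borel_sus hSm).2
    · refine ⟨sus_of_mem rect_empty, ?_⟩
      rw [Set.compl_empty]
      exact univ_prod_sus
    · intro t _ ht
      exact ⟨ht.2, by rw [compl_compl]; exact ht.1⟩
    · intro f _ hf
      constructor
      · exact sus_iUnion (fun n => (hf n).1)
      · rw [Set.compl_iUnion]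
        exact sus_iInter rect_inter (fun n => (hf n).2)
  exact main.1

end Rect


section Capacity

open MeasureTheory

variable {X : Type*}

/-- truncated Suslin kernel result: union over branches bounded by `m` below level `n`. -/
def Am (κ : List ℕ → Set X) (m : ℕ → ℕ) (n : ℕ) : Set X :=
  ⋃ σ ∈ {σ : ℕ → ℕ | ∀ k < n, σ k ≤ m k}, ⋂ j, κ (pre σ (j + 1))

lemma Am_zero (κ : List ℕ → Set X) (m : ℕ → ℕ) : Am κ m 0 = SusK κ := by
  unfold Am SusK
  ext x
  simp

lemma Am_congr (κ : List ℕ → Set X) {m m' : ℕ → ℕ} {n : ℕ}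
    (h : ∀ k < n, m k = m' k) : Am κ m n = Am κ m' n := by
  unfold Am
  have : {σ : ℕ → ℕ | ∀ k < n, σ k ≤ m k} = {σ : ℕ → ℕ | ∀ k < n, σ k ≤ m' k} := by
    ext σ
    exact ⟨fun hσ k hk => (h k hk) ▸ hσ k hk, fun hσ k hk => (h k hk) ▸ hσ k hk⟩
  rw [this]

lemma Am_union (κ : List ℕ → Set X) (m : ℕ → ℕ) (n : ℕ) :
    Am κ m n = ⋃ v : ℕ, Am κ (Function.update m n v) (n + 1) := by
  unfold Am
  ext x
  simp only [Set.mem_iUnion, Set.mem_setOf_eq]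
  constructor
  · rintro ⟨σ, hσ, hx⟩
    refine ⟨σ n, σ, fun k hk => ?_, hx⟩
    rcases Nat.lt_succ_iff_lt_or_eq.mp hk with hk' | rfl
    · rw [Function.update_of_ne (Nat.ne_of_lt hk')]
      exact hσ k hk'
    · rw [Function.update_self]
  · rintro ⟨v, σ, hσ, hx⟩
    refine ⟨σ, fun k hk => ?_, hx⟩
    have := hσ k (Nat.lt_succ_of_lt hk)
    rwa [Function.update_of_ne (Nat.ne_of_lt hk)] at this

lemma Am_update_mono (κ : List ℕ → Set X) (m : ℕ → ℕ) (n : ℕ) :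
    Monotone (fun v => Am κ (Function.update m n v) (n + 1)) := by
  intro v v' hv x hx
  unfold Am at hx ⊢
  simp only [Set.mem_iUnion, Set.mem_setOf_eq] at hx ⊢
  obtain ⟨σ, hσ, hx⟩ := hx
  refine ⟨σ, fun k hk => ?_, hx⟩
  have := hσ k hk
  by_cases hkn : k = n
  · subst hkn
    rw [Function.update_self] at this
    rw [Function.update_self]
    omega
  · rwa [Function.update_of_ne hkn] at this ⊢

end Capacity


open MeasureTheory

lemma ennreal_exists_le_add {f : ℕ → ℝ≥0∞} {a : ℝ≥0∞} (ha : a = ⨆ v, f v) (hatop : a ≠ ⊤)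
    {δ : ℝ≥0∞} (hδ : δ ≠ 0) : ∃ v, a ≤ f v + δ := by
  rcases le_or_gt a δ with h | h
  · exact ⟨0, le_trans h le_add_self⟩
  · have h0 : a ≠ 0 := (lt_of_le_of_lt (zero_le : 0 ≤ δ) h).ne'
    have hlt : a - δ < a := ENNReal.sub_lt_self hatop h0 hδ
    obtain ⟨v, hv⟩ := lt_iSup_iff.mp (lt_of_lt_of_le hlt (le_of_eq ha))
    refine ⟨v, ?_⟩
    calc a = a - δ + δ := (tsub_add_cancel_of_le h.le).symm
    _ ≤ f v + δ := add_le_add_left hv.le δ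

lemma geom_claim (ε : ℝ≥0∞) : ∀ n, (∑ k ∈ Finset.range n, ε / 2 ^ (k + 1)) + ε / 2 ^ n = ε := by
  intro n
  induction n with
  | zero => simp
  | succ n ih =>
    have h2 : ε / 2 ^ (n + 1) + ε / 2 ^ (n + 1) = ε / 2 ^ n := by
      rw [ENNReal.div_add_div_same, ← two_mul, pow_succ, mul_comm ((2 : ℝ≥0∞) ^ n) 2]
      exact ENNReal.mul_div_mul_left ε (2 ^ n) (by norm_num) (by norm_num)
    rw [Finset.sum_range_succ, add_assoc, h2, ih]

lemma geom_le (ε : ℝ≥0∞) (n : ℕ) : (∑ k ∈ Finset.range n, ε / 2 ^ (k + 1)) ≤ ε := by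
  conv_rhs => rw [← geom_claim ε n]
  exact le_self_add

lemma sus_inner_approx {Ω : Type*} [mΩ : MeasurableSpace Ω] (P : Measure Ω) [IsFiniteMeasure P]
    {G : MeasurableSpace Ω} (hG : G ≤ mΩ) {A : Set (Ω × ℝ≥0)} (hA : Sus (Rect G) A)
    {ε : ℝ≥0∞} (hε : ε ≠ 0) :
    ∃ R : Set Ω, MeasurableSet[G] R ∧ R ⊆ Prod.fst '' A ∧
      P (Prod.fst '' A) ≤ P R + ε := by
  classical
  obtain ⟨κ₀, hκ₀, rfl⟩ := hA
  rw [← SusK_mono_eq (κ := κ₀)]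
  set κ : List ℕ → Set (Ω × ℝ≥0) := mono κ₀ with hκdef
  have hκE : ∀ l, l ≠ [] → Rect G (κ l) := mono_slots rect_inter hκ₀
  have hκtake : ∀ (l : List ℕ) (j : ℕ), j ≤ l.length → κ l ⊆ κ (l.take j) :=
    fun l j hj => mono_take hj
  -- choice of the next bound
  have step : ∀ (m : ℕ → ℕ) (n : ℕ), ∃ v : ℕ,
      P (Prod.fst '' Am κ m n)
        ≤ P (Prod.fst '' Am κ (Function.update m n v) (n + 1)) + ε / 2 ^ (n + 1) := by
    intro m n
    refine ennreal_exists_le_add ?_ (measure_ne_top P _) ?_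
    · rw [Am_union κ m n, Set.image_iUnion]
      refine Directed.measure_iUnion ?_
      have hmono : Monotone (fun v => Prod.fst '' Am κ (Function.update m n v) (n + 1)) :=
        fun v v' hv => Set.image_mono (Am_update_mono κ m n hv)
      exact hmono.directed_le
    · refine ENNReal.div_ne_zero.mpr ⟨hε, ?_⟩
      exact ENNReal.pow_ne_top (by norm_num)
  set pick : (ℕ → ℕ) → ℕ → ℕ := fun m n => (step m n).choose with hpick
  have hpickspec : ∀ m n, P (Prod.fst '' Am κ m n)
      ≤ P (Prod.fst '' Am κ (Function.update m n (pick m n)) (n + 1)) + ε / 2 ^ (n + 1) :=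
    fun m n => (step m n).choose_spec
  set ms : ℕ → (ℕ → ℕ) := fun n => Nat.rec (fun _ => 0)
    (fun k prev => Function.update prev k (pick prev k)) n with hms
  have hms_succ : ∀ n, ms (n + 1) = Function.update (ms n) n (pick (ms n) n) := fun n => rfl
  set m : ℕ → ℕ := fun n => ms (n + 1) n with hm
  have hstable : ∀ k n, k < n → ms n k = m k := by
    intro k n hkn
    induction n with
    | zero => omega
    | succ n ih =>
      rcases Nat.lt_succ_iff_lt_or_eq.mp hkn with h | rfl
      · rw [hms_succ n, Function.update_of_ne (by omega)]
        exact ih h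
      · rfl
  -- the invariant
  have hinv : ∀ n, P (Prod.fst '' SusK κ)
      ≤ P (Prod.fst '' Am κ m n) + ∑ k ∈ Finset.range n, ε / 2 ^ (k + 1) := by
    intro n
    induction n with
    | zero => simp [Am_zero]
    | succ n ih =>
      have h1 : Am κ m n = Am κ (ms n) n :=
        Am_congr κ (fun k hk => (hstable k n hk).symm)
      have h2 : Am κ m (n + 1)
          = Am κ (Function.update (ms n) n (pick (ms n) n)) (n + 1) := by
        refine Am_congr κ (fun k hk => ?_)
        rw [← hms_succ n]
        exact (hstable k (n + 1) hk).symm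
      calc P (Prod.fst '' SusK κ)
          ≤ P (Prod.fst '' Am κ m n) + ∑ k ∈ Finset.range n, ε / 2 ^ (k + 1) := ih
      _ = P (Prod.fst '' Am κ (ms n) n) + ∑ k ∈ Finset.range n, ε / 2 ^ (k + 1) := by rw [h1]
      _ ≤ (P (Prod.fst '' Am κ (Function.update (ms n) n (pick (ms n) n)) (n + 1))
            + ε / 2 ^ (n + 1)) + ∑ k ∈ Finset.range n, ε / 2 ^ (k + 1) :=
        add_le_add_left (hpickspec (ms n) n) _
      _ = P (Prod.fst '' Am κ m (n + 1)) + ∑ k ∈ Finset.range (n + 1), ε / 2 ^ (k + 1) := by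
        rw [← h2, Finset.sum_range_succ]
        ring
  -- the decreasing sequence with compact sections
  set C : ℕ → Set (Ω × ℝ≥0) :=
    fun n => ⋃ σ ∈ {σ : ℕ → ℕ | ∀ k, σ k ≤ m k}, κ (pre σ (n + 1)) with hC
  have hCdec : ∀ n, C (n + 1) ⊆ C n := by
    intro n x hx
    simp only [hC, Set.mem_iUnion, Set.mem_setOf_eq, exists_prop] at hx ⊢
    obtain ⟨σ, hσ, hx⟩ := hx
    refine ⟨σ, hσ, ?_⟩
    have h := hκtake (pre σ (n + 2)) (n + 1) (by rw [pre_length]; omega)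
    rw [pre_take σ (by omega)] at h
    exact h hx
  have hAmC : ∀ n, Am κ m (n + 1) ⊆ C n := by
    intro n x hx
    simp only [Am, Set.mem_iUnion, Set.mem_setOf_eq, exists_prop] at hx
    obtain ⟨σ, hσ, hx⟩ := hx
    simp only [hC, Set.mem_iUnion, Set.mem_setOf_eq, exists_prop]
    refine ⟨fun k => if k < n + 1 then σ k else 0, fun k => ?_, ?_⟩
    · by_cases h : k < n + 1
      · simp only [if_pos h]; exact hσ k h
      · simp only [if_neg h]; exact Nat.zero_le _
    · have hpre : pre (fun k => if k < n + 1 then σ k else 0) (n + 1) = pre σ (n + 1) :=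
        pre_congr (fun k hk => by simp [if_pos hk]; omega)
      rw [hpre]
      exact Set.mem_iInter.mp hx n
  -- prefixes form a finite set
  have hPn : ∀ n, Set.Finite ((fun σ => pre σ (n + 1)) '' {σ : ℕ → ℕ | ∀ k, σ k ≤ m k}) := by
    intro n
    have hsub : ((fun σ => pre σ (n + 1)) '' {σ : ℕ → ℕ | ∀ k, σ k ≤ m k}) ⊆
        Set.range (fun v : (∀ k : Fin (n + 1), Fin (m k + 1)) =>
          pre (fun k => if h : k < n + 1 then (v ⟨k, h⟩ : ℕ) else 0) (n + 1)) := by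
      rintro l ⟨σ, hσ, rfl⟩
      refine ⟨fun k => ⟨σ k, Nat.lt_succ_of_le (hσ k)⟩, ?_⟩
      exact pre_congr (fun k hk => by simp [dif_pos hk]; omega)
    exact Set.Finite.subset (Set.finite_range _) hsub
  have hCim : ∀ n, C n = ⋃ l ∈ ((fun σ => pre σ (n + 1)) '' {σ : ℕ → ℕ | ∀ k, σ k ≤ m k}), κ l := by
    intro n
    simp only [hC]
    exact (Set.biUnion_image).symm
  have hmemne : ∀ n l, l ∈ ((fun σ => pre σ (n + 1)) '' {σ : ℕ → ℕ | ∀ k, σ k ≤ m k}) → l ≠ [] := by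
    rintro n l ⟨σ, _, rfl⟩ h
    have := congrArg List.length h
    rw [pre_length] at this
    simp at this
  have hCproj : ∀ n, MeasurableSet[G] (Prod.fst '' C n) := by
    intro n
    rw [hCim n, Set.image_iUnion₂]
    exact Set.Finite.measurableSet_biUnion (hPn n)
      (fun l hl => rect_proj (hκE l (hmemne n l hl)))
  have hCsect : ∀ n (ω : Ω), IsCompact {t : ℝ≥0 | (ω, t) ∈ C n} := by
    intro n ω
    have heq : {t : ℝ≥0 | (ω, t) ∈ C n}
        = ⋃ l ∈ ((fun σ => pre σ (n + 1)) '' {σ : ℕ → ℕ | ∀ k, σ k ≤ m k}),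
            {t : ℝ≥0 | (ω, t) ∈ κ l} := by
      rw [hCim n]; ext t; simp
    rw [heq]
    exact Set.Finite.isCompact_biUnion (hPn n)
      (fun l hl => rect_sect (hκE l (hmemne n l hl)) ω)
  -- König's lemma via compactness
  have hCA : (⋂ n, C n) ⊆ SusK κ := by
    intro x hx
    simp only [Set.mem_iInter] at hx
    set F : ℕ → Set (ℕ → ℕ) := fun n => {σ | (∀ k, σ k ≤ m k) ∧ x ∈ κ (pre σ (n + 1))} with hF
    have hFeq : ∀ n, F n = {σ : ℕ → ℕ | ∀ k, σ k ≤ m k} ∩ {σ | x ∈ κ (pre σ (n + 1))} :=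
      fun n => rfl
    have hFdec : ∀ n, F (n + 1) ⊆ F n := by
      intro n σ hσ
      refine ⟨hσ.1, ?_⟩
      have h := hκtake (pre σ (n + 2)) (n + 1) (by rw [pre_length]; omega)
      rw [pre_take σ (by omega)] at h
      exact h hσ.2
    have hFne : ∀ n, (F n).Nonempty := by
      intro n
      have h := hx n
      simp only [hC, Set.mem_iUnion, Set.mem_setOf_eq, exists_prop] at h
      obtain ⟨σ, hσ, hxσ⟩ := h
      exact ⟨σ, hσ, hxσ⟩
    have hBcl : IsClosed {σ : ℕ → ℕ | ∀ k, σ k ≤ m k} := by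
      have heq : {σ : ℕ → ℕ | ∀ k, σ k ≤ m k}
          = ⋂ k, (fun σ : ℕ → ℕ => σ k) ⁻¹' (Set.Iic (m k)) := by
        ext σ
        simp only [Set.mem_iInter, Set.mem_preimage, Set.mem_Iic, Set.mem_setOf_eq]
      rw [heq]
      exact isClosed_iInter (fun k => IsClosed.preimage (continuous_apply k) isClosed_Iic)
    have hBcp : IsCompact {σ : ℕ → ℕ | ∀ k, σ k ≤ m k} := by
      have heq : {σ : ℕ → ℕ | ∀ k, σ k ≤ m k} = Set.pi Set.univ (fun k => Set.Iic (m k)) := by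
        ext σ
        simp only [Set.mem_setOf_eq, Set.mem_univ_pi, Set.mem_Iic]
      rw [heq]
      exact isCompact_univ_pi (fun k => (Set.finite_Iic (m k)).isCompact)
    have hVcl : ∀ n, IsClosed {σ : ℕ → ℕ | x ∈ κ (pre σ (n + 1))} := by
      intro n
      have heq : {σ : ℕ → ℕ | x ∈ κ (pre σ (n + 1))}
          = (fun (σ : ℕ → ℕ) (k : Fin (n + 1)) => σ (k : ℕ)) ⁻¹'
            {v : Fin (n + 1) → ℕ |
              x ∈ κ (pre (fun j => if h : j < n + 1 then v ⟨j, h⟩ else 0) (n + 1))} := by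
        ext σ
        simp only [Set.mem_setOf_eq, Set.mem_preimage]
        have hpr : pre (fun j => if h : j < n + 1 then σ j else 0) (n + 1) = pre σ (n + 1) :=
          pre_congr (fun k hk => by simp [dif_pos hk]; omega)
        rw [hpr]
      rw [heq]
      have hcont : Continuous (fun (σ : ℕ → ℕ) (k : Fin (n + 1)) => σ (k : ℕ)) :=
        continuous_pi (fun k => continuous_apply (k : ℕ))
      exact IsClosed.preimage hcont (isClosed_discrete _)
    have hFcp : IsCompact (F 0) := by
      rw [hFeq 0]
      exact hBcp.inter_right (hVcl 0)
    obtain ⟨σ, hσ⟩ := IsCompact.nonempty_iInter_of_sequence_nonempty_isCompact_isClosed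
      F hFdec hFne hFcp (fun n => by rw [hFeq n]; exact (hBcl.inter (hVcl n)))
    simp only [Set.mem_iInter] at hσ
    exact mem_SusK.mpr ⟨σ, fun n => (hσ n).2⟩
  -- sections argument : projections commute with the decreasing intersection
  have hproj : (⋂ n, Prod.fst '' C n) ⊆ Prod.fst '' (⋂ n, C n) := by
    intro ω hω
    simp only [Set.mem_iInter] at hω
    set Sect : ℕ → Set ℝ≥0 := fun n => {t | (ω, t) ∈ C n} with hSect
    have hSdec : ∀ n, Sect (n + 1) ⊆ Sect n := fun n t ht => hCdec n ht
    have hSne : ∀ n, (Sect n).Nonempty := by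
      intro n
      obtain ⟨p, hp, hfst⟩ := hω n
      refine ⟨p.2, ?_⟩
      have hpe : (ω, p.2) = p := by rw [← hfst]
      show (ω, p.2) ∈ C n
      rw [hpe]
      exact hp
    obtain ⟨t, ht⟩ := IsCompact.nonempty_iInter_of_sequence_nonempty_isCompact_isClosed
      Sect hSdec hSne (hCsect 0 ω) (fun n => (hCsect n ω).isClosed)
    simp only [Set.mem_iInter] at ht
    exact ⟨(ω, t), Set.mem_iInter.mpr ht, rfl⟩
  -- conclusion
  refine ⟨⋂ n, Prod.fst '' C n, MeasurableSet.iInter (fun n => hCproj n), ?_, ?_⟩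
  · exact subset_trans hproj (Set.image_mono hCA)
  · have hanti : Antitone (fun n => Prod.fst '' C n) :=
      antitone_nat_of_succ_le (fun n => Set.image_mono (hCdec n))
    have hPR : P (⋂ n, Prod.fst '' C n) = ⨅ n, P (Prod.fst '' C n) :=
      Directed.measure_iInter (fun n => ((hG _ (hCproj n)).nullMeasurableSet))
        hanti.directed_ge ⟨0, measure_ne_top P _⟩
    have hone : ∀ n, P (Prod.fst '' SusK κ) ≤ P (Prod.fst '' C n) + ε := by
      intro n
      calc P (Prod.fst '' SusK κ)
          ≤ P (Prod.fst '' Am κ m (n + 1)) + ∑ k ∈ Finset.range (n + 1), ε / 2 ^ (k + 1) :=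
        hinv (n + 1)
      _ ≤ P (Prod.fst '' C n) + ε :=
        add_le_add (measure_mono (Set.image_mono (hAmC n))) (geom_le ε (n + 1))
    calc P (Prod.fst '' SusK κ) ≤ ⨅ n, (P (Prod.fst '' C n) + ε) := le_iInf hone
    _ = (⨅ n, P (Prod.fst '' C n)) + ε := by
      rw [ENNReal.iInf_add]
    _ = P (⋂ n, Prod.fst '' C n) + ε := by rw [hPR]


open MeasureTheory

/-- **Measurable projection lemma**: for `G ≤ mΩ` and `A` product-measurable w.r.t. `G`, the
projection of `A` differs from a `G`-measurable set by a `P`-null set. -/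
lemma proj_lemma {Ω : Type*} {G : MeasurableSpace Ω} [mΩ : MeasurableSpace Ω]
    (P : Measure Ω) [IsFiniteMeasure P] (hG : G ≤ mΩ) {A : Set (Ω × ℝ≥0)}
    (hA : MeasurableSet[G.prod inferInstance] A) :
    ∃ B, MeasurableSet[G] B ∧ B ⊆ Prod.fst '' A ∧ P (Prod.fst '' A \ B) = 0 := by
  have hsus : Sus (Rect G) A := measurable_sus hA
  have hne : ∀ n : ℕ, (((1 : ℝ≥0) / ((n : ℝ≥0) + 1) : ℝ≥0) : ℝ≥0∞) ≠ 0 := by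
    intro n
    rw [ENNReal.coe_ne_zero]
    positivity
  have happ : ∀ n : ℕ, ∃ R, MeasurableSet[G] R ∧ R ⊆ Prod.fst '' A ∧
      P (Prod.fst '' A) ≤ P R + (((1 : ℝ≥0) / ((n : ℝ≥0) + 1) : ℝ≥0) : ℝ≥0∞) :=
    fun n => sus_inner_approx P hG hsus (hne n)
  choose R hR1 hR2 hR3 using happ
  have hBmeasG : MeasurableSet[G] (⋃ n, R n) := MeasurableSet.iUnion (m := G) hR1
  refine ⟨⋃ n, R n, hBmeasG, Set.iUnion_subset hR2, ?_⟩
  have hPB : P (Prod.fst '' A) ≤ P (⋃ n, R n) := by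
    refine ENNReal.le_of_forall_pos_le_add (fun ε hε _ => ?_)
    obtain ⟨n, hn⟩ := exists_nat_one_div_lt (K := ℝ≥0) hε
    calc P (Prod.fst '' A)
        ≤ P (R n) + (((1 : ℝ≥0) / ((n : ℝ≥0) + 1) : ℝ≥0) : ℝ≥0∞) := hR3 n
    _ ≤ P (⋃ n, R n) + (ε : ℝ≥0∞) :=
      add_le_add (measure_mono (Set.subset_iUnion R n)) (ENNReal.coe_le_coe.mpr hn.le)
  set H := toMeasurable P (Prod.fst '' A) with hH
  have hsubH : Prod.fst '' A ⊆ H := subset_toMeasurable P _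
  have hBH : (⋃ n, R n) ⊆ H := subset_trans (Set.iUnion_subset hR2) hsubH
  have hdiff : P (H \ ⋃ n, R n) = 0 := by
    rw [measure_diff hBH ((hG _ hBmeasG).nullMeasurableSet)
      (measure_ne_top P _)]
    rw [measure_toMeasurable]
    exact tsub_eq_zero_of_le hPB
  exact measure_mono_null (Set.diff_subset_diff_left hsubH) hdiff

lemma debut_lt_iff {Ω : Type*} {A : Set (Ω × ℝ≥0)} {ω : Ω} {c : ℝ≥0∞} :
    debut A ω < c ↔ ∃ t : ℝ≥0, (ω, t) ∈ A ∧ (t : ℝ≥0∞) < c := by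
  unfold debut
  rw [iInf_lt_iff]
  constructor
  · rintro ⟨t, ht⟩
    rw [iInf_lt_iff] at ht
    obtain ⟨hmem, hlt⟩ := ht
    exact ⟨t, hmem, hlt⟩
  · rintro ⟨t, hmem, hlt⟩
    exact ⟨t, iInf_lt_iff.mpr ⟨hmem, hlt⟩⟩

lemma debut_lt_set {Ω : Type*} (A : Set (Ω × ℝ≥0)) (u : ℝ≥0) :
    {ω | debut A ω < (u : ℝ≥0∞)} = Prod.fst '' (A ∩ {p : Ω × ℝ≥0 | p.2 < u}) := by
  ext ω
  rw [Set.mem_setOf_eq, debut_lt_iff]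
  constructor
  · rintro ⟨t, hmem, hlt⟩
    exact ⟨(ω, t), ⟨hmem, ENNReal.coe_lt_coe.mp hlt⟩, rfl⟩
  · rintro ⟨p, ⟨hmem, hlt⟩, rfl⟩
    exact ⟨p.2, hmem, ENNReal.coe_lt_coe.mpr hlt⟩

lemma debut_top_set {Ω : Type*} (A : Set (Ω × ℝ≥0)) :
    {ω | debut A ω < ⊤} = Prod.fst '' A := by
  ext ω
  rw [Set.mem_setOf_eq, debut_lt_iff]
  constructor
  · rintro ⟨t, hmem, _⟩
    exact ⟨(ω, t), hmem, rfl⟩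
  · rintro ⟨p, hmem, rfl⟩
    exact ⟨p.2, hmem, ENNReal.coe_lt_top⟩


open MeasureTheory

lemma proj_meas_complete {Ω : Type*} [mΩ : MeasurableSpace Ω] (P : Measure Ω)
    [IsFiniteMeasure P] (hP : P.IsComplete) {S : Set (Ω × ℝ≥0)} (hS : MeasurableSet S) :
    MeasurableSet (Prod.fst '' S) := by
  obtain ⟨B, hB, hsub, hnull⟩ := proj_lemma (G := mΩ) P le_rfl
    (show MeasurableSet[mΩ.prod inferInstance] S from hS)
  rw [(Set.union_diff_cancel hsub).symm]
  exact hB.union (hP.out _ hnull)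

lemma debut_lt_mem_filtration {Ω : Type*} [mΩ : MeasurableSpace Ω] (P : Measure Ω)
    [IsFiniteMeasure P] (ℱ : ℝ≥0 → MeasurableSpace Ω) (hmono : Monotone ℱ)
    (hle : ∀ t, ℱ t ≤ mΩ) (hnull : ∀ s : Set Ω, P s = 0 → MeasurableSet[ℱ 0] s)
    {A : Set (Ω × ℝ≥0)}
    (hprog : ∀ t : ℝ≥0, MeasurableSet[(ℱ t).prod inferInstance]
      (A ∩ {p : Ω × ℝ≥0 | p.2 ≤ t}))
    {c u : ℝ≥0} (hcu : c ≤ u) :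
    MeasurableSet[ℱ u] {ω | debut A ω < (c : ℝ≥0∞)} := by
  have h2 : MeasurableSet[(ℱ u).prod inferInstance] {p : Ω × ℝ≥0 | p.2 < c} :=
    (@measurable_snd Ω ℝ≥0 (ℱ u) _) measurableSet_Iio
  have heq : A ∩ {p : Ω × ℝ≥0 | p.2 < c}
      = (A ∩ {p : Ω × ℝ≥0 | p.2 ≤ u}) ∩ {p : Ω × ℝ≥0 | p.2 < c} := by
    ext p
    simp only [Set.mem_inter_iff, Set.mem_setOf_eq]
    constructor
    · rintro ⟨hpA, hpc⟩
      exact ⟨⟨hpA, le_trans hpc.le hcu⟩, hpc⟩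
    · rintro ⟨⟨hpA, _⟩, hpc⟩
      exact ⟨hpA, hpc⟩
  have hAu : MeasurableSet[(ℱ u).prod inferInstance] (A ∩ {p : Ω × ℝ≥0 | p.2 < c}) := by
    rw [heq]
    exact (hprog u).inter h2
  obtain ⟨B, hB, hsub, hnull'⟩ := proj_lemma (G := ℱ u) P (hle u) hAu
  rw [debut_lt_set]
  rw [(Set.union_diff_cancel hsub).symm]
  exact hB.union ((hmono (zero_le : (0 : ℝ≥0) ≤ u)) _ (hnull _ hnull'))

lemma debut_le_eq_iInter {Ω : Type*} (A : Set (Ω × ℝ≥0)) {t u : ℝ≥0} (htu : t < u) :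
    {ω | debut A ω ≤ (t : ℝ≥0∞)}
      = ⋂ n : ℕ, {ω | debut A ω < ((t + (u - t) / ((n : ℝ≥0) + 1) : ℝ≥0) : ℝ≥0∞)} := by
  have hut : 0 < u - t := tsub_pos_iff_lt.mpr htu
  ext ω
  simp only [Set.mem_setOf_eq, Set.mem_iInter]
  constructor
  · intro h n
    refine lt_of_le_of_lt h ?_
    rw [ENNReal.coe_lt_coe]
    have hδ : 0 < (u - t) / ((n : ℝ≥0) + 1) := by positivity
    exact lt_add_of_pos_right t hδ
  · intro h
    by_contra hc
    push_neg at hc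
    rcases eq_or_ne (debut A ω) ⊤ with htop | hne
    · have := h 0
      rw [htop] at this
      exact absurd this (by simp)
    · lift debut A ω to ℝ≥0 using hne with d hd
      rw [ENNReal.coe_lt_coe] at hc
      have hdt : 0 < d - t := tsub_pos_iff_lt.mpr hc
      obtain ⟨n, hn⟩ := exists_nat_ge ((u - t) / (d - t))
      have hδ : (u - t) / ((n : ℝ≥0) + 1) ≤ d - t := by
        rw [div_le_iff₀ (by positivity)]
        rw [div_le_iff₀ hdt] at hn
        calc u - t ≤ (n : ℝ≥0) * (d - t) := hn
        _ ≤ ((n : ℝ≥0) + 1) * (d - t) := by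
          gcongr
          exact le_add_of_nonneg_right zero_le_one
        _ = (d - t) * ((n : ℝ≥0) + 1) := mul_comm _ _
      have hle : t + (u - t) / ((n : ℝ≥0) + 1) ≤ d := by
        calc t + (u - t) / ((n : ℝ≥0) + 1) ≤ t + (d - t) := by gcongr
        _ = d := add_tsub_cancel_of_le hc.le
      have := h n
      rw [ENNReal.coe_lt_coe] at this
      exact absurd this (not_lt.mpr hle)

end DebutProof

/-- **Measurability of the debut.** For a complete probability space `(Ω, F, P)` and a
product-measurable `A ⊆ Ω × ℝ⁺`: (i) `{D_A < ∞} = π_Ω(A)` and `D_A` is `F`-measurable;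
(ii) if `(F_t)` is a filtration satisfying the usual conditions and `A` is progressively
measurable then `D_A` is a stopping time. -/
theorem debut_measurable
    {Ω : Type*} [mΩ : MeasurableSpace Ω]
    (P : Measure Ω) [IsProbabilityMeasure P] (hP : P.IsComplete)
    (A : Set (Ω × ℝ≥0)) (hA : MeasurableSet A) :
    ({ω | debut A ω < ⊤} = Prod.fst '' A ∧ Measurable (debut A)) ∧
    (∀ ℱ : ℝ≥0 → MeasurableSpace Ω,
      Monotone ℱ →
      (∀ t, ℱ t ≤ mΩ) →
      -- usual conditions: F_0 contains all P-null sets, and right continuity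
      (∀ s : Set Ω, P s = 0 → MeasurableSet[ℱ 0] s) →
      (∀ t : ℝ≥0, ℱ t = ⨅ (u : ℝ≥0) (_ : t < u), ℱ u) →
      -- A is progressively measurable
      (∀ t : ℝ≥0, MeasurableSet[(ℱ t).prod inferInstance]
        (A ∩ {p : Ω × ℝ≥0 | p.2 ≤ t})) →
      -- D_A is a stopping time
      ∀ t : ℝ≥0, MeasurableSet[ℱ t] {ω | debut A ω ≤ (t : ℝ≥0∞)}) := by
  constructor
  · refine ⟨DebutProof.debut_top_set A, ?_⟩
    apply measurable_of_Iio
    intro c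
    have hpre : debut A ⁻¹' (Set.Iio c) = {ω | debut A ω < c} := rfl
    rw [hpre]
    induction c using ENNReal.recTopCoe with
    | top =>
      rw [DebutProof.debut_top_set A]
      exact DebutProof.proj_meas_complete P hP hA
    | coe u =>
      rw [DebutProof.debut_lt_set A u]
      refine DebutProof.proj_meas_complete P hP (hA.inter ?_)
      exact measurable_snd measurableSet_Iio
  · intro ℱ hmono hle hnull hrc hprog t
    rw [hrc t]
    refine MeasurableSpace.measurableSet_iInf.mpr (fun u => ?_)
    refine MeasurableSpace.measurableSet_iInf.mpr (fun hu => ?_)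
    rw [DebutProof.debut_le_eq_iInter A hu]
    refine MeasurableSet.iInter (m := ℱ u) (fun n => ?_)
    refine DebutProof.debut_lt_mem_filtration P ℱ hmono hle hnull hprog ?_
    have h1 : (u - t) / ((n : ℝ≥0) + 1) ≤ u - t :=
      div_le_self zero_le (le_add_of_nonneg_left zero_le)
    calc t + (u - t) / ((n : ℝ≥0) + 1) ≤ t + (u - t) := by gcongr
    _ = u := add_tsub_cancel_of_le hu.le
end
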